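/- arXiv:2109.11396 — 16 statements merged into one kernel-verified Lean document; each statement's English description precedes it below -/
import Mathlib

section
/- For integers m, r with 0 ≤ r < m, if ∑_{i=0}^{r} C(m,i) ≤ C(m,r+1), then ∑_{i=0}^{r} C(m+1,i) < C(m+1,r+1). -/
open Finset

-- Pascal identity summed: ∑_{i≤n} C(m+1,i) = ∑_{i≤n} C(m,i) + ∑_{i<n} C(m,i)
lemma aux_sum_pascal (m : ℕ) : ∀ n : ℕ,
    (∑ i ∈ range (n + 1), (m + 1).choose i)
      = (∑ i ∈ range (n + 1), m.choose i) + ∑ i ∈ range n, m.choose i := by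
  intro n
  induction n with
  | zero => simp
  | succ n ih =>
    simp only [Finset.sum_range_succ, Nat.choose_succ_succ, Nat.succ_eq_add_one] at ih ⊢
    omega

-- If binomials at least double each step up to r, the partial sum is small
lemma aux_geom (m : ℕ) : ∀ r : ℕ, r ≤ m → 3 * r ≤ m + 1 →
    (∑ i ∈ range r, m.choose i) < m.choose r := by
  intro r
  induction r with
  | zero => simp
  | succ r ih =>
    intro hrm h3
    have ih' := ih (by omega) (by omega)
    have hkey : 2 * m.choose r ≤ m.choose (r + 1) := by
      have h1 : m.choose (r + 1) * (r + 1) = m.choose r * (m - r) :=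
        Nat.choose_succ_right_eq m r
      have h2 : 2 * (r + 1) ≤ m - r := by omega
      nlinarith [Nat.choose_pos (show r ≤ m by omega) (n := m) (k := r)]
    rw [Finset.sum_range_succ]
    have : m.choose (r+1) = m.choose r.succ := rfl
    omega

theorem stmt_1 (m r : ℕ) (h : r < m)
    (hle : (∑ i ∈ Finset.range (r + 1), m.choose i) ≤ m.choose (r + 1)) :
    (∑ i ∈ Finset.range (r + 1), (m + 1).choose i) < (m + 1).choose (r + 1) := by
  have hS : (∑ i ∈ range (r + 1), m.choose i)
      = (∑ i ∈ range r, m.choose i) + m.choose r := Finset.sum_range_succ _ _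
  have hchoose_pos : 0 < m.choose r := Nat.choose_pos h.le
  -- key: ∑_{i<r} C(m,i) < C(m,r)
  have hkey : (∑ i ∈ range r, m.choose i) < m.choose r := by
    by_cases hc : 3 * r ≤ m + 1
    · exact aux_geom m r h.le hc
    · -- m ≤ 3r - 2 ≤ 3r + 1, so C(m,r+1) < 2 C(m,r)
      have h1 : m.choose (r + 1) * (r + 1) = m.choose r * (m - r) :=
        Nat.choose_succ_right_eq m r
      have h2 : m.choose (r + 1) < 2 * m.choose r := by
        have hmr : m - r < 2 * (r + 1) := by omega
        nlinarith
      omega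
  rw [aux_sum_pascal, Nat.choose_succ_succ]
  simp only [Nat.succ_eq_add_one]
  omega
end

section
/- For integers m, r with 0 ≤ r < m, if ∑_{i=0}^{r} C(m,i) ≥ C(m,r+1), then ∑_{i=0}^{r} C(m-1,i) > C(m-1,r+1). -/
lemma sum_pascal_aux (n r : ℕ) :
    ∑ i ∈ Finset.range (r + 1), (n + 1).choose i =
      ∑ i ∈ Finset.range (r + 1), n.choose i + ∑ i ∈ Finset.range r, n.choose i := by
  induction r with
  | zero => simp
  | succ r ih =>
    rw [Finset.sum_range_succ, ih, Nat.choose_succ_succ,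
      Finset.sum_range_succ (f := fun i => n.choose i) (n := r + 1),
      Finset.sum_range_succ (f := fun i => n.choose i) (n := r)]
    ring

lemma geo_aux (n r : ℕ) (h : ∀ i < r, 2 * n.choose i ≤ n.choose (i + 1)) :
    ∑ i ∈ Finset.range r, n.choose i < n.choose r := by
  induction r with
  | zero => simp
  | succ r ih =>
    rw [Finset.sum_range_succ]
    have h1 := h r (by omega)
    have h2 := ih (fun i hi => h i (by omega))
    omega

theorem stmt_2 (m r : ℕ) (h : r < m)
    (hge : m.choose (r + 1) ≤ ∑ i ∈ Finset.range (r + 1), m.choose i) :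
    (m - 1).choose (r + 1) < ∑ i ∈ Finset.range (r + 1), (m - 1).choose i := by
  obtain ⟨n, rfl⟩ : ∃ n, m = n + 1 := ⟨m - 1, by omega⟩
  simp only [Nat.add_sub_cancel]
  rw [sum_pascal_aux, Nat.choose_succ_succ] at hge
  simp only [Nat.succ_eq_add_one] at hge
  rw [Finset.sum_range_succ] at hge ⊢
  by_contra hcon
  push_neg at hcon
  -- hcon : T + C(n,r) ≤ C(n,r+1)
  have hrT : n.choose r ≤ ∑ i ∈ Finset.range r, n.choose i := by
    have := hcon; omega
  have hpos : 0 < n.choose r := Nat.choose_pos (by omega)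
  have h2ab : 2 * n.choose r ≤ n.choose (r + 1) := by omega
  have key : n.choose (r + 1) * (r + 1) = n.choose r * (n - r) :=
    Nat.choose_succ_right_eq n r
  have hn : 3 * r + 2 ≤ n := by
    have h1 : n.choose r * (2 * (r + 1)) ≤ n.choose r * (n - r) := by
      calc n.choose r * (2 * (r + 1)) = (2 * n.choose r) * (r + 1) := by ring
        _ ≤ n.choose (r + 1) * (r + 1) := Nat.mul_le_mul_right _ h2ab
        _ = n.choose r * (n - r) := key
    have h2 : 2 * (r + 1) ≤ n - r := Nat.le_of_mul_le_mul_left h1 hpos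
    omega
  have hratio : ∀ i < r, 2 * n.choose i ≤ n.choose (i + 1) := by
    intro i hi
    have key2 : n.choose (i + 1) * (i + 1) = n.choose i * (n - i) :=
      Nat.choose_succ_right_eq n i
    have h1 : (2 * n.choose i) * (i + 1) ≤ n.choose (i + 1) * (i + 1) := by
      calc (2 * n.choose i) * (i + 1) = n.choose i * (2 * (i + 1)) := by ring
        _ ≤ n.choose i * (n - i) := Nat.mul_le_mul_left _ (by omega)
        _ = n.choose (i + 1) * (i + 1) := key2.symm
    exact Nat.le_of_mul_le_mul_right h1 (by omega)
  have hgeo := geo_aux n r hratio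
  omega
end

section
/- For every integer m ≥ 0 and every r with 0 ≤ r ≤ m, we have C(m,r+1)/C(m,r) < s_m(r+1)/s_m(r), where s_m(r) = ∑_{i=0}^r C(m,i) and s_m(m+1) = 2^m; equivalently C(m,r+1) · s_m(r) < C(m,r) · s_m(r+1). -/
lemma aux_ratio (m r i : ℕ) (hi : i ≤ r) (hr : r ≤ m) :
    m.choose (r + 1) * m.choose i ≤ m.choose r * m.choose (i + 1) := by
  have h1 := Nat.choose_succ_right_eq m r
  have h2 := Nat.choose_succ_right_eq m i
  have key : (m - r) * (i + 1) ≤ (m - i) * (r + 1) :=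
    Nat.mul_le_mul (Nat.sub_le_sub_left hi m) (by omega)
  have hmul : m.choose (r + 1) * m.choose i * ((r + 1) * (i + 1))
      ≤ m.choose r * m.choose (i + 1) * ((r + 1) * (i + 1)) := by
    calc m.choose (r + 1) * m.choose i * ((r + 1) * (i + 1))
        = (m.choose (r + 1) * (r + 1)) * (m.choose i * (i + 1)) := by ring
      _ = (m.choose r * (m - r)) * (m.choose i * (i + 1)) := by rw [h1]
      _ = m.choose r * m.choose i * ((m - r) * (i + 1)) := by ring
      _ ≤ m.choose r * m.choose i * ((m - i) * (r + 1)) :=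
          Nat.mul_le_mul_left _ key
      _ = (m.choose i * (m - i)) * (m.choose r * (r + 1)) := by ring
      _ = (m.choose (i + 1) * (i + 1)) * (m.choose r * (r + 1)) := by rw [h2]
      _ = m.choose r * m.choose (i + 1) * ((r + 1) * (i + 1)) := by ring
  exact Nat.le_of_mul_le_mul_right hmul (by positivity)

theorem stmt_3 (m r : ℕ) (h : r ≤ m) :
    m.choose (r + 1) * (∑ i ∈ Finset.range (r + 1), m.choose i)
      < m.choose r * (∑ i ∈ Finset.range (r + 2), m.choose i) := by
  have hsum : m.choose (r + 1) * ∑ i ∈ Finset.range (r + 1), m.choose i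
      ≤ m.choose r * ∑ i ∈ Finset.range (r + 1), m.choose (i + 1) := by
    rw [Finset.mul_sum, Finset.mul_sum]
    exact Finset.sum_le_sum fun i hi =>
      aux_ratio m r i (by simpa using Nat.lt_succ_iff.mp (Finset.mem_range.mp hi)) h
  have hsplit : ∑ i ∈ Finset.range (r + 2), m.choose i
      = (∑ i ∈ Finset.range (r + 1), m.choose (i + 1)) + m.choose 0 :=
    Finset.sum_range_succ' _ _
  have hpos : 0 < m.choose r := Nat.choose_pos h
  rw [hsplit, Nat.mul_add]
  have : 0 < m.choose r * m.choose 0 := by simpa using hpos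
  omega
end

section
/- For every integer m ≥ 0 and every r with 0 ≤ r < m, the ratio t_m(r) = s_m(r+1)/s_m(r) is strictly decreasing in r: t_m(r+1) < t_m(r); equivalently s_m(r+2) · s_m(r) < s_m(r+1)^2. -/
lemma key_term (m r i : ℕ) (hi : i ≤ r) (hr : r + 1 ≤ m) :
    m.choose (r+2) * m.choose i ≤ m.choose (r+1) * m.choose (i+1) := by
  have h2 : 0 < (r+2)*(i+1) := by positivity
  apply Nat.le_of_mul_le_mul_right _ h2
  have e1 := Nat.choose_succ_right_eq m (r+1)
  have e2 := Nat.choose_succ_right_eq m i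
  calc m.choose (r+2) * m.choose i * ((r+2)*(i+1))
      = (m.choose (r+1+1) * (r+1+1)) * (m.choose i * (i+1)) := by ring
    _ = (m.choose (r+1) * (m - (r+1))) * (m.choose i * (i+1)) := by rw [e1]
    _ ≤ (m.choose (r+1) * (m - i)) * (m.choose i * (r+2)) :=
        Nat.mul_le_mul (Nat.mul_le_mul_left _ (Nat.sub_le_sub_left (by omega) m))
          (Nat.mul_le_mul_left _ (by omega))
    _ = m.choose (r+1) * (m.choose i * (m - i)) * (r+2) := by ring
    _ = m.choose (r+1) * (m.choose (i+1) * (i+1)) * (r+2) := by rw [e2]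
    _ = m.choose (r+1) * m.choose (i+1) * ((r+2)*(i+1)) := by ring

lemma key_sum (m r : ℕ) (h : r < m) :
    m.choose (r+2) * (∑ i ∈ Finset.range (r+1), m.choose i)
      < m.choose (r+1) * (∑ i ∈ Finset.range (r+2), m.choose i) := by
  have hpos : 0 < m.choose (r+1) := Nat.choose_pos (by omega)
  have hs : ∑ i ∈ Finset.range (r+2), m.choose i
      = (∑ i ∈ Finset.range (r+1), m.choose (i+1)) + m.choose 0 :=
    Finset.sum_range_succ' _ _
  rw [hs, Finset.mul_sum, Nat.mul_add, Finset.mul_sum]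
  have hle : ∑ i ∈ Finset.range (r+1), m.choose (r+2) * m.choose i
      ≤ ∑ i ∈ Finset.range (r+1), m.choose (r+1) * m.choose (i+1) := by
    apply Finset.sum_le_sum
    intro i hi
    exact key_term m r i (by simpa using Nat.lt_succ_iff.mp (Finset.mem_range.mp hi)) h
  simp only [Nat.choose_zero_right, Nat.mul_one]
  omega

theorem stmt_4 (m r : ℕ) (h : r < m) :
    (∑ i ∈ Finset.range (r + 3), m.choose i) * (∑ i ∈ Finset.range (r + 1), m.choose i)
      < (∑ i ∈ Finset.range (r + 2), m.choose i) ^ 2 := by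
  have h1 : ∑ i ∈ Finset.range (r+3), m.choose i
      = (∑ i ∈ Finset.range (r+2), m.choose i) + m.choose (r+2) :=
    Finset.sum_range_succ _ _
  have h0 : ∑ i ∈ Finset.range (r+2), m.choose i
      = (∑ i ∈ Finset.range (r+1), m.choose i) + m.choose (r+1) :=
    Finset.sum_range_succ _ _
  have hk := key_sum m r h
  rw [h0] at hk
  rw [h1, h0]
  nlinarith [hk]
end

section
/- For every integer m ≥ 2 there exists an integer r* with 0 ≤ r* < m such that f_m(0) < f_m(1) < ⋯ < f_m(r*) and f_m(r*+1) > f_m(r*+2) > ⋯ > f_m(m), where f_m(r) = 2^{-r} ∑_{i=0}^r C(m,i). In particular the sequence f_m(r) is unimodal. -/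
open Finset

private def Sf (m r : ℕ) : ℕ := ∑ i ∈ Finset.range (r + 1), m.choose i

private lemma Sf_succ (m r : ℕ) : Sf m (r + 1) = Sf m r + m.choose (r + 1) := by
  simp [Sf, Finset.sum_range_succ]

private lemma lemA (m : ℕ) : ∀ r : ℕ, 3 * r + 5 ≤ m → Sf m r < m.choose (r + 1) := by
  intro r
  induction r with
  | zero =>
      intro h
      simp [Sf]
      omega
  | succ r ih =>
      intro h
      have h5 : 3 * r + 5 ≤ m := by omega
      have hlt := ih h5
      have hid : m.choose (r + 2) * (r + 2) = m.choose (r + 1) * (m - (r + 1)) :=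
        Nat.choose_succ_right_eq m (r + 1)
      have hpos : 0 < m.choose (r + 1) := Nat.choose_pos (by omega)
      have h2 : 2 * m.choose (r + 1) ≤ m.choose (r + 2) := by
        have hm1 : 2 * (r + 2) ≤ m - (r + 1) := by omega
        nlinarith [hid, hpos, Nat.mul_le_mul_left (m.choose (r + 1)) hm1]
      have hE : m.choose (r + 1 + 1) = m.choose (r + 2) := rfl
      rw [Sf_succ]
      omega

private lemma lemB (m r : ℕ) (h1 : r + 1 ≤ m) (h2 : m ≤ 3 * r + 4)
    (h3 : m.choose (r + 1) ≤ Sf m r) : m.choose (r + 2) < Sf m (r + 1) := by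
  have hid : m.choose (r + 2) * (r + 2) = m.choose (r + 1) * (m - (r + 1)) :=
    Nat.choose_succ_right_eq m (r + 1)
  have hpos : 0 < m.choose (r + 1) := Nat.choose_pos h1
  have hstrict : m.choose (r + 2) < 2 * m.choose (r + 1) := by
    have hm1 : m - (r + 1) < 2 * (r + 2) := by omega
    nlinarith [hid, hpos, Nat.mul_le_mul_left (m.choose (r + 1)) (Nat.le_of_lt_succ (Nat.lt_succ_of_lt hm1))]
  rw [Sf_succ]
  omega

private lemma real_iff (m r : ℕ) :
    ((∑ i ∈ Finset.range (r + 1), (m.choose i : ℝ)) / 2 ^ r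
      < (∑ i ∈ Finset.range (r + 2), (m.choose i : ℝ)) / 2 ^ (r + 1))
    ↔ Sf m r < m.choose (r + 1) := by
  have hp : (0:ℝ) < 2 ^ r := by positivity
  have hp1 : (0:ℝ) < 2 ^ (r + 1) := by positivity
  rw [div_lt_div_iff₀ hp hp1, Finset.sum_range_succ (f := fun i => (m.choose i : ℝ)) (n := r + 1)]
  have hS : (∑ i ∈ Finset.range (r + 1), (m.choose i : ℝ)) = (Sf m r : ℝ) := by
    simp [Sf]
  rw [hS, pow_succ]
  constructor
  · intro h
    have : (Sf m r : ℝ) < (m.choose (r + 1) : ℝ) := by nlinarith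
    exact_mod_cast this
  · intro h
    have : (Sf m r : ℝ) < (m.choose (r + 1) : ℝ) := by exact_mod_cast h
    nlinarith

theorem stmt_5 (m : ℕ) (hm : 2 ≤ m) :
    ∃ rstar : ℕ, rstar < m ∧
      (∀ r : ℕ, r < rstar →
        (∑ i ∈ Finset.range (r + 1), (m.choose i : ℝ)) / 2 ^ r
          < (∑ i ∈ Finset.range (r + 2), (m.choose i : ℝ)) / 2 ^ (r + 1)) ∧
      (∀ r : ℕ, rstar + 1 ≤ r → r < m →
        (∑ i ∈ Finset.range (r + 2), (m.choose i : ℝ)) / 2 ^ (r + 1)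
          < (∑ i ∈ Finset.range (r + 1), (m.choose i : ℝ)) / 2 ^ r) := by
  have hexist : ∃ r, m.choose (r + 1) ≤ Sf m r := by
    refine ⟨m - 1, ?_⟩
    have h1 : m.choose (m - 1 + 1) = 1 := by
      have : m - 1 + 1 = m := by omega
      rw [this, Nat.choose_self]
    have h2 : 1 ≤ Sf m (m - 1) := by
      have : 0 < m.choose 0 := Nat.choose_pos (Nat.zero_le m)
      have hmem : (0 : ℕ) ∈ Finset.range (m - 1 + 1) := by simp
      calc 1 ≤ m.choose 0 := this
        _ ≤ Sf m (m - 1) := Finset.single_le_sum (f := fun i => m.choose i)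
            (fun i _ => Nat.zero_le _) hmem
    omega
  classical
  set rstar := Nat.find hexist with hrdef
  have hPr : m.choose (rstar + 1) ≤ Sf m rstar := Nat.find_spec hexist
  have hrle : rstar ≤ m - 1 := Nat.find_le (by
    have h1 : m.choose (m - 1 + 1) = 1 := by
      have : m - 1 + 1 = m := by omega
      rw [this, Nat.choose_self]
    have h2 : 1 ≤ Sf m (m - 1) := by
      have : 0 < m.choose 0 := Nat.choose_pos (Nat.zero_le m)
      have hmem : (0 : ℕ) ∈ Finset.range (m - 1 + 1) := by simp
      calc 1 ≤ m.choose 0 := this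
        _ ≤ Sf m (m - 1) := Finset.single_le_sum (f := fun i => m.choose i)
            (fun i _ => Nat.zero_le _) hmem
    omega)
  have hrm : rstar < m := by omega
  have hmub : m ≤ 3 * rstar + 4 := by
    by_contra h
    exact absurd hPr (not_le.mpr (lemA m rstar (by omega)))
  have hdec : ∀ r : ℕ, rstar + 1 ≤ r → r < m → m.choose (r + 1) < Sf m r := by
    intro r hr
    induction r, hr using Nat.le_induction with
    | base =>
        intro h
        exact lemB m rstar hrm hmub hPr
    | succ r hr ih =>
        intro hlt
        have hrm' : r < m := by omega
        exact lemB m r hrm' (by omega) (le_of_lt (ih hrm'))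
  refine ⟨rstar, hrm, ?_, ?_⟩
  · intro r hr
    rw [real_iff]
    have := Nat.find_min hexist hr
    omega
  · intro r h1 h2
    rw [show ((∑ i ∈ Finset.range (r + 2), (m.choose i : ℝ)) / 2 ^ (r + 1)
          < (∑ i ∈ Finset.range (r + 1), (m.choose i : ℝ)) / 2 ^ r)
        ↔ ¬ ((∑ i ∈ Finset.range (r + 1), (m.choose i : ℝ)) / 2 ^ r
          ≤ (∑ i ∈ Finset.range (r + 2), (m.choose i : ℝ)) / 2 ^ (r + 1)) from
      (lt_iff_not_ge ..)]
    intro hle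
    have := hdec r h1 h2
    rcases lt_or_eq_of_le hle with hlt | heq
    · rw [real_iff] at hlt; omega
    · -- equality case: then Sf m r = choose, contradiction with strict
      have hp : (0:ℝ) < 2 ^ r := by positivity
      have hp1 : (0:ℝ) < 2 ^ (r + 1) := by positivity
      have hiff := real_iff m r
      -- derive from equality that Sf m r = m.choose (r+1)
      have heq' : (∑ i ∈ Finset.range (r + 1), (m.choose i : ℝ)) * 2 ^ (r + 1)
          = (∑ i ∈ Finset.range (r + 2), (m.choose i : ℝ)) * 2 ^ r := by
        field_simp at heq
        linarith [heq]
      have hS : (∑ i ∈ Finset.range (r + 1), (m.choose i : ℝ)) = (Sf m r : ℝ) := by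
        simp [Sf]
      rw [Finset.sum_range_succ (f := fun i => (m.choose i : ℝ)) (n := r + 1), hS, pow_succ] at heq'
      have : (Sf m r : ℝ) = (m.choose (r + 1) : ℝ) := by nlinarith
      have : Sf m r = m.choose (r + 1) := by exact_mod_cast this
      omega
end

section
/- For every integer m ≥ 2 and every r with 0 ≤ r < ⌊m/3⌋, we have f_m(r) < f_m(r+1), i.e., f_m is strictly increasing on {0, 1, …, ⌊m/3⌋}. -/
lemma key_sum_lt (m r : ℕ) (h : r < m / 3) :
    (∑ i ∈ Finset.range (r + 1), m.choose i) < m.choose (r + 1) := by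
  induction r with
  | zero =>
      rw [Finset.sum_range_one]
      have h1 : m.choose (0 + 1) = m := Nat.choose_one_right m
      have h0 : m.choose 0 = 1 := Nat.choose_zero_right m
      omega
  | succ n ih =>
      have hn : n < m / 3 := by omega
      have hsum := ih hn
      have hm3 : 3 * (n + 2) ≤ m := by
        have := Nat.div_mul_le_self m 3
        omega
      -- 2 * choose (n+1) ≤ choose (n+2)
      have hid : m.choose (n + 2) * (n + 2) = m.choose (n + 1) * (m - (n + 1)) :=
        Nat.choose_succ_right_eq m (n + 1)
      have hstep : 2 * m.choose (n + 1) ≤ m.choose (n + 2) := by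
        have h1 : m.choose (n + 1) * (2 * (n + 2)) ≤ m.choose (n + 1) * (m - (n + 1)) :=
          Nat.mul_le_mul_left _ (by omega)
        have h2 : (2 * m.choose (n + 1)) * (n + 2) ≤ m.choose (n + 2) * (n + 2) := by
          rw [hid]; linarith [h1]
        exact Nat.le_of_mul_le_mul_right h2 (by omega)
      rw [Finset.sum_range_succ]
      have hrfl : m.choose (n + 1 + 1) = m.choose (n + 2) := rfl
      omega

theorem stmt_6 (m r : ℕ) (hm : 2 ≤ m) (hr : r < m / 3) :
    (∑ i ∈ Finset.range (r + 1), (m.choose i : ℝ)) / 2 ^ r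
      < (∑ i ∈ Finset.range (r + 2), (m.choose i : ℝ)) / 2 ^ (r + 1) := by
  have hkey : (∑ i ∈ Finset.range (r + 1), (m.choose i : ℝ)) < (m.choose (r + 1) : ℝ) := by
    exact_mod_cast key_sum_lt m r hr
  rw [div_lt_div_iff₀ (by positivity) (by positivity)]
  rw [show r + 2 = (r + 1) + 1 from rfl,
    Finset.sum_range_succ (fun i => (m.choose i : ℝ)) (r + 1), pow_succ]
  have hp : (0 : ℝ) < 2 ^ r := by positivity
  nlinarith [hp, hkey]
end

section
/- For every integer t ≥ 6, ∑_{i=0}^{t} C(3t, i) < C(3t, t+1). -/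
set_option maxHeartbeats 800000

open Finset

lemma sum_choose_lt_aux (N m : ℕ) (h : ∀ i ≤ m, 2 * N.choose i ≤ N.choose (i+1)) :
    ∑ i ∈ range (m+1), N.choose i < N.choose (m+1) := by
  induction m with
  | zero =>
      have := h 0 (le_refl 0)
      simp [Nat.choose_zero_right] at this ⊢
      omega
  | succ m ih =>
      rw [Finset.sum_range_succ]
      have h1 := ih (fun i hi => h i (Nat.le_succ_of_le hi))
      have h2 := h (m+1) (le_refl _)
      omega

theorem stmt_7 (t : ℕ) (ht : 6 ≤ t) :
    (∑ i ∈ Finset.range (t + 1), (3 * t).choose i) < (3 * t).choose (t + 1) := by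
  obtain ⟨n, rfl⟩ := Nat.exists_eq_add_of_le ht
  have hN : 3 * (6 + n) = 3*n+18 := by ring
  rw [hN]
  set N := 3*n+18 with hNdef
  -- ratio identities
  have hid : ∀ k, N.choose (k+1) * (k+1) = N.choose k * (N - k) :=
    fun k => Nat.choose_succ_right_eq N k
  -- doubling bound below n+3
  have hdouble : ∀ i ≤ n+2, 2 * N.choose i ≤ N.choose (i+1) := by
    intro i hi
    have h1 := hid i
    have h2 : 2 * (i+1) ≤ N - i := by omega
    have h3 : 2 * N.choose i * (i+1) ≤ N.choose (i+1) * (i+1) := by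
      rw [h1]
      calc 2 * N.choose i * (i+1) = N.choose i * (2*(i+1)) := by ring
        _ ≤ N.choose i * (N - i) := Nat.mul_le_mul_left _ h2
    exact Nat.le_of_mul_le_mul_right h3 (Nat.succ_pos i)
  have hsum : ∑ i ∈ range (n+3), N.choose i < N.choose (n+3) :=
    sum_choose_lt_aux N (n+2) hdouble
  -- peel top four terms
  have hsplit : (6 + n + 1) = (n+3) + 1 + 1 + 1 + 1 := by omega
  rw [hsplit, Finset.sum_range_succ, Finset.sum_range_succ, Finset.sum_range_succ,
    Finset.sum_range_succ]
  set d := N.choose (n+3) with hd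
  have ha' := hid (n+3)
  have hb' := hid (n+4)
  have hc' := hid (n+5)
  have he' := hid (n+6)
  have s1 : N - (n+3) = 2*n+15 := by omega
  have s2 : N - (n+4) = 2*n+14 := by omega
  have s3 : N - (n+5) = 2*n+13 := by omega
  have s4 : N - (n+6) = 2*n+12 := by omega
  rw [s1] at ha'; rw [s2] at hb'; rw [s3] at hc'; rw [s4] at he'
  set a := N.choose (n+4) with hA
  set b := N.choose (n+5) with hB
  set c := N.choose (n+6) with hC
  set e := N.choose (n+7) with hE
  -- normalize choose indices: n+3+1 = n+4 etc are defeq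
  have ha : a * (n+4) = d * (2*n+15) := ha'
  have hb : b * (n+5) = a * (2*n+14) := hb'
  have hc : c * (n+6) = b * (2*n+13) := hc'
  have he : e * (n+7) = c * (2*n+12) := he'
  -- cascade to multiples of d
  have hb2 : b * ((n+4)*(n+5)) = d * ((2*n+15)*(2*n+14)) := by
    calc b * ((n+4)*(n+5)) = (b*(n+5))*(n+4) := by ring
      _ = (a*(2*n+14))*(n+4) := by rw [hb]
      _ = (a*(n+4))*(2*n+14) := by ring
      _ = (d*(2*n+15))*(2*n+14) := by rw [ha]
      _ = d * ((2*n+15)*(2*n+14)) := by ring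
  have hc2 : c * ((n+4)*(n+5)*(n+6)) = d * ((2*n+15)*(2*n+14)*(2*n+13)) := by
    calc c * ((n+4)*(n+5)*(n+6)) = (c*(n+6))*((n+4)*(n+5)) := by ring
      _ = (b*(2*n+13))*((n+4)*(n+5)) := by rw [hc]
      _ = (b*((n+4)*(n+5)))*(2*n+13) := by ring
      _ = (d*((2*n+15)*(2*n+14)))*(2*n+13) := by rw [hb2]
      _ = d * ((2*n+15)*(2*n+14)*(2*n+13)) := by ring
  have he2 : e * ((n+4)*(n+5)*(n+6)*(n+7)) = d * ((2*n+15)*(2*n+14)*(2*n+13)*(2*n+12)) := by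
    calc e * ((n+4)*(n+5)*(n+6)*(n+7)) = (e*(n+7))*((n+4)*(n+5)*(n+6)) := by ring
      _ = (c*(2*n+12))*((n+4)*(n+5)*(n+6)) := by rw [he]
      _ = (c*((n+4)*(n+5)*(n+6)))*(2*n+12) := by ring
      _ = (d*((2*n+15)*(2*n+14)*(2*n+13)))*(2*n+12) := by rw [hc2]
      _ = d * ((2*n+15)*(2*n+14)*(2*n+13)*(2*n+12)) := by ring
  -- key inequality: 2d + a + b + c ≤ e
  have hpoly : 2*((n+4)*(n+5)*(n+6)*(n+7)) + (2*n+15)*((n+5)*(n+6)*(n+7))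
      + (2*n+15)*(2*n+14)*((n+6)*(n+7)) + (2*n+15)*(2*n+14)*(2*n+13)*(n+7)
      ≤ (2*n+15)*(2*n+14)*(2*n+13)*(2*n+12) := by
    have hid2 : (2*n+15)*(2*n+14)*(2*n+13)*(2*n+12)
        = (2*((n+4)*(n+5)*(n+6)*(n+7)) + (2*n+15)*((n+5)*(n+6)*(n+7))
          + (2*n+15)*(2*n+14)*((n+6)*(n+7)) + (2*n+15)*(2*n+14)*(2*n+13)*(n+7))
          + (3*n^3+40*n^2+133*n) := by ring
    rw [hid2]
    exact Nat.le_add_right _ _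
  have hkey : 2*d + a + b + c ≤ e := by
    have hKpos : 0 < (n+4)*(n+5)*(n+6)*(n+7) := Nat.mul_pos (Nat.mul_pos (Nat.mul_pos (Nat.succ_pos _) (Nat.succ_pos _)) (Nat.succ_pos _)) (Nat.succ_pos _)
    apply Nat.le_of_mul_le_mul_right _ hKpos
    calc (2*d + a + b + c) * ((n+4)*(n+5)*(n+6)*(n+7))
        = 2*d*((n+4)*(n+5)*(n+6)*(n+7)) + (a*(n+4))*((n+5)*(n+6)*(n+7))
          + (b*((n+4)*(n+5)))*((n+6)*(n+7)) + (c*((n+4)*(n+5)*(n+6)))*(n+7) := by ring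
      _ = 2*d*((n+4)*(n+5)*(n+6)*(n+7)) + (d*(2*n+15))*((n+5)*(n+6)*(n+7))
          + (d*((2*n+15)*(2*n+14)))*((n+6)*(n+7))
          + (d*((2*n+15)*(2*n+14)*(2*n+13)))*(n+7) := by rw [ha, hb2, hc2]
      _ = d * (2*((n+4)*(n+5)*(n+6)*(n+7)) + (2*n+15)*((n+5)*(n+6)*(n+7))
          + (2*n+15)*(2*n+14)*((n+6)*(n+7)) + (2*n+15)*(2*n+14)*(2*n+13)*(n+7)) := by ring
      _ ≤ d * ((2*n+15)*(2*n+14)*(2*n+13)*(2*n+12)) := Nat.mul_le_mul_left _ hpoly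
      _ = e * ((n+4)*(n+5)*(n+6)*(n+7)) := he2.symm
  omega
end

section
/- For every integer m ≥ 15 with m ≡ 0 (mod 3), setting r_0 = m/3 + 1, we have f_m(r_0 - 1) < f_m(r_0), where f_m(r) = 2^{-r} ∑_{i=0}^r C(m,i). -/
lemma geo_aux_s8 (k : ℕ) (hk : 5 ≤ k) :
    ∀ j, j + 2 ≤ k →
      (k+5) * (∑ i ∈ Finset.range (j+1), Nat.choose (3*k) i)
        ≤ (2*k+3) * Nat.choose (3*k) j := by
  intro j
  induction j with
  | zero => intro _; simp; omega
  | succ j ih =>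
    intro hj
    have ihj := ih (by omega)
    rw [Finset.sum_range_succ]
    have hc : Nat.choose (3*k) (j+1) * (j+1) = Nat.choose (3*k) j * (3*k - j) :=
      Nat.choose_succ_right_eq _ _
    set t := 3*k - j with ht
    have htj : j + t = 3*k := by omega
    have ht2 : 2*k+3 ≤ t := by omega
    have hpos : 0 < Nat.choose (3*k) j := Nat.choose_pos (by omega)
    have key : (2*k+3)*(j+1) + (k+5)*t ≤ (2*k+3)*t := by
      have h1 : (2*k+3)*(j+1) ≤ t*(j+1) := Nat.mul_le_mul_right _ ht2
      have h2 : t*(j+1) + (k+5)*t = t*(j+k+6) := by ring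
      have h3 : t*(j+k+6) ≤ t*(2*k+3) := Nat.mul_le_mul_left _ (by omega)
      calc (2*k+3)*(j+1) + (k+5)*t ≤ t*(j+1) + (k+5)*t := by omega
        _ = t*(j+k+6) := h2
        _ ≤ t*(2*k+3) := h3
        _ = (2*k+3)*t := by ring
    set c := Nat.choose (3*k) j with hcj
    set c' := Nat.choose (3*k) (j+1) with hcj'
    set S := ∑ i ∈ Finset.range (j+1), Nat.choose (3*k) i with hS
    apply Nat.le_of_mul_le_mul_right _ (Nat.succ_pos j)
    have hA : (k+5)*S*(j+1) ≤ (2*k+3)*c*(j+1) := Nat.mul_le_mul_right _ ihj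
    have hB : c*((2*k+3)*(j+1)) + c*((k+5)*t) ≤ c*((2*k+3)*t) := by
      calc c*((2*k+3)*(j+1)) + c*((k+5)*t) = c*((2*k+3)*(j+1) + (k+5)*t) := by ring
        _ ≤ c*((2*k+3)*t) := Nat.mul_le_mul_left c key
    calc (k+5)*(S+c')*(j+1)
        = (k+5)*S*(j+1) + (k+5)*(c'*(j+1)) := by ring
      _ = (k+5)*S*(j+1) + (k+5)*(c*t) := by rw [hc]
      _ ≤ (2*k+3)*c*(j+1) + (k+5)*(c*t) := Nat.add_le_add_right hA _
      _ ≤ (2*k+3)*(c*t) := by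
          have := hB
          nlinarith [this]
      _ = (2*k+3)*(c'*(j+1)) := by rw [hc]
      _ = (2*k+3)*c'*(j+1) := by ring

lemma real_aux (A T c0 c1 c2 c3 : ℝ) (hA : 3 ≤ A)
    (hGr : (A+7)*T ≤ (2*A+7)*c0)
    (e1 : c1*(A+1) = c0*(2*A+6)) (e2 : c2*(A+2) = c1*(2*A+5))
    (e3 : c3*(A+3) = c2*(2*A+4)) (hc0 : 1 ≤ c0) :
    T + c1 + c2 < c3 := by
  have hA1 : (0:ℝ) < A+1 := by linarith
  have hA2 : (0:ℝ) < A+2 := by linarith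
  have hA3 : (0:ℝ) < A+3 := by linarith
  have hA7 : (0:ℝ) < A+7 := by linarith
  have hD : (0:ℝ) < (A+1)*(A+2)*(A+3)*(A+7) := by positivity
  rw [← mul_lt_mul_iff_left₀ hD]
  have E2 : c2*((A+1)*(A+2)) = c0*((2*A+6)*(2*A+5)) := by
    calc c2*((A+1)*(A+2)) = (c2*(A+2))*(A+1) := by ring
      _ = (c1*(2*A+5))*(A+1) := by rw [e2]
      _ = (c1*(A+1))*(2*A+5) := by ring
      _ = (c0*(2*A+6))*(2*A+5) := by rw [e1]
      _ = c0*((2*A+6)*(2*A+5)) := by ring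
  have E3 : c3*((A+1)*(A+2)*(A+3)) = c0*((2*A+6)*(2*A+5)*(2*A+4)) := by
    calc c3*((A+1)*(A+2)*(A+3)) = (c3*(A+3))*((A+1)*(A+2)) := by ring
      _ = (c2*(2*A+4))*((A+1)*(A+2)) := by rw [e3]
      _ = (c2*((A+1)*(A+2)))*(2*A+4) := by ring
      _ = (c0*((2*A+6)*(2*A+5)))*(2*A+4) := by rw [E2]
      _ = c0*((2*A+6)*(2*A+5)*(2*A+4)) := by ring
  have H0 : ((A+7)*T)*((A+1)*(A+2)*(A+3)) ≤ ((2*A+7)*c0)*((A+1)*(A+2)*(A+3)) :=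
    mul_le_mul_of_nonneg_right hGr (by positivity)
  have Ppos : (0:ℝ) < (2*A+6)*(2*A+5)*(2*A+4)*(A+7)
      - ((2*A+7)*(A+1)*(A+2)*(A+3) + (2*A+6)*(A+2)*(A+3)*(A+7)
        + (2*A+6)*(2*A+5)*(A+3)*(A+7)) := by
    nlinarith [sq_nonneg (A-3),
      mul_nonneg (mul_nonneg (by linarith : (0:ℝ) ≤ A-3) (by linarith : (0:ℝ) ≤ A-3))
        (by linarith : (0:ℝ) ≤ A-3)]
  have Hc0P : (2*A+6)*(2*A+5)*(2*A+4)*(A+7)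
      - ((2*A+7)*(A+1)*(A+2)*(A+3) + (2*A+6)*(A+2)*(A+3)*(A+7)
        + (2*A+6)*(2*A+5)*(A+3)*(A+7))
      ≤ c0*((2*A+6)*(2*A+5)*(2*A+4)*(A+7)
      - ((2*A+7)*(A+1)*(A+2)*(A+3) + (2*A+6)*(A+2)*(A+3)*(A+7)
        + (2*A+6)*(2*A+5)*(A+3)*(A+7))) := le_mul_of_one_le_left Ppos.le hc0
  nlinarith [H0, e1, E2, E3, Ppos, Hc0P]

lemma main_aux (a : ℕ) (ha : 3 ≤ a) :
    (∑ i ∈ Finset.range (a+3), Nat.choose (3*a+6) i) < Nat.choose (3*a+6) (a+3) := by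
  have hG := geo_aux_s8 (a+2) (by omega) a (by omega)
  rw [show 3*(a+2) = 3*a+6 by ring, show (a+2)+5 = a+7 by ring,
    show 2*(a+2)+3 = 2*a+7 by ring] at hG
  have h1 := Nat.choose_succ_right_eq (3*a+6) a
  have h2 := Nat.choose_succ_right_eq (3*a+6) (a+1)
  have h3 := Nat.choose_succ_right_eq (3*a+6) (a+2)
  rw [show 3*a+6 - a = 2*a+6 by omega] at h1
  rw [show 3*a+6 - (a+1) = 2*a+5 by omega] at h2
  rw [show 3*a+6 - (a+2) = 2*a+4 by omega] at h3
  have hpos : 0 < Nat.choose (3*a+6) a := Nat.choose_pos (by omega)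
  rw [show a+3 = (a+2)+1 by ring, Finset.sum_range_succ,
    show a+2 = (a+1)+1 by ring, Finset.sum_range_succ]
  rw [← Nat.cast_lt (α := ℝ)]
  push_cast
  have := real_aux (a : ℝ)
    ((∑ i ∈ Finset.range (a+1), Nat.choose (3*a+6) i : ℕ) : ℝ)
    ((Nat.choose (3*a+6) a : ℕ) : ℝ)
    ((Nat.choose (3*a+6) (a+1) : ℕ) : ℝ)
    ((Nat.choose (3*a+6) (a+2) : ℕ) : ℝ)
    ((Nat.choose (3*a+6) (a+3) : ℕ) : ℝ)
    (by exact_mod_cast ha)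
    (by exact_mod_cast hG)
    (by exact_mod_cast h1)
    (by exact_mod_cast h2)
    (by exact_mod_cast h3)
    (by exact_mod_cast hpos)
  push_cast at this
  convert this using 2 <;> norm_num

theorem stmt_8 (m : ℕ) (hm : 15 ≤ m) (h3 : m % 3 = 0) :
    (∑ i ∈ Finset.range (m / 3 + 1), (m.choose i : ℝ)) / 2 ^ (m / 3)
      < (∑ i ∈ Finset.range (m / 3 + 2), (m.choose i : ℝ)) / 2 ^ (m / 3 + 1) := by
  obtain ⟨a, ha, rfl⟩ : ∃ a, 3 ≤ a ∧ m = 3*a+6 := ⟨m/3 - 2, by omega, by omega⟩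
  rw [show (3*a+6)/3 = a+2 by omega]
  rw [div_lt_div_iff₀ (by positivity) (by positivity)]
  have key : (∑ i ∈ Finset.range (a+3), ((3*a+6).choose i : ℝ))
      < (((3*a+6).choose (a+3) : ℕ) : ℝ) := by
    exact_mod_cast main_aux a ha
  have e1 : (∑ i ∈ Finset.range (a+2+1), ((3*a+6).choose i : ℝ))
      = ∑ i ∈ Finset.range (a+3), ((3*a+6).choose i : ℝ) := by norm_num
  have e2 : (∑ i ∈ Finset.range (a+2+2), ((3*a+6).choose i : ℝ))
      = (∑ i ∈ Finset.range (a+3), ((3*a+6).choose i : ℝ))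
        + (((3*a+6).choose (a+3) : ℕ) : ℝ) := by
    rw [show a+2+2 = (a+3)+1 by omega, Finset.sum_range_succ]
  have e3 : (2:ℝ)^(a+2+1) = 2^(a+2)*2 := pow_succ 2 (a+2)
  rw [e1, e2, e3]
  have hp : (0:ℝ) < 2^(a+2) := by positivity
  nlinarith [mul_lt_mul_of_pos_right key hp]
end

section
/- For every integer m ≥ 2 with m ∉ {3, 6, 9, 12}, the sequence f_m(r) is strictly increasing for 0 ≤ r ≤ ⌊m/3⌋ + 1: f_m(0) < f_m(1) < ⋯ < f_m(⌊m/3⌋+1). -/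
open Finset

private lemma choose_ratio {m k : ℕ} (h : 3 * k + 2 ≤ m) :
    2 * m.choose k ≤ m.choose (k + 1) := by
  have h1 := Nat.choose_succ_right_eq m k
  have h3 : 2 * m.choose k * (k + 1) ≤ m.choose (k + 1) * (k + 1) := by
    rw [h1]
    calc 2 * m.choose k * (k + 1) = m.choose k * (2 * (k + 1)) := by ring
      _ ≤ m.choose k * (m - k) := Nat.mul_le_mul_left _ (by omega)
  exact Nat.le_of_mul_le_mul_right h3 (by omega)

private lemma sum_le_two_choose (m : ℕ) :
    ∀ s, 3 * s ≤ m → ∑ i ∈ range (s + 1), m.choose i ≤ 2 * m.choose s := by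
  intro s
  induction s with
  | zero => simp
  | succ n ih =>
    intro h
    rw [Finset.sum_range_succ]
    have h1 := ih (by omega)
    have h2 := choose_ratio (m := m) (k := n) (by omega)
    omega

private lemma sum_lt_two_choose (m : ℕ) :
    ∀ s, 1 ≤ s → 3 * s ≤ m → ∑ i ∈ range (s + 1), m.choose i < 2 * m.choose s := by
  intro s
  induction s with
  | zero => omega
  | succ n ih =>
    intro _ h
    rw [Finset.sum_range_succ]
    rcases Nat.eq_zero_or_pos n with hn | hn
    · subst hn
      simp [Finset.sum_range_succ, Nat.choose_one_right]
      omega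
    · have h1 := ih hn (by omega)
      have h2 := choose_ratio (m := m) (k := n) (by omega)
      omega

private lemma cast_choose_id (m k : ℕ) (c : ℕ) (hc : m - k = c) :
    (m.choose (k + 1) : ℤ) * ((k : ℤ) + 1) = (m.choose k : ℤ) * (c : ℤ) := by
  have h := Nat.choose_succ_right_eq m k
  rw [hc] at h
  have := congrArg (Nat.cast : ℕ → ℤ) h
  push_cast at this
  linarith

private lemma alg1_arith (s a b c d : ℤ) (hc : 1 ≤ c) (hs : 0 ≤ s)
    (h1 : b * (s + 1) = a * (2 * s + 7))
    (h2 : c * (s + 2) = b * (2 * s + 6))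
    (h3 : d * (s + 3) = c * (2 * s + 5)) :
    2 * a + b + c < d := by
  have key : (d - 2 * a - b - c) * (84 + 178 * s + 128 * s ^ 2 + 38 * s ^ 3 + 4 * s ^ 4)
      = (20 + 40 * s + 25 * s ^ 2 + 5 * s ^ 3) * c := by
    linear_combination (24 + 44 * s + 24 * s ^ 2 + 4 * s ^ 3) * h1 +
      (18 + 35 * s + 21 * s ^ 2 + 4 * s ^ 3) * h2 +
      (28 + 50 * s + 26 * s ^ 2 + 4 * s ^ 3) * h3
  have hK : (0 : ℤ) < 84 + 178 * s + 128 * s ^ 2 + 38 * s ^ 3 + 4 * s ^ 4 := by positivity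
  have hg : (0 : ℤ) < (20 + 40 * s + 25 * s ^ 2 + 5 * s ^ 3) * c := by positivity
  have h0 : 0 * (84 + 178 * s + 128 * s ^ 2 + 38 * s ^ 3 + 4 * s ^ 4)
      < (d - 2 * a - b - c) * (84 + 178 * s + 128 * s ^ 2 + 38 * s ^ 3 + 4 * s ^ 4) := by
    rw [key, zero_mul]; exact hg
  have := lt_of_mul_lt_mul_right h0 (le_of_lt hK)
  linarith

private lemma alg2_arith (s e a b c d : ℤ) (hc : 1 ≤ c) (hs : 4 ≤ s)
    (h0 : a * (s + 1) = e * (2 * s + 9))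
    (h1 : b * (s + 2) = a * (2 * s + 8))
    (h2 : c * (s + 3) = b * (2 * s + 7))
    (h3 : d * (s + 4) = c * (2 * s + 6)) :
    2 * e + a + b + c < d := by
  have key : (d - 2 * e - a - b - c) *
      (3024 + 7836 * s + 7802 * s ^ 2 + 3900 * s ^ 3 + 1046 * s ^ 4 + 144 * s ^ 5 + 8 * s ^ 6)
      = (-180 - 324 * s - 151 * s ^ 2 + 9 * s ^ 3 + 19 * s ^ 4 + 3 * s ^ 5) * c := by
    linear_combination
      (672 + 1592 * s + 1380 * s ^ 2 + 560 * s ^ 3 + 108 * s ^ 4 + 8 * s ^ 5) * h0 +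
      (462 + 1147 * s + 1060 * s ^ 2 + 465 * s ^ 3 + 98 * s ^ 4 + 8 * s ^ 5) * h1 +
      (564 + 1352 * s + 1195 * s ^ 2 + 500 * s ^ 3 + 101 * s ^ 4 + 8 * s ^ 5) * h2 +
      (756 + 1770 * s + 1508 * s ^ 2 + 598 * s ^ 3 + 112 * s ^ 4 + 8 * s ^ 5) * h3
  have hs0 : (0:ℤ) ≤ s := by linarith
  have hK : (0 : ℤ) < 3024 + 7836 * s + 7802 * s ^ 2 + 3900 * s ^ 3 + 1046 * s ^ 4
      + 144 * s ^ 5 + 8 * s ^ 6 := by positivity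
  have hgpoly : (0 : ℤ) < -180 - 324 * s - 151 * s ^ 2 + 9 * s ^ 3 + 19 * s ^ 4 + 3 * s ^ 5 := by
    nlinarith [pow_pos (show (0:ℤ) < s by linarith) 3, sq_nonneg s, mul_pos (mul_pos (show (0:ℤ) < s by linarith) (show (0:ℤ) < s by linarith)) (show (0:ℤ) < s - 3 by linarith)]
  have hg : (0 : ℤ) < (-180 - 324 * s - 151 * s ^ 2 + 9 * s ^ 3 + 19 * s ^ 4 + 3 * s ^ 5) * c :=
    mul_pos hgpoly (by linarith)
  have h0' : 0 * (3024 + 7836 * s + 7802 * s ^ 2 + 3900 * s ^ 3 + 1046 * s ^ 4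
      + 144 * s ^ 5 + 8 * s ^ 6)
      < (d - 2 * e - a - b - c) * (3024 + 7836 * s + 7802 * s ^ 2 + 3900 * s ^ 3 + 1046 * s ^ 4
      + 144 * s ^ 5 + 8 * s ^ 6) := by
    rw [key, zero_mul]; exact hg
  have := lt_of_mul_lt_mul_right h0' (le_of_lt hK)
  linarith

private lemma key_nat (m r : ℕ) (hm : 2 ≤ m) (h3 : m ≠ 3) (h6 : m ≠ 6) (h9 : m ≠ 9)
    (h12 : m ≠ 12) (hr : 3 * r ≤ m) :
    ∑ i ∈ range (r + 1), m.choose i < m.choose (r + 1) := by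
  rcases Nat.eq_zero_or_pos r with hr0 | hr1
  · subst hr0
    simpa [Nat.choose_one_right] using (show 1 < m by omega)
  rcases le_or_gt (3 * r + 2) m with hcase | hcase
  · -- main case
    calc ∑ i ∈ range (r + 1), m.choose i < 2 * m.choose r :=
          sum_lt_two_choose m r hr1 hr
      _ ≤ m.choose (r + 1) := choose_ratio hcase
  · -- m = 3r or 3r+1
    rcases (show m = 3 * r ∨ m = 3 * r + 1 by omega) with hm3 | hm31
    · -- m = 3r, r ≥ 5 since m ∉ {3,6,9,12}; r = 5, 6 numeric, r ≥ 7 algebra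
      have hr5 : 5 ≤ r := by omega
      rcases (show r = 5 ∨ r = 6 ∨ 7 ≤ r by omega) with rfl | h
      · subst hm3; decide
      rcases h with rfl | hr7
      · subst hm3; decide
      · -- r ≥ 7
        obtain ⟨s, rfl⟩ : ∃ s, r = s + 3 := ⟨r - 3, by omega⟩
        have hs4 : 4 ≤ s := by omega
        subst hm3
        set m := 3 * (s + 3) with hmdef
        have hmsplit : m = 3 * s + 9 := by omega
        have hsum : ∑ i ∈ range (s + 3 + 1), m.choose i
            ≤ 2 * m.choose s + m.choose (s + 1) + m.choose (s + 2) + m.choose (s + 3) := by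
          have hd := sum_le_two_choose m s (by omega)
          rw [show s + 3 + 1 = (s + 1) + 1 + 1 + 1 by ring]
          rw [Finset.sum_range_succ, Finset.sum_range_succ, Finset.sum_range_succ]
          omega
        have halg : 2 * m.choose s + m.choose (s + 1) + m.choose (s + 2) + m.choose (s + 3)
            < m.choose (s + 3 + 1) := by
          have i0 := cast_choose_id m s (2 * s + 9) (by omega)
          have i1 := cast_choose_id m (s + 1) (2 * s + 8) (by omega)
          have i2 := cast_choose_id m (s + 2) (2 * s + 7) (by omega)
          have i3 := cast_choose_id m (s + 3) (2 * s + 6) (by omega)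
          have hc : (1 : ℤ) ≤ (m.choose (s + 3) : ℤ) := by
            exact_mod_cast Nat.one_le_iff_ne_zero.mpr (Nat.choose_pos (by omega)).ne'
          have := alg2_arith (s : ℤ) (m.choose s) (m.choose (s + 1)) (m.choose (s + 2))
            (m.choose (s + 3)) (m.choose (s + 4)) hc (by exact_mod_cast hs4)
            (by push_cast at i0 ⊢; linarith) (by push_cast at i1 ⊢; linarith)
            (by push_cast at i2 ⊢; linarith) (by push_cast at i3 ⊢; linarith)
          have hfin : (2 * m.choose s + m.choose (s + 1) + m.choose (s + 2) + m.choose (s + 3) : ℤ)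
              < (m.choose (s + 4) : ℤ) := by push_cast; linarith
          exact_mod_cast hfin
        omega
    · -- m = 3r + 1: r = 1 numeric (m = 4), r ≥ 2 algebra
      rcases (show r = 1 ∨ 2 ≤ r by omega) with rfl | hr2
      · subst hm31; decide
      · obtain ⟨s, rfl⟩ : ∃ s, r = s + 2 := ⟨r - 2, by omega⟩
        subst hm31
        set m := 3 * (s + 2) + 1 with hmdef
        have hsum : ∑ i ∈ range (s + 2 + 1), m.choose i
            ≤ 2 * m.choose s + m.choose (s + 1) + m.choose (s + 2) := by
          have hd := sum_le_two_choose m s (by omega)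
          rw [show s + 2 + 1 = (s + 1) + 1 + 1 by ring]
          rw [Finset.sum_range_succ, Finset.sum_range_succ]
          omega
        have halg : 2 * m.choose s + m.choose (s + 1) + m.choose (s + 2)
            < m.choose (s + 2 + 1) := by
          have i1 := cast_choose_id m s (2 * s + 7) (by omega)
          have i2 := cast_choose_id m (s + 1) (2 * s + 6) (by omega)
          have i3 := cast_choose_id m (s + 2) (2 * s + 5) (by omega)
          have hc : (1 : ℤ) ≤ (m.choose (s + 2) : ℤ) := by
            exact_mod_cast Nat.one_le_iff_ne_zero.mpr (Nat.choose_pos (by omega)).ne'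
          have := alg1_arith (s : ℤ) (m.choose s) (m.choose (s + 1)) (m.choose (s + 2))
            (m.choose (s + 3)) hc (by positivity)
            (by push_cast at i1 ⊢; linarith) (by push_cast at i2 ⊢; linarith)
            (by push_cast at i3 ⊢; linarith)
          have hfin : (2 * m.choose s + m.choose (s + 1) + m.choose (s + 2) : ℤ)
              < (m.choose (s + 3) : ℤ) := by push_cast; linarith
          exact_mod_cast hfin
        omega

theorem stmt_9 (m : ℕ) (hm : 2 ≤ m) (hne : m ∉ ({3, 6, 9, 12} : Set ℕ)) :
    ∀ r : ℕ, r < m / 3 + 1 →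
      (∑ i ∈ Finset.range (r + 1), (m.choose i : ℝ)) / 2 ^ r
        < (∑ i ∈ Finset.range (r + 2), (m.choose i : ℝ)) / 2 ^ (r + 1) := by
  intro r hr
  simp only [Set.mem_insert_iff, Set.mem_singleton_iff, not_or] at hne
  obtain ⟨h3, h6, h9, h12⟩ := hne
  have hkey := key_nat m r hm h3 h6 h9 h12 (by omega)
  have hkey' : (∑ i ∈ Finset.range (r + 1), (m.choose i : ℝ)) < (m.choose (r + 1) : ℝ) := by
    have : ((∑ i ∈ Finset.range (r + 1), m.choose i : ℕ) : ℝ) < ((m.choose (r + 1) : ℕ) : ℝ) := by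
      exact_mod_cast hkey
    simpa [Nat.cast_sum] using this
  rw [div_lt_div_iff₀ (by positivity) (by positivity)]
  have hsum2 : (∑ i ∈ Finset.range (r + 2), (m.choose i : ℝ))
      = (∑ i ∈ Finset.range (r + 1), (m.choose i : ℝ)) + (m.choose (r + 1) : ℝ) :=
    Finset.sum_range_succ _ (r + 1)
  have hp : (0 : ℝ) < 2 ^ r := by positivity
  rw [hsum2, pow_succ]
  nlinarith [hp, hkey']
end

section
/- The limit of (∑_{i=0}^{s} C(3s, i)) / C(3s, s) as s → ∞ equals 2. -/
open Filter Finset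

noncomputable def aa (s k : ℕ) : ℝ := ((3 * s).choose (s - k) : ℝ) / ((3 * s).choose s)

lemma choose3_pos (s : ℕ) : 0 < (((3 * s).choose s : ℕ) : ℝ) := by
  exact_mod_cast Nat.choose_pos (by omega)

lemma aa_nonneg (s k : ℕ) : 0 ≤ aa s k := by
  apply div_nonneg <;> positivity

lemma aa_zero (s : ℕ) : aa s 0 = 1 := by
  simp only [aa, Nat.sub_zero]
  exact div_self (ne_of_gt (choose3_pos s))

lemma aa_rec (s k : ℕ) (hk : k < s) :
    aa s (k + 1) = aa s k * (((s : ℝ) - k) / (2 * s + 1 + k)) := by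
  have key : ((3 * s).choose (s - k) : ℕ) * (s - k) =
      (3 * s).choose (s - (k + 1)) * (3 * s - (s - (k + 1))) := by
    have h1 : s - (k + 1) + 1 = s - k := by omega
    have := Nat.choose_succ_right_eq (3 * s) (s - (k + 1))
    rw [h1] at this
    exact this
  have h2 : (3 * s : ℕ) - (s - (k + 1)) = 2 * s + 1 + k := by omega
  rw [h2] at key
  have keyR : ((3 * s).choose (s - k) : ℝ) * ((s : ℝ) - k) =
      ((3 * s).choose (s - (k + 1)) : ℝ) * (2 * s + 1 + k) := by
    have := congrArg (fun n : ℕ => (n : ℝ)) key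
    push_cast [Nat.cast_sub hk.le] at this
    push_cast
    linarith [this]
  have hden : (2 * (s : ℝ) + 1 + k) ≠ 0 := by positivity
  unfold aa
  rw [div_mul_div_comm, keyR, mul_div_mul_right _ _ hden]

lemma aa_le (s k : ℕ) (hk : k ≤ s) : aa s k ≤ (1 / 2) ^ k := by
  induction k with
  | zero => simp [aa_zero]
  | succ k ih =>
    have hk' : k < s := by omega
    rw [aa_rec s k hk']
    have hratio : ((s : ℝ) - k) / (2 * s + 1 + k) ≤ 1 / 2 := by
      rw [div_le_div_iff₀ (by positivity) (by norm_num)]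
      have : (k : ℝ) ≤ s := by exact_mod_cast hk'.le
      linarith
    have hratio0 : 0 ≤ ((s : ℝ) - k) / (2 * s + 1 + k) := by
      apply div_nonneg
      · have : (k : ℝ) ≤ s := by exact_mod_cast hk'.le
        linarith
      · positivity
    calc aa s k * (((s : ℝ) - k) / (2 * s + 1 + k))
        ≤ (1 / 2) ^ k * (1 / 2) := by
          apply mul_le_mul (ih hk'.le) hratio hratio0 (by positivity)
      _ = (1 / 2) ^ (k + 1) := by ring

lemma ratio_tendsto (k : ℕ) :
    Tendsto (fun s : ℕ => ((s : ℝ) - k) / (2 * s + 1 + k)) atTop (nhds (1 / 2)) := by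
  have h1 : Tendsto (fun s : ℕ => (k : ℝ) / s) atTop (nhds 0) :=
    tendsto_const_div_atTop_nhds_zero_nat (k : ℝ)
  have h2 : Tendsto (fun s : ℕ => ((1 : ℝ) + k) / s) atTop (nhds 0) :=
    tendsto_const_div_atTop_nhds_zero_nat ((1 : ℝ) + k)
  have h3 : Tendsto (fun s : ℕ => ((1 : ℝ) - k / s) / (2 + (1 + k) / s)) atTop
      (nhds ((1 - 0) / (2 + 0))) := by
    apply Tendsto.div (Tendsto.sub tendsto_const_nhds h1)
      (Tendsto.add tendsto_const_nhds h2)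
    norm_num
  norm_num at h3
  refine h3.congr' ?_
  filter_upwards [eventually_ge_atTop 1] with s hs
  have hs0 : (s : ℝ) ≠ 0 := by positivity
  rw [div_eq_div_iff (by positivity) (by positivity)]
  field_simp
  ring_nf

lemma aa_tendsto (k : ℕ) :
    Tendsto (fun s : ℕ => aa s k) atTop (nhds ((1 / 2) ^ k)) := by
  induction k with
  | zero =>
    simp only [aa_zero, pow_zero]
    exact tendsto_const_nhds
  | succ k ih =>
    have h : Tendsto (fun s : ℕ => aa s k * (((s : ℝ) - k) / (2 * s + 1 + k))) atTop
        (nhds ((1 / 2) ^ k * (1 / 2))) := ih.mul (ratio_tendsto k)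
    have h2 : ((1 / 2 : ℝ)) ^ k * (1 / 2) = (1 / 2) ^ (k + 1) := by ring
    rw [h2] at h
    refine h.congr' ?_
    filter_upwards [eventually_ge_atTop (k + 1)] with s hs
    exact (aa_rec s k (by omega)).symm

theorem stmt_10 :
    Filter.Tendsto
      (fun s : ℕ => (∑ i ∈ Finset.range (s + 1), ((3 * s).choose i : ℝ)) / ((3 * s).choose s))
      Filter.atTop (nhds 2) := by
  have hrw : ∀ s : ℕ,
      (∑ i ∈ Finset.range (s + 1), ((3 * s).choose i : ℝ)) / ((3 * s).choose s) =
      ∑ k ∈ Finset.range (s + 1), aa s k := by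
    intro s
    rw [Finset.sum_div]
    rw [← Finset.sum_range_reflect (fun i => ((3 * s).choose i : ℝ) / ((3 * s).choose s)) (s + 1)]
    apply Finset.sum_congr rfl
    intro k hk
    simp only [aa, Nat.add_sub_cancel]
  have hupper : ∀ s : ℕ, ∑ k ∈ Finset.range (s + 1), aa s k ≤ 2 := by
    intro s
    calc ∑ k ∈ Finset.range (s + 1), aa s k
        ≤ ∑ k ∈ Finset.range (s + 1), (1 / 2 : ℝ) ^ k :=
          Finset.sum_le_sum fun k hk => aa_le s k (by simpa using Nat.lt_succ_iff.mp (Finset.mem_range.mp hk))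
      _ ≤ 2 := by
          rw [geom_sum_eq (by norm_num)]
          have : (0 : ℝ) < (1 / 2) ^ (s + 1) := by positivity
          rw [div_le_iff_of_neg (by norm_num)]
          linarith
  rw [Metric.tendsto_atTop]
  intro ε hε
  obtain ⟨m, hm⟩ : ∃ m : ℕ, (1 / 2 : ℝ) ^ m < ε / 4 :=
    exists_pow_lt_of_lt_one (by linarith) (by norm_num)
  have hsum : Tendsto (fun s : ℕ => ∑ k ∈ Finset.range m, aa s k) atTop
      (nhds (∑ k ∈ Finset.range m, (1 / 2 : ℝ) ^ k)) :=
    tendsto_finset_sum _ fun k _ => aa_tendsto k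
  have hS : (∑ k ∈ Finset.range m, (1 / 2 : ℝ) ^ k) = 2 - 2 * (1 / 2) ^ m := by
    rw [geom_sum_eq (by norm_num)]
    ring
  rw [hS] at hsum
  rw [Metric.tendsto_atTop] at hsum
  obtain ⟨N1, hN1⟩ := hsum (ε / 4) (by linarith)
  refine ⟨max N1 m, fun s hs => ?_⟩
  have hs1 : N1 ≤ s := le_trans (le_max_left _ _) hs
  have hs2 : m ≤ s := le_trans (le_max_right _ _) hs
  have hlow : ∑ k ∈ Finset.range m, aa s k ≤ ∑ k ∈ Finset.range (s + 1), aa s k := by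
    apply Finset.sum_le_sum_of_subset_of_nonneg
    · exact Finset.range_subset_range.mpr (by omega)
    · intro k _ _; exact aa_nonneg s k
  have h1 := hN1 s hs1
  rw [Real.dist_eq, abs_lt] at h1
  rw [hrw, Real.dist_eq, abs_lt]
  constructor
  · have : 2 - 2 * (1 / 2 : ℝ) ^ m - ε / 4 < ∑ k ∈ Finset.range m, aa s k := by linarith
    have h2m : (2 : ℝ) * (1 / 2) ^ m < ε / 2 := by linarith
    linarith
  · linarith [hupper s]
end

section
/- Define polynomials A_i(r) by A_2(r) = r^2 − 15r − 10 and A_i(r) = (2r+i)·A_{i−1}(r) − B_i(r) for i ≥ 3, where B_i(r) = ∏_{ℓ=1}^i (r − ℓ). Then for every i ≥ 2, A_i is monic of degree i and its coefficient of r^{i−1} equals −C(i+4, 2). -/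
open Polynomial

lemma two_choose (n : ℕ) : 2 * n.choose 2 = n * (n - 1) := by
  rw [Nat.choose_two_right]
  obtain ⟨k, hk⟩ := Nat.even_mul_pred_self n
  omega

lemma sum_Icc_int (m : ℕ) : 2 * ∑ ℓ ∈ Finset.Icc 1 m, (ℓ : ℤ) = m * (m + 1) := by
  induction m with
  | zero => simp
  | succ k ih =>
    rw [Finset.sum_Icc_succ_top (by omega : 1 ≤ k + 1)]
    push_cast
    push_cast at ih
    ring_nf
    ring_nf at ih
    linarith

lemma Bfacts (m : ℕ) (hm : 1 ≤ m) :
    (∏ ℓ ∈ Finset.Icc 1 m, (X - C (ℓ : ℤ))).Monic ∧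
    (∏ ℓ ∈ Finset.Icc 1 m, (X - C (ℓ : ℤ))).natDegree = m ∧
    (∏ ℓ ∈ Finset.Icc 1 m, (X - C (ℓ : ℤ))).coeff (m - 1) = -∑ ℓ ∈ Finset.Icc 1 m, (ℓ : ℤ) := by
  have hmon : (∏ ℓ ∈ Finset.Icc 1 m, (X - C (ℓ : ℤ))).Monic :=
    monic_prod_of_monic _ _ fun ℓ _ => monic_X_sub_C _
  have hdeg : (∏ ℓ ∈ Finset.Icc 1 m, (X - C (ℓ : ℤ))).natDegree = m := by
    rw [natDegree_prod _ _ fun ℓ _ => X_sub_C_ne_zero _]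
    simp only [natDegree_X_sub_C, Finset.sum_const, smul_eq_mul, mul_one, Nat.card_Icc]
    omega
  refine ⟨hmon, hdeg, ?_⟩
  have := prod_X_sub_C_nextCoeff (s := Finset.Icc 1 m) (fun ℓ : ℕ => (ℓ : ℤ))
  rwa [nextCoeff_of_natDegree_pos (by omega), hdeg] at this

open Polynomial in
theorem stmt_11 (A : ℕ → Polynomial ℤ)
    (hA2 : A 2 = X ^ 2 - 15 * X - 10)
    (hA : ∀ i : ℕ, 3 ≤ i →
      A i = (2 * X + C (i : ℤ)) * A (i - 1) - ∏ ℓ ∈ Finset.Icc 1 i, (X - C (ℓ : ℤ))) :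
    ∀ i : ℕ, 2 ≤ i →
      (A i).Monic ∧ (A i).natDegree = i ∧ (A i).coeff (i - 1) = -((i + 4).choose 2 : ℤ) := by
  intro i hi
  induction i, hi using Nat.le_induction with
  | base =>
    rw [hA2]
    refine ⟨?_, ?_, ?_⟩
    · monicity!
    · compute_degree!
    · simp [coeff_sub, coeff_X_pow, coeff_ofNat_mul]
      decide
  | succ i hi ih =>
    obtain ⟨M, D, Cf⟩ := ih
    have hrec := hA (i + 1) (by omega)
    simp only [Nat.add_sub_cancel] at hrec
    set B := ∏ ℓ ∈ Finset.Icc 1 (i + 1), (X - C (ℓ : ℤ)) with hB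
    obtain ⟨BM, BD, BC⟩ := Bfacts (i + 1) (by omega)
    have hAne : A i ≠ 0 := M.ne_zero
    -- coefficient computations
    have hcf : ∀ k : ℕ, (A (i + 1)).coeff (k + 1)
        = 2 * (A i).coeff k + (i + 1 : ℤ) * (A i).coeff (k + 1) - B.coeff (k + 1) := by
      intro k
      rw [hrec]
      simp [coeff_sub, add_mul, coeff_C_mul, mul_assoc, coeff_X_mul]
    have hBtop : B.coeff (i + 1) = 1 := by
      have := BM.coeff_natDegree
      rwa [BD] at this
    have hAi : (A i).coeff i = 1 := by
      have := M.coeff_natDegree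
      rwa [D] at this
    have htop : (A (i + 1)).coeff (i + 1) = 1 := by
      rw [hcf i, coeff_eq_zero_of_natDegree_lt (by omega : (A i).natDegree < i + 1),
        hAi, hBtop]
      ring
    have hdegle : (A (i + 1)).natDegree ≤ i + 1 := by
      rw [hrec]
      refine (natDegree_sub_le _ _).trans ?_
      simp only [hB, BD, max_le_iff, le_refl, and_true]
      refine (natDegree_mul_le (R := ℤ)).trans ?_
      have h1 : (2 * X + C ((i : ℤ) + 1)).natDegree ≤ 1 := by compute_degree
      push_cast
      omega
    have hdeg : (A (i + 1)).natDegree = i + 1 :=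
      le_antisymm hdegle (le_natDegree_of_ne_zero (htop ▸ one_ne_zero))
    have hmon : (A (i + 1)).Monic := by
      rw [Monic, leadingCoeff, hdeg, htop]
    refine ⟨hmon, hdeg, ?_⟩
    have hi1 : i - 1 + 1 = i := by omega
    have hcoeff : (A (i + 1)).coeff i
        = 2 * (A i).coeff (i - 1) + (i + 1 : ℤ) * (A i).coeff i - B.coeff i := by
      have := hcf (i - 1)
      rwa [hi1] at this
    rw [Nat.add_sub_cancel, hcoeff, Cf, hAi]
    have hBc : B.coeff i = -∑ ℓ ∈ Finset.Icc 1 (i + 1), (ℓ : ℤ) := by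
      simpa [hB] using BC
    rw [hBc]
    have hsum := sum_Icc_int (i + 1)
    have h1 : (2 * ((i + 4).choose 2 : ℤ)) = (i + 4) * (i + 3) := by
      have h := two_choose (i + 4)
      have e : (i + 4) * (i + 4 - 1) = (i + 4) * (i + 3) := rfl
      rw [e] at h
      exact_mod_cast h
    have h2 : (2 * ((i + 1 + 4).choose 2 : ℤ)) = (i + 5) * (i + 4) := by
      have h := two_choose (i + 1 + 4)
      have e1 : i + 1 + 4 - 1 = i + 4 := by omega
      have e : (i + 1 + 4) * (i + 1 + 4 - 1) = (i + 5) * (i + 4) := by rw [e1]; try ring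
      rw [e] at h
      exact_mod_cast h
    push_cast at hsum
    nlinarith [hsum, h1, h2]
end

section
/- Define A_2(r) = r^2 − 15r − 10 and A_i(r) = (2r+i)·A_{i−1}(r) − B_i(r) for i ≥ 3, where B_i(r) = ∏_{ℓ=1}^i (r − ℓ). Then for every i ≥ 2, all non-leading coefficients of A_i are negative: writing A_i(r) = r^i + ∑_{k=0}^{i−1} a_{i,k} r^k, we have a_{i,k} < 0 for all 0 ≤ k ≤ i−1. -/
open Polynomial

noncomputable def Qp (i : ℕ) : Polynomial ℤ := ∏ ℓ ∈ Finset.Icc 1 i, (X + C (ℓ : ℤ))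
noncomputable def Pp (i : ℕ) : Polynomial ℤ := ∏ ℓ ∈ Finset.Icc 1 i, (X - C (ℓ : ℤ))

lemma Qp_succ (i : ℕ) : Qp (i+1) = Qp i * (X + C ((i:ℤ)+1)) := by
  rw [Qp, Qp, Finset.prod_Icc_succ_top (by omega)]
  push_cast; ring_nf

lemma Pp_succ (i : ℕ) : Pp (i+1) = Pp i * (X - C ((i:ℤ)+1)) := by
  rw [Pp, Pp, Finset.prod_Icc_succ_top (by omega)]
  push_cast; ring_nf

lemma coeff_mul_XC (p : Polynomial ℤ) (a : ℤ) (k : ℕ) :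
    (p * (X + C a)).coeff (k+1) = p.coeff k + a * p.coeff (k+1) := by
  rw [mul_add, coeff_add, coeff_mul_X, mul_comm p (C a), coeff_C_mul]

lemma coeff_mul_XC0 (p : Polynomial ℤ) (a : ℤ) :
    (p * (X + C a)).coeff 0 = a * p.coeff 0 := by
  rw [mul_coeff_zero]; simp [mul_comm]

lemma coeff_mul_XCn (p : Polynomial ℤ) (a : ℤ) (k : ℕ) :
    (p * (X - C a)).coeff (k+1) = p.coeff k - a * p.coeff (k+1) := by
  rw [mul_sub, coeff_sub, coeff_mul_X, mul_comm p (C a), coeff_C_mul]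

lemma coeff_mul_XCn0 (p : Polynomial ℤ) (a : ℤ) :
    (p * (X - C a)).coeff 0 = -(a * p.coeff 0) := by
  rw [mul_coeff_zero]; simp [mul_comm]

lemma coeff_lin (q : Polynomial ℤ) (c : ℤ) (k : ℕ) :
    ((2*X + C c) * q).coeff (k+1) = 2 * q.coeff k + c * q.coeff (k+1) := by
  have h : (2*X + C c) * q = q * X + q * (X + C c) := by ring
  rw [h, coeff_add, coeff_mul_X, coeff_mul_XC]; ring

lemma coeff_lin0 (q : Polynomial ℤ) (c : ℤ) :
    ((2*X + C c) * q).coeff 0 = c * q.coeff 0 := by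
  have h : (2*X + C c) * q = q * X + q * (X + C c) := by ring
  rw [h, coeff_add, mul_coeff_zero, coeff_X_zero, mul_zero, coeff_mul_XC0, zero_add]

lemma Qp_facts (i : ℕ) : (∀ k ≤ i, 0 < (Qp i).coeff k) ∧ (Qp i).coeff i = 1 ∧
    (∀ k, i < k → (Qp i).coeff k = 0) := by
  induction i with
  | zero =>
    have h : Qp 0 = 1 := by simp [Qp]
    refine ⟨?_, ?_, ?_⟩ <;> simp [h]
    intro k hk; simp [coeff_one, Nat.pos_iff_ne_zero.mp hk]
  | succ i ih =>
    obtain ⟨hpos, htop, hhigh⟩ := ih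
    have hz : (Qp (i+1)).coeff 0 = ((i:ℤ)+1) * (Qp i).coeff 0 := by
      rw [Qp_succ, coeff_mul_XC0]
    have hs : ∀ k, (Qp (i+1)).coeff (k+1)
        = (Qp i).coeff k + ((i:ℤ)+1) * (Qp i).coeff (k+1) := by
      intro k; rw [Qp_succ, coeff_mul_XC]
    refine ⟨?_, ?_, ?_⟩
    · intro k hk
      match k with
      | 0 =>
        rw [hz]; have := hpos 0 (by omega); positivity
      | k+1 =>
        rw [hs]
        have h1 := hpos k (by omega)
        rcases Nat.lt_or_ge i (k+1) with h | h
        · rw [hhigh _ h]; simpa using h1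
        · have h2 := hpos (k+1) h
          have : (0:ℤ) < ((i:ℤ)+1) * (Qp i).coeff (k+1) := by positivity
          linarith
    · rw [hs, htop, hhigh _ (by omega)]; ring
    · intro k hk
      match k with
      | k+1 => rw [hs, hhigh _ (by omega), hhigh _ (by omega)]; ring

lemma Pp_coeff (i : ℕ) : ∀ k, (Pp i).coeff k = (-1)^(i+k) * (Qp i).coeff k := by
  induction i with
  | zero =>
    intro k
    have h1 : Pp 0 = 1 := by simp [Pp]
    have h2 : Qp 0 = 1 := by simp [Qp]
    rcases Nat.eq_zero_or_pos k with h | h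
    · simp [h, h1, h2]
    · simp [h1, h2, coeff_one, Nat.pos_iff_ne_zero.mp h]
  | succ i ih =>
    intro k
    match k with
    | 0 =>
      rw [Pp_succ, coeff_mul_XCn0, Qp_succ, coeff_mul_XC0, ih 0, pow_succ]
      ring
    | k+1 =>
      rw [Pp_succ, coeff_mul_XCn, Qp_succ, coeff_mul_XC, ih k, ih (k+1)]
      rw [show (i+1)+(k+1) = (i+k)+2 by omega, show i+(k+1) = (i+k)+1 by omega,
        pow_succ, pow_succ]
      ring

lemma Qp_one_c0 : (Qp 1).coeff 0 = 1 := by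
  rw [show (1:ℕ) = 0+1 from rfl, Qp_succ, coeff_mul_XC0]
  simp [Qp]

lemma Qp_one_c1 : (Qp 1).coeff 1 = 1 := by
  rw [show (1:ℕ) = 0+1 from rfl, Qp_succ, show (1:ℕ) = 0+1 from rfl, coeff_mul_XC]
  simp [Qp, coeff_one]

lemma Qp_two_c0 : (Qp 2).coeff 0 = 2 := by
  rw [show (2:ℕ) = 1+1 from rfl, Qp_succ, coeff_mul_XC0, Qp_one_c0]
  norm_num

lemma Qp_two_c1 : (Qp 2).coeff 1 = 3 := by
  rw [show (2:ℕ) = 1+1 from rfl, Qp_succ, show (1:ℕ) = 0+1 from rfl, coeff_mul_XC,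
    Qp_one_c0, Qp_one_c1]
  norm_num

open Polynomial in
theorem stmt_13 (A : ℕ → Polynomial ℤ)
    (hA2 : A 2 = X ^ 2 - 15 * X - 10)
    (hA : ∀ i : ℕ, 3 ≤ i →
      A i = (2 * X + C (i : ℤ)) * A (i - 1) - ∏ ℓ ∈ Finset.Icc 1 i, (X - C (ℓ : ℤ))) :
    ∀ i : ℕ, 2 ≤ i → ∀ k : ℕ, k < i → (A i).coeff k < 0 := by
  have key : ∀ i : ℕ, 2 ≤ i →
      (∀ k, i < k → (A i).coeff k = 0) ∧
      (A i).coeff i = 1 ∧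
      (A i).coeff (i-1) ≤ -((Qp i).coeff (i-1) + 3*(i:ℤ) + 6) ∧
      (∀ k, k + 1 < i → (A i).coeff k ≤ -(Qp i).coeff k ∧
        (Even (i + k) → (A i).coeff k ≤ -(2 * (Qp i).coeff k))) := by
    intro i hi
    induction i, hi using Nat.le_induction with
    | base =>
      have c0 : (A 2).coeff 0 = -10 := by rw [hA2]; simp
      have c1 : (A 2).coeff 1 = -15 := by rw [hA2]; simp
      have c2 : (A 2).coeff 2 = 1 := by rw [hA2]; simp [coeff_X]
      have q0 := Qp_two_c0
      have q1 := Qp_two_c1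
      refine ⟨?_, c2, ?_, ?_⟩
      · intro k hk
        obtain ⟨m, rfl⟩ : ∃ m, k = m + 1 := ⟨k-1, by omega⟩
        rw [hA2]
        simp [coeff_ofNat_mul, coeff_X, coeff_X_pow, coeff_ofNat_succ,
          show m+1 ≠ 2 by omega, show ¬ (1 = m+1) by omega, show m ≠ 0 by omega]
      · show (A 2).coeff 1 ≤ _
        rw [c1, q1]; norm_num
      · intro k hk
        have : k = 0 := by omega
        subst this
        rw [c0, q0]
        exact ⟨by norm_num, fun _ => by norm_num⟩
    | succ i hi ih =>
      obtain ⟨hhigh, htop, hdiag, hint⟩ := ih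
      obtain ⟨qpos, qtop, qhigh⟩ := Qp_facts i
      obtain ⟨qpos', qtop', qhigh'⟩ := Qp_facts (i+1)
      have hrec : A (i+1) = (2 * X + C ((i:ℤ)+1)) * A i - Pp (i+1) := by
        have h := hA (i+1) (by omega)
        rw [Nat.add_sub_cancel] at h
        rw [h, Pp]; push_cast; ring_nf
      have cA : ∀ k, (A (i+1)).coeff (k+1)
          = 2 * (A i).coeff k + ((i:ℤ)+1) * (A i).coeff (k+1) - (Pp (i+1)).coeff (k+1) := by
        intro k; rw [hrec, coeff_sub, coeff_lin]
      have cA0 : (A (i+1)).coeff 0 = ((i:ℤ)+1) * (A i).coeff 0 - (Pp (i+1)).coeff 0 := by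
        rw [hrec, coeff_sub, coeff_lin0]
      have cQ : ∀ k, (Qp (i+1)).coeff (k+1)
          = (Qp i).coeff k + ((i:ℤ)+1) * (Qp i).coeff (k+1) := by
        intro k; rw [Qp_succ, coeff_mul_XC]
      have cQ0 : (Qp (i+1)).coeff 0 = ((i:ℤ)+1) * (Qp i).coeff 0 := by
        rw [Qp_succ, coeff_mul_XC0]
      have hdiagw : (A i).coeff (i-1) ≤ -((Qp i).coeff (i-1)) := by
        have : (0:ℤ) ≤ 3*(i:ℤ) + 6 := by positivity
        linarith
      refine ⟨?_, ?_, ?_, ?_⟩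
      · -- high coefficients vanish
        intro k hk
        obtain ⟨m, rfl⟩ : ∃ m, k = m + 1 := ⟨k-1, by omega⟩
        rw [cA, hhigh m (by omega), hhigh (m+1) (by omega),
          Pp_coeff (i+1) (m+1), qhigh' (m+1) (by omega)]
        ring
      · -- top coefficient is 1
        have := cA i
        rw [htop, hhigh (i+1) (by omega), Pp_coeff (i+1) (i+1), qtop'] at this
        rw [this, show (i+1)+(i+1) = 2*(i+1) by ring, pow_mul]
        norm_num
      · -- diagonal
        obtain ⟨j, rfl⟩ : ∃ j, i = j + 2 := ⟨i-2, by omega⟩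
        rw [show j+2+1-1 = j+2 by omega]
        have e1 := cA (j+1)
        rw [show j+1+1 = j+2 from rfl] at e1
        have e2 : (Pp (j+2+1)).coeff (j+2) = -((Qp (j+2+1)).coeff (j+2)) := by
          rw [Pp_coeff (j+2+1) (j+2), show (j+2+1)+(j+2) = 2*(j+2)+1 by omega,
            pow_succ, pow_mul]
          norm_num
        have e3 := cQ (j+1)
        rw [show j+1+1 = j+2 from rfl, qtop, mul_one] at e3
        have hd := hdiag
        rw [show j+2-1 = j+1 by omega] at hd
        rw [e1, e2, e3, htop]
        push_cast at hd ⊢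
        linarith
      · -- interior
        intro k hk
        have hparity : Even ((i+1)+k) ↔ ¬ Even (i+k) := by
          rw [show (i+1)+k = (i+k)+1 by ring, Nat.even_add_one]
        match k with
        | 0 =>
          have h0w : (A i).coeff 0 ≤ -((Qp i).coeff 0) := (hint 0 (by omega)).1
          have q0pos : 0 < (Qp i).coeff 0 := qpos 0 (by omega)
          rcases Nat.even_or_odd i with he | ho
          · -- i even : child odd, weak goal; parent strong
            have h0s : (A i).coeff 0 ≤ -(2 * (Qp i).coeff 0) :=
              (hint 0 (by omega)).2 (by simpa using he)
            have hp0 : (Pp (i+1)).coeff 0 = -((Qp (i+1)).coeff 0) := by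
              rw [Pp_coeff (i+1) 0, Nat.add_zero, Odd.neg_one_pow (Even.add_one he)]
              ring
            constructor
            · rw [cA0, hp0, cQ0]
              nlinarith [q0pos, Int.natCast_nonneg i]
            · intro hev
              exfalso
              rw [Nat.add_zero] at hev
              exact (Nat.even_add_one.mp hev) he
          · -- i odd : child even, strong goal; parent weak
            have hp0 : (Pp (i+1)).coeff 0 = (Qp (i+1)).coeff 0 := by
              rw [Pp_coeff (i+1) 0, Nat.add_zero, Even.neg_one_pow (Odd.add_one ho)]
              ring
            have hgoal : (A (i+1)).coeff 0 ≤ -(2 * (Qp (i+1)).coeff 0) := by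
              rw [cA0, hp0, cQ0]
              nlinarith [q0pos, Int.natCast_nonneg i]
            have q0pos' : 0 < (Qp (i+1)).coeff 0 := qpos' 0 (by omega)
            exact ⟨by linarith, fun _ => hgoal⟩
        | m+1 =>
          -- 1 ≤ m+1, m+2 < i+1 so m ≤ i-2
          have hm : m + 2 ≤ i := by omega
          have q1pos : 0 < (Qp i).coeff m := qpos m (by omega)
          have q2pos : 0 < (Qp i).coeff (m+1) := qpos (m+1) (by omega)
          have qqpos : 0 < (Qp (i+1)).coeff (m+1) := qpos' (m+1) (by omega)
          have ha1w : (A i).coeff m ≤ -((Qp i).coeff m) := (hint m (by omega)).1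
          have ha2w : (A i).coeff (m+1) ≤ -((Qp i).coeff (m+1)) := by
            rcases Nat.lt_or_ge (m+2) i with h | h
            · exact (hint (m+1) (by omega)).1
            · -- m+1 = i-1 : diagonal
              have h2 : m + 1 = i - 1 := by omega
              rw [h2]; exact hdiagw
          have eA := cA m
          have eQ := cQ m
          rcases Nat.even_or_odd (i+m) with he | ho
          · -- i+m even: (i+1)+(m+1) even: strong goal, Pp coeff positive
            have hsgn : (Pp (i+1)).coeff (m+1) = (Qp (i+1)).coeff (m+1) := by
              rw [Pp_coeff (i+1) (m+1), show (i+1)+(m+1) = (i+m)+2 by ring,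
                Even.neg_one_pow (by obtain ⟨t, ht⟩ := he; exact ⟨t+1, by omega⟩)]
              ring
            have ha1s : (A i).coeff m ≤ -(2 * (Qp i).coeff m) :=
              (hint m (by omega)).2 he
            have hgoal : (A (i+1)).coeff (m+1) ≤ -(2 * (Qp (i+1)).coeff (m+1)) := by
              rw [eA, hsgn, eQ]
              nlinarith [Int.natCast_nonneg i]
            exact ⟨by linarith, fun _ => hgoal⟩
          · -- i+m odd: weak goal, Pp coeff negative; parent (m+1) strong
            have hsgn : (Pp (i+1)).coeff (m+1) = -((Qp (i+1)).coeff (m+1)) := by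
              rw [Pp_coeff (i+1) (m+1), show (i+1)+(m+1) = (i+m)+2 by ring,
                Odd.neg_one_pow (by obtain ⟨t, ht⟩ := ho; exact ⟨t+1, by omega⟩)]
              ring
            have hm2 : m + 2 < i := by
              rcases Nat.lt_or_ge (m+2) i with h | h
              · exact h
              · exfalso
                have : m + 2 = i := by omega
                have : Even (i + m) := ⟨m+1, by omega⟩
                exact (Nat.not_odd_iff_even.mpr this) ho
            have ha2s : (A i).coeff (m+1) ≤ -(2 * (Qp i).coeff (m+1)) := by
              refine (hint (m+1) (by omega)).2 ?_
              rw [show i+(m+1) = (i+m)+1 by ring]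
              exact Nat.even_add_one.mpr (Nat.not_even_iff_odd.mpr ho)
            constructor
            · rw [eA, hsgn, eQ]
              nlinarith [Int.natCast_nonneg i]
            · intro hev
              exfalso
              rw [show (i+1)+(m+1) = (i+m)+2 by ring] at hev
              have : Even (i+m) := by
                obtain ⟨t, ht⟩ := hev; exact ⟨t-1, by omega⟩
              exact (Nat.not_odd_iff_even.mpr this) ho
  intro i hi k hk
  obtain ⟨_, _, hdiag, hint⟩ := key i hi
  obtain ⟨qpos, -, -⟩ := Qp_facts i
  rcases Nat.lt_or_ge (k+1) i with h | h
  · have := (hint k h).1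
    have := qpos k (by omega)
    linarith
  · have hk1 : k = i - 1 := by omega
    subst hk1
    have := qpos (i-1) (by omega)
    have h3 : (0:ℤ) ≤ 3*(i:ℤ) + 6 := by positivity
    linarith
end

section
/- For every integer j ≥ 4 and every integer r with j ≤ r ≤ C(j+2, 2), we have ∑_{i=r−j}^{r} C(3r−1, i) > C(3r−1, r+1). -/
open Finset

/-- ratio fact: doubling below the middle -/
lemma fct1 (r k : ℕ) (hk : k + 1 ≤ r) :
    2 * (3 * r - 1).choose k ≤ (3 * r - 1).choose (k + 1) := by
  have h := Nat.choose_succ_right_eq (3 * r - 1) k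
  have h2 : 2 * (k + 1) ≤ 3 * r - 1 - k := by omega
  have h3 : 2 * (3 * r - 1).choose k * (k + 1) ≤ (3 * r - 1).choose (k + 1) * (k + 1) := by
    calc 2 * (3 * r - 1).choose k * (k + 1) = (3 * r - 1).choose k * (2 * (k + 1)) := by ring
      _ ≤ (3 * r - 1).choose k * (3 * r - 1 - k) := Nat.mul_le_mul_left _ h2
      _ = (3 * r - 1).choose (k + 1) * (k + 1) := h.symm
  exact Nat.le_of_mul_le_mul_right h3 (by omega)

/-- sharp ratio fact -/
lemma fct2 (r k : ℕ) (hk : k + 2 ≤ r) :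
    (2 * r + 1) * (3 * r - 1).choose k ≤ (r - 1) * (3 * r - 1).choose (k + 1) := by
  have h := Nat.choose_succ_right_eq (3 * r - 1) k
  have h2 : (2 * r + 1) * (k + 1) ≤ (3 * r - 1 - k) * (r - 1) := by
    have a1 : 2 * r + 1 ≤ 3 * r - 1 - k := by omega
    have a2 : k + 1 ≤ r - 1 := by omega
    exact Nat.mul_le_mul a1 a2
  have h3 : (2 * r + 1) * (3 * r - 1).choose k * (k + 1)
      ≤ (r - 1) * (3 * r - 1).choose (k + 1) * (k + 1) := by
    calc (2 * r + 1) * (3 * r - 1).choose k * (k + 1)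
        = (3 * r - 1).choose k * ((2 * r + 1) * (k + 1)) := by ring
      _ ≤ (3 * r - 1).choose k * ((3 * r - 1 - k) * (r - 1)) := Nat.mul_le_mul_left _ h2
      _ = ((3 * r - 1).choose k * (3 * r - 1 - k)) * (r - 1) := by ring
      _ = ((3 * r - 1).choose (k + 1) * (k + 1)) * (r - 1) := by rw [h]
      _ = (r - 1) * (3 * r - 1).choose (k + 1) * (k + 1) := by ring
  exact Nat.le_of_mul_le_mul_right h3 (by omega)

lemma sumlower (r : ℕ) : ∀ m, m + 1 ≤ r →
    ∑ k ∈ range (m + 1), (3 * r - 1).choose k ≤ 2 * (3 * r - 1).choose m := by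
  intro m
  induction m with
  | zero => intro _; simp
  | succ m ih =>
    intro hm
    rw [Finset.sum_range_succ]
    have h1 := ih (by omega)
    have h2 := fct1 r m (by omega)
    omega

lemma pow2fact (r : ℕ) : ∀ i m, m + i ≤ r →
    2 ^ i * (3 * r - 1).choose m ≤ (3 * r - 1).choose (m + i) := by
  intro i
  induction i with
  | zero => intro m _; simp
  | succ i ih =>
    intro m hm
    have h1 := ih m (by omega)
    have h2 := fct1 r (m + i) (by omega)
    calc 2 ^ (i + 1) * (3 * r - 1).choose m = 2 * (2 ^ i * (3 * r - 1).choose m) := by ring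
      _ ≤ 2 * (3 * r - 1).choose (m + i) := by omega
      _ ≤ (3 * r - 1).choose (m + i + 1) := h2
      _ = (3 * r - 1).choose (m + (i + 1)) := by rw [Nat.add_assoc]

/-- the telescoping identity -/
lemma identA (r : ℕ) (hr : 1 ≤ r) : ∀ m, m ≤ r →
    (m + 1) * (3 * r - 1).choose (m + 1)
      = ∑ k ∈ range (m + 1), (3 * r - 1 - 2 * k) * (3 * r - 1).choose k := by
  intro m
  induction m with
  | zero =>
    intro _
    simp [Nat.choose_one_right]
  | succ m ih =>
    intro hm
    rw [Finset.sum_range_succ, ← ih (by omega)]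
    have h := Nat.choose_succ_right_eq (3 * r - 1) (m + 1)
    have he : 3 * r - 1 - (m + 1) = (m + 1) + (3 * r - 1 - 2 * (m + 1)) := by omega
    rw [he] at h
    have key : (m + 1 + 1) * (3 * r - 1).choose (m + 1 + 1)
        = (m + 1) * (3 * r - 1).choose (m + 1)
          + (3 * r - 1 - 2 * (m + 1)) * (3 * r - 1).choose (m + 1) := by
      calc (m + 1 + 1) * (3 * r - 1).choose (m + 1 + 1)
          = (3 * r - 1).choose (m + 1 + 1) * (m + 1 + 1) := by ring
        _ = (3 * r - 1).choose (m + 1) * ((m + 1) + (3 * r - 1 - 2 * (m + 1))) := h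
        _ = (m + 1) * (3 * r - 1).choose (m + 1)
            + (3 * r - 1 - 2 * (m + 1)) * (3 * r - 1).choose (m + 1) := by ring
    omega

/-- the main weighted-sum bound -/
lemma mainE (r : ℕ) : ∀ t, t + 2 ≤ r →
    (r + 2) ^ 2 * ∑ s ∈ range (t + 1), (r - 1 - s) * (3 * r - 1).choose s
      ≤ (2 * r + 1) * ((r + 2) * (r - 1 - t) + (r - 1)) * (3 * r - 1).choose t := by
  intro t
  induction t with
  | zero =>
    intro hr
    obtain ⟨e, rfl⟩ : ∃ e, r = e + 2 := ⟨r - 2, by omega⟩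
    have hs : ∑ s ∈ range (0 + 1), (e + 2 - 1 - s) * (3 * (e + 2) - 1).choose s = e + 1 := by
      simp only [zero_add, Finset.sum_range_one, Nat.choose_zero_right, Nat.mul_one, mul_one]
      omega
    rw [hs]
    have h2 : e + 2 - 1 = e + 1 := by omega
    rw [h2]
    simp only [Nat.sub_zero, Nat.choose_zero_right, mul_one]
    nlinarith [Nat.zero_le e]
  | succ t ih =>
    intro hr
    have ih' := ih (by omega)
    have hf := fct2 r t (by omega)
    obtain ⟨a, ha⟩ : ∃ a, r = t + 3 + a := ⟨r - t - 3, by omega⟩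
    have e1 : r - 1 - (t + 1) = a + 1 := by omega
    have e2 : r - 1 - t = a + 2 := by omega
    rw [e2] at ih'
    rw [Finset.sum_range_succ, e1]
    set x := (3 * r - 1).choose t with hx
    set y := (3 * r - 1).choose (t + 1) with hy
    have key : ((r + 2) * (a + 2) + (r - 1)) * ((r - 1) * y) + (r + 2) ^ 2 * ((a + 1) * y)
        = (2 * r + 1) * ((r + 2) * (a + 1) + (r - 1)) * y := by
      obtain ⟨b, hb⟩ : ∃ b, r = b + 1 := ⟨r - 1, by omega⟩
      rw [hb]
      simp only [Nat.add_sub_cancel]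
      ring
    calc (r + 2) ^ 2 * (∑ s ∈ range (t + 1), (r - 1 - s) * (3 * r - 1).choose s + (a + 1) * y)
        = (r + 2) ^ 2 * ∑ s ∈ range (t + 1), (r - 1 - s) * (3 * r - 1).choose s
          + (r + 2) ^ 2 * ((a + 1) * y) := by ring
      _ ≤ (2 * r + 1) * ((r + 2) * (a + 2) + (r - 1)) * x + (r + 2) ^ 2 * ((a + 1) * y) := by
          omega
      _ = ((r + 2) * (a + 2) + (r - 1)) * ((2 * r + 1) * x) + (r + 2) ^ 2 * ((a + 1) * y) := by
          ring
      _ ≤ ((r + 2) * (a + 2) + (r - 1)) * ((r - 1) * y) + (r + 2) ^ 2 * ((a + 1) * y) := by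
          have := Nat.mul_le_mul_left ((r + 2) * (a + 2) + (r - 1)) hf
          omega
      _ = (2 * r + 1) * ((r + 2) * (a + 1) + (r - 1)) * y := key

lemma growth : ∀ m : ℕ, ((m + 9) * (m + 10) + 4) ^ 2 < 36 * 2 ^ (m + 8) := by
  intro m
  induction m with
  | zero => norm_num
  | succ m ih =>
    have key : ((m + 10) * (m + 11) + 4) ^ 2 ≤ 2 * ((m + 9) * (m + 10) + 4) ^ 2 := by
      nlinarith [sq_nonneg m, sq_nonneg (m + 1), Nat.zero_le m]
    calc ((m + 1 + 9) * (m + 1 + 10) + 4) ^ 2 = ((m + 10) * (m + 11) + 4) ^ 2 := by ring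
      _ ≤ 2 * ((m + 9) * (m + 10) + 4) ^ 2 := key
      _ < 2 * (36 * 2 ^ (m + 8)) := by omega
      _ = 36 * 2 ^ (m + 1 + 8) := by ring

theorem stmt_14 (j r : ℕ) (hj : 4 ≤ j) (hjr : j ≤ r) (hr : r ≤ (j + 2).choose 2) :
    (3 * r - 1).choose (r + 1) < ∑ i ∈ Finset.Icc (r - j) r, (3 * r - 1).choose i := by
  rcases lt_or_ge j 8 with hj8 | hj8
  · interval_cases j <;> norm_num [Nat.choose] at hr <;> interval_cases r <;>
      (simp only [Nat.choose_eq_descFactorial_div_factorial]; decide)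
  · -- analytic branch, j ≥ 8
    have hr8 : 8 ≤ r := le_trans hj8 hjr
    have hrb : 2 * r ≤ (j + 1) * (j + 2) := by
      rw [Nat.choose_two_right] at hr
      have h1 : (j + 2) * (j + 2 - 1) = (j + 2) * (j + 1) := by
        congr 1
      have h3 : 2 * r ≤ 2 * ((j + 2) * (j + 2 - 1) / 2) := by omega
      calc 2 * r ≤ 2 * ((j + 2) * (j + 2 - 1) / 2) := h3
        _ = (j + 2) * (j + 2 - 1) / 2 * 2 := by ring
        _ ≤ (j + 2) * (j + 2 - 1) := Nat.div_mul_le_self _ _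
        _ = (j + 1) * (j + 2) := by rw [h1]; ring
    have h9 : (r + 2) ^ 2 < 9 * 2 ^ j := by
      obtain ⟨m, rfl⟩ : ∃ m, j = m + 8 := ⟨j - 8, by omega⟩
      have hg := growth m
      have hrb2 : 2 * r ≤ (m + 9) * (m + 10) := by
        have : (m + 8 + 1) * (m + 8 + 2) = (m + 9) * (m + 10) := by ring
        omega
      have h4 : (2 * (r + 2)) ^ 2 ≤ ((m + 9) * (m + 10) + 4) ^ 2 := by
        apply Nat.pow_le_pow_left
        omega
      have h5 : (2 * (r + 2)) ^ 2 = 4 * (r + 2) ^ 2 := by ring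
      omega
    -- reduce to the multiplied form
    apply Nat.lt_of_mul_lt_mul_left (a := r + 1)
    rw [identA r (by omega) r (le_refl r)]
    set n := 3 * r - 1 with hn
    set C := n.choose with hC
    -- split the range sum
    have hsplit : ∑ k ∈ range (r + 1), (n - 2 * k) * C k
        = ∑ k ∈ range (r - j), (n - 2 * k) * C k
          + ∑ k ∈ Icc (r - j) r, (n - 2 * k) * C k := by
      simp only [Finset.range_eq_Ico]; rw [← Finset.Ico_add_one_right_eq_Icc]
      exact (Finset.sum_Ico_consecutive _ (Nat.zero_le _) (by omega)).symm
    -- rewrite the Icc part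
    have hIcc : ∑ k ∈ Icc (r - j) r, (n - 2 * k) * C k + 2 * C r
        = (r + 1) * ∑ k ∈ Icc (r - j) r, C k
          + ∑ k ∈ Ico (r - j) r, 2 * (r - 1 - k) * C k := by
      rw [← Finset.Ico_add_one_right_eq_Icc, Finset.sum_Ico_succ_top (by omega : r - j ≤ r),
        Finset.mul_sum, Finset.sum_Ico_succ_top (by omega : r - j ≤ r)]
      have hcong : ∑ k ∈ Ico (r - j) r, (n - 2 * k) * C k
          = ∑ k ∈ Ico (r - j) r, ((r + 1) * C k + 2 * (r - 1 - k) * C k) := by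
        apply Finset.sum_congr rfl
        intro k hk
        rw [Finset.mem_Ico] at hk
        have hco : n - 2 * k = (r + 1) + 2 * (r - 1 - k) := by omega
        rw [hco, Nat.add_mul]
      rw [hcong, Finset.sum_add_distrib]
      have h1 : n - 2 * r = r - 1 := by omega
      have h2 : (r - 1) * C r + 2 * C r = (r + 1) * C r := by
        have h3 : (r - 1) + 2 = r + 1 := by omega
        rw [← Nat.add_mul, h3]
      rw [h1]
      omega
    -- rewrite the low part
    have hX : ∑ k ∈ range (r - j), (n - 2 * k) * C k
        = ∑ k ∈ range (r - j), 2 * (r - 1 - k) * C k + (r + 1) * ∑ k ∈ range (r - j), C k := by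
      rw [Finset.mul_sum, ← Finset.sum_add_distrib]
      apply Finset.sum_congr rfl
      intro k hk
      rw [Finset.mem_range] at hk
      have hco : n - 2 * k = (r + 1) + 2 * (r - 1 - k) := by omega
      rw [hco, Nat.add_mul]
      omega
    -- combine low and mid weighted sums
    have hZX : ∑ k ∈ range (r - j), 2 * (r - 1 - k) * C k
          + ∑ k ∈ Ico (r - j) r, 2 * (r - 1 - k) * C k
        = ∑ k ∈ range r, 2 * (r - 1 - k) * C k := by
      simp only [Finset.range_eq_Ico]
      exact Finset.sum_Ico_consecutive _ (Nat.zero_le _) (by omega)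
    -- main bound on SA
    have hSA : 2 * (r + 2) ^ 2 * ∑ s ∈ range r, (r - 1 - s) * C s
        ≤ (2 * r + 1) * (r - 1) * C r := by
      have hEr : (r + 2) ^ 2 * ∑ s ∈ range (r - 2 + 1), (r - 1 - s) * C s
          ≤ (2 * r + 1) * ((r + 2) * (r - 1 - (r - 2)) + (r - 1)) * C (r - 2) :=
        mainE r (r - 2) (by omega)
      have e1 : r - 1 - (r - 2) = 1 := by omega
      rw [e1, Nat.mul_one] at hEr
      have hsum : ∑ s ∈ range r, (r - 1 - s) * C s
          = ∑ s ∈ range (r - 2 + 1), (r - 1 - s) * C s := by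
        have hre : range r = range ((r - 2 + 1) + 1) := by congr 1; omega
        rw [hre, Finset.sum_range_succ]
        have h0 : r - 1 - (r - 2 + 1) = 0 := by omega
        rw [h0, Nat.zero_mul, Nat.add_zero]
      rw [hsum]
      have hf2 : (2 * r + 1) * C (r - 2) ≤ (r - 1) * C (r - 2 + 1) := fct2 r (r - 2) (by omega)
      have e3 : r - 2 + 1 = r - 1 := by omega
      rw [e3] at hf2
      have hf1 : 2 * C (r - 1) ≤ C (r - 1 + 1) := fct1 r (r - 1) (by omega)
      have e4 : r - 1 + 1 = r := by omega
      rw [e4] at hf1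
      calc 2 * (r + 2) ^ 2 * ∑ s ∈ range (r - 2 + 1), (r - 1 - s) * C s
          = 2 * ((r + 2) ^ 2 * ∑ s ∈ range (r - 2 + 1), (r - 1 - s) * C s) := by ring
        _ ≤ 2 * ((2 * r + 1) * ((r + 2) + (r - 1)) * C (r - 2)) :=
            Nat.mul_le_mul_left 2 hEr
        _ = ((r + 2) + (r - 1)) * (2 * ((2 * r + 1) * C (r - 2))) := by ring
        _ ≤ ((r + 2) + (r - 1)) * (2 * ((r - 1) * C (r - 1))) := by
            have := Nat.mul_le_mul_left 2 hf2
            exact Nat.mul_le_mul_left _ (by omega)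
        _ = ((r + 2) + (r - 1)) * (r - 1) * (2 * C (r - 1)) := by ring
        _ ≤ ((r + 2) + (r - 1)) * (r - 1) * C r := Nat.mul_le_mul_left _ hf1
        _ = (2 * r + 1) * (r - 1) * C r := by
            have h5 : (r + 2) + (r - 1) = 2 * r + 1 := by omega
            rw [h5]
    -- bound on SB
    have hSB : 2 ^ j * ∑ k ∈ range (r - j), C k ≤ C r := by
      rcases Nat.eq_zero_or_pos (r - j) with h0 | hpos
      · rw [h0]
        simp
      · have e5 : r - j = (r - j - 1) + 1 := by omega
        have h1 : ∑ k ∈ range (r - j), C k ≤ 2 * C (r - j - 1) := by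
          rw [e5]; exact sumlower r (r - j - 1) (by omega)
        have h2 : 2 ^ (j + 1) * C (r - j - 1) ≤ C ((r - j - 1) + (j + 1)) :=
          pow2fact r (j + 1) (r - j - 1) (by omega)
        have e6 : (r - j - 1) + (j + 1) = r := by omega
        rw [e6] at h2
        calc 2 ^ j * ∑ k ∈ range (r - j), C k ≤ 2 ^ j * (2 * C (r - j - 1)) :=
              Nat.mul_le_mul_left _ h1
          _ = 2 ^ (j + 1) * C (r - j - 1) := by ring
          _ ≤ C r := h2
    have hCpos : 0 < C r := Nat.choose_pos (by omega)
    -- key inequality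
    have hkey : ∑ k ∈ range r, 2 * (r - 1 - k) * C k
        + (r + 1) * ∑ k ∈ range (r - j), C k < 2 * C r := by
      set S1 := ∑ s ∈ range r, (r - 1 - s) * C s with hS1
      set SB := ∑ k ∈ range (r - j), C k with hSB'
      have hS2 : ∑ k ∈ range r, 2 * (r - 1 - k) * C k = 2 * S1 := by
        rw [hS1, Finset.mul_sum]
        apply Finset.sum_congr rfl
        intro k _
        ring
      rw [hS2]
      apply Nat.lt_of_mul_lt_mul_left (a := 2 ^ j * (r + 2) ^ 2)
      have b1 : 2 ^ j * (r + 2) ^ 2 * (2 * S1) ≤ 2 ^ j * ((2 * r + 1) * (r - 1) * C r) := by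
        calc 2 ^ j * (r + 2) ^ 2 * (2 * S1) = 2 ^ j * (2 * (r + 2) ^ 2 * S1) := by ring
          _ ≤ 2 ^ j * ((2 * r + 1) * (r - 1) * C r) := Nat.mul_le_mul_left _ hSA
      have b2 : 2 ^ j * (r + 2) ^ 2 * ((r + 1) * SB) ≤ (r + 2) ^ 2 * (r + 1) * C r := by
        calc 2 ^ j * (r + 2) ^ 2 * ((r + 1) * SB)
            = (r + 2) ^ 2 * (r + 1) * (2 ^ j * SB) := by ring
          _ ≤ (r + 2) ^ 2 * (r + 1) * C r := Nat.mul_le_mul_left _ hSB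
      have b3 : 2 ^ j * ((2 * r + 1) * (r - 1) * C r) + (r + 2) ^ 2 * (r + 1) * C r
          < 2 ^ j * (r + 2) ^ 2 * (2 * C r) := by
        obtain ⟨e, rfl⟩ : ∃ e, r = e + 1 := ⟨r - 1, by omega⟩
        simp only [Nat.add_sub_cancel]
        have h9' : (e + 3) ^ 2 < 9 * 2 ^ j := by
          have : (e + 1 + 2) ^ 2 = (e + 3) ^ 2 := by ring
          omega
        have step : (e + 3) ^ 2 * (e + 2) * C (e + 1)
            < 9 * 2 ^ j * (e + 2) * C (e + 1) := by
          apply (Nat.mul_lt_mul_right hCpos).mpr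
          exact (Nat.mul_lt_mul_right (by omega)).mpr h9'
        nlinarith [step]
      calc 2 ^ j * (r + 2) ^ 2 * (2 * S1 + (r + 1) * SB)
          = 2 ^ j * (r + 2) ^ 2 * (2 * S1) + 2 ^ j * (r + 2) ^ 2 * ((r + 1) * SB) := by ring
        _ ≤ 2 ^ j * ((2 * r + 1) * (r - 1) * C r) + (r + 2) ^ 2 * (r + 1) * C r := by omega
        _ < 2 ^ j * (r + 2) ^ 2 * (2 * C r) := b3
    omega
end

section
/- For every integer m ≥ 2, the sequence f_m(r) is strictly decreasing for ⌊m/3⌋+1 ≤ r ≤ m: f_m(⌊m/3⌋+1) > f_m(⌊m/3⌋+2) > ⋯ > f_m(m) = 1. -/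
open Finset Filter

private noncomputable def SS (m r : ℕ) : ℝ := ∑ i ∈ Finset.range (r+1), (m.choose i : ℝ)

private noncomputable def DD (k : ℕ) : ℝ := ((3*k+2).choose (k+2) : ℝ)

private noncomputable def bb (k : ℕ) : ℝ := SS (3*k+2) (k+1) - DD k

private noncomputable def gg (k : ℕ) : ℝ := 30 * DD k / ((2*(k:ℝ)+1)*((k:ℝ)+3))

private lemma hr1 (k : ℕ) : DD k * ((k:ℝ)+2) = ((3*k+2).choose (k+1) : ℝ) * (2*(k:ℝ)+1) := by
  have h := Nat.choose_succ_right_eq (3*k+2) (k+1)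
  rw [show 3*k+2 - (k+1) = 2*k+1 from by omega] at h
  have h' : (3*k+2).choose (k+2) * (k+2) = (3*k+2).choose (k+1) * (2*k+1) := h
  unfold DD; exact_mod_cast h'

private lemma hr2 (k : ℕ) : ((3*k+3).choose (k+1) : ℝ) * (2*(k:ℝ)+2) = ((3*k+2).choose (k+1) : ℝ) * (3*(k:ℝ)+3) := by
  have h := Nat.choose_mul_succ_eq (3*k+2) (k+1)
  rw [show 3*k+2+1 - (k+1) = 2*k+2 from by omega] at h
  have h' : (3*k+3).choose (k+1) * (2*k+2) = (3*k+2).choose (k+1) * (3*k+3) := h.symm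
  exact_mod_cast h'

private lemma hr3 (k : ℕ) : ((3*k+3).choose (k+2) : ℝ) * (2*(k:ℝ)+1) = DD k * (3*(k:ℝ)+3) := by
  have h := Nat.choose_mul_succ_eq (3*k+2) (k+2)
  rw [show 3*k+2+1 - (k+2) = 2*k+1 from by omega] at h
  have h' : (3*k+3).choose (k+2) * (2*k+1) = (3*k+2).choose (k+2) * (3*k+3) := h.symm
  unfold DD; exact_mod_cast h'

private lemma hr4 (k : ℕ) : ((3*k+4).choose (k+2) : ℝ) * (2*(k:ℝ)+2) = ((3*k+3).choose (k+2) : ℝ) * (3*(k:ℝ)+4) := by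
  have h := Nat.choose_mul_succ_eq (3*k+3) (k+2)
  rw [show 3*k+3+1 - (k+2) = 2*k+2 from by omega] at h
  have h' : (3*k+4).choose (k+2) * (2*k+2) = (3*k+3).choose (k+2) * (3*k+4) := h.symm
  exact_mod_cast h'

private lemma hr5 (k : ℕ) : ((3*k+5).choose (k+3) : ℝ) * ((k:ℝ)+3) = ((3*k+4).choose (k+2) : ℝ) * (3*(k:ℝ)+5) := by
  have h := Nat.add_one_mul_choose_eq (3*k+4) (k+2)
  have h' : (3*k+5).choose (k+3) * (k+3) = (3*k+4).choose (k+2) * (3*k+5) :=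
    h.symm.trans (Nat.mul_comm _ _)
  exact_mod_cast h'

private lemma hr6 (k : ℕ) : ((3*k+4).choose (k+3) : ℝ) * ((k:ℝ)+3) = ((3*k+3).choose (k+2) : ℝ) * (3*(k:ℝ)+4) := by
  have h := Nat.add_one_mul_choose_eq (3*k+3) (k+2)
  have h' : (3*k+4).choose (k+3) * (k+3) = (3*k+3).choose (k+2) * (3*k+4) :=
    h.symm.trans (Nat.mul_comm _ _)
  exact_mod_cast h'

private lemma SS_succ (m r : ℕ) : SS m (r+1) = SS m r + (m.choose (r+1) : ℝ) :=
  Finset.sum_range_succ _ _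

private lemma SS_pascal (m r : ℕ) : SS (m+1) (r+1) = SS m (r+1) + SS m r := by
  induction r with
  | zero =>
      simp [SS, Finset.sum_range_succ]; ring
  | succ n ih =>
      have h : ((m+1).choose (n+2) : ℝ) = (m.choose (n+1) : ℝ) + (m.choose (n+2) : ℝ) := by
        exact_mod_cast Nat.choose_succ_succ m (n+1)
      rw [SS_succ (m+1) (n+1), ih]
      rw [show SS m (n+1+1) = SS m (n+1) + (m.choose (n+2) : ℝ) from SS_succ m (n+1)]
      simp only [show n+1+1 = n+2 from rfl]
      linarith [h, SS_succ m n]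

private lemma sumid_a (m r : ℕ) : SS (m+1) (r+1) = (m.choose (r+1) : ℝ) + 2 * SS m r := by
  rw [SS_pascal, SS_succ]; ring

private lemma sumid_b (m r : ℕ) : SS (m+1) (r+1) = 2 * SS m (r+1) - (m.choose (r+1) : ℝ) := by
  rw [SS_pascal, SS_succ]; ring

private lemma MR (k : ℕ) : bb (k+1) = 8 * bb k - gg k := by
  have hA := sumid_b (3*k+2) k
  have hB := sumid_b (3*k+3) k
  have hC := sumid_a (3*k+4) (k+1)
  simp only [show 3*k+2+1 = 3*k+3 from rfl, show 3*k+3+1 = 3*k+4 from rfl,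
    show 3*k+4+1 = 3*k+5 from rfl, show k+1+1 = k+2 from rfl] at hA hB hC
  have h1 := hr1 k
  have h2 := hr2 k
  have h3 := hr3 k
  have h4 := hr4 k
  have h5 := hr5 k
  simp only [bb, gg, DD, show 3*(k+1)+2 = 3*k+5 from by ring,
    show (k+1)+1 = k+2 from rfl, show (k+1)+2 = k+3 from rfl] at *
  set d := ((3*k+2).choose (k+2) : ℝ) with hd
  set c1 := ((3*k+2).choose (k+1) : ℝ) with hc1
  set c2 := ((3*k+3).choose (k+1) : ℝ) with hc2
  set c3 := ((3*k+3).choose (k+2) : ℝ) with hc3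
  set c4 := ((3*k+4).choose (k+2) : ℝ) with hc4
  set c5 := ((3*k+5).choose (k+3) : ℝ) with hc5
  have h2' : c2 * ((2*(k:ℝ)+1)*(2*(k:ℝ)+2)) = c1 * ((3*(k:ℝ)+3)*(2*(k:ℝ)+1)) := by
    linear_combination (2*(k:ℝ)+1) * h2
  have h4' : c4 * ((2*(k:ℝ)+1)*(2*(k:ℝ)+2)) = d * ((3*(k:ℝ)+3)*(3*(k:ℝ)+4)) := by
    linear_combination (2*(k:ℝ)+1) * h4 + (3*(k:ℝ)+4) * h3
  have h5' : c5 * ((2*(k:ℝ)+1)*(2*(k:ℝ)+2)*((k:ℝ)+3)) = d * ((3*(k:ℝ)+3)*(3*(k:ℝ)+4)*(3*(k:ℝ)+5)) := by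
    linear_combination ((2*(k:ℝ)+1)*(2*(k:ℝ)+2)) * h5 + (3*(k:ℝ)+5) * h4'
  have PID2 : (8*d - 4*c1 - 2*c2 + c4 - c5) * ((2*(k:ℝ)+1)*(2*(k:ℝ)+2)*((k:ℝ)+3))
      = -30*d*(2*(k:ℝ)+2) := by
    linear_combination (4*(2*(k:ℝ)+2)*((k:ℝ)+3) + 2*((k:ℝ)+3)*(3*(k:ℝ)+3)) * h1
      + (-2*((k:ℝ)+3)) * h2' + ((k:ℝ)+3) * h4' + (-1) * h5'
  have hX : ((2*(k:ℝ)+1)*((k:ℝ)+3)) ≠ 0 := by positivity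
  have hdiv : 30*d/((2*(k:ℝ)+1)*((k:ℝ)+3)) = -(8*d - 4*c1 - 2*c2 + c4 - c5) := by
    rw [div_eq_iff hX]
    have h22 : (2*(k:ℝ)+2) ≠ 0 := by positivity
    apply mul_left_cancel₀ h22
    linear_combination PID2
  rw [hC, hB, hA, hdiv]
  ring

private lemma ggpos (k : ℕ) : 0 < gg k := by
  have h : (0:ℝ) < ((3*k+2).choose (k+2):ℝ) := by
    exact_mod_cast Nat.choose_pos (by omega : k+2 ≤ 3*k+2)
  unfold gg DD
  apply div_pos (by linarith) (by positivity)

private lemma D7 (k : ℕ) (hk : 1 ≤ k) : DD (k+1) ≤ 7 * DD k := by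
  have h3 := hr3 k
  have h4 := hr4 k
  have h5 := hr5 k
  simp only [DD, show 3*(k+1)+2 = 3*k+5 from by ring, show (k+1)+2 = k+3 from rfl] at *
  set d := ((3*k+2).choose (k+2) : ℝ) with hd
  set c3 := ((3*k+3).choose (k+2) : ℝ) with hc3
  set c4 := ((3*k+4).choose (k+2) : ℝ) with hc4
  set c5 := ((3*k+5).choose (k+3) : ℝ) with hc5
  have hd0 : (0:ℝ) ≤ d := Nat.cast_nonneg _
  have h4' : c4 * ((2*(k:ℝ)+1)*(2*(k:ℝ)+2)) = d * ((3*(k:ℝ)+3)*(3*(k:ℝ)+4)) := by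
    linear_combination (2*(k:ℝ)+1) * h4 + (3*(k:ℝ)+4) * h3
  have h5' : c5 * ((2*(k:ℝ)+1)*(2*(k:ℝ)+2)*((k:ℝ)+3)) = d * ((3*(k:ℝ)+3)*(3*(k:ℝ)+4)*(3*(k:ℝ)+5)) := by
    linear_combination ((2*(k:ℝ)+1)*(2*(k:ℝ)+2)) * h5 + (3*(k:ℝ)+5) * h4'
  have hk1 : (1:ℝ) ≤ (k:ℝ) := by exact_mod_cast hk
  have hf : (0:ℝ) ≤ ((k:ℝ)-1)*(((k:ℝ)+1)*((k:ℝ)+18)) :=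
    mul_nonneg (by linarith) (by positivity)
  have hcube : (3*(k:ℝ)+3)*(3*(k:ℝ)+4)*(3*(k:ℝ)+5)
      ≤ 7*((2*(k:ℝ)+1)*(2*(k:ℝ)+2)*((k:ℝ)+3)) := by nlinarith [hf]
  have hW : (0:ℝ) < (2*(k:ℝ)+1)*(2*(k:ℝ)+2)*((k:ℝ)+3) := by positivity
  have hmul : c5 * ((2*(k:ℝ)+1)*(2*(k:ℝ)+2)*((k:ℝ)+3))
      ≤ (7*d) * ((2*(k:ℝ)+1)*(2*(k:ℝ)+2)*((k:ℝ)+3)) := by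
    nlinarith [h5', mul_le_mul_of_nonneg_left hcube hd0]
  exact le_of_mul_le_mul_right hmul hW

private lemma claimN : ∀ (N k : ℕ), 1 ≤ k → gg k / 8 - (7/8:ℝ)^N * DD k ≤ bb k := by
  intro N
  induction N with
  | zero =>
      intro k hk
      have hs : ((3*k+2).choose (k+1):ℝ) ≤ SS (3*k+2) (k+1) := by
        unfold SS
        exact Finset.single_le_sum (f := fun i => ((3*k+2).choose i : ℝ))
          (fun i _ => by positivity) (Finset.self_mem_range_succ (k+1))
      have h1 := hr1 k
      have hd0 : (0:ℝ) ≤ DD k := Nat.cast_nonneg _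
      have hk0 : (0:ℝ) ≤ (k:ℝ) := Nat.cast_nonneg k
      have hXpos : (0:ℝ) < (2*(k:ℝ)+1)*((k:ℝ)+3) := by positivity
      have hc1gg : gg k / 8 ≤ ((3*k+2).choose (k+1):ℝ) := by
        rw [div_le_iff₀ (by norm_num : (0:ℝ) < 8)]
        unfold gg
        rw [div_le_iff₀ hXpos]
        nlinarith [h1, hd0, hk0, mul_nonneg (mul_nonneg hk0 hk0) hd0, mul_nonneg hk0 hd0]
      simp only [pow_zero, one_mul, bb]
      linarith
  | succ N ih =>
      intro k hk
      have hMR := MR k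
      have hIH := ih (k+1) (by omega)
      have hD7 := D7 k hk
      have hgg1 : 0 < gg (k+1) := ggpos (k+1)
      have ht0 : (0:ℝ) ≤ (7/8:ℝ)^N := by positivity
      have hprod : (7/8:ℝ)^N * DD (k+1) ≤ (7/8:ℝ)^N * (7*DD k) :=
        mul_le_mul_of_nonneg_left hD7 ht0
      have hbk : bb k = (bb (k+1) + gg k)/8 := by rw [hMR]; ring
      rw [hbk, pow_succ]
      linarith

private lemma b_pos (k : ℕ) : 0 < bb k := by
  rcases Nat.eq_zero_or_pos k with rfl | hk
  · norm_num [bb, SS, DD, Finset.sum_range_succ, Nat.choose]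
  · have hlim : Filter.Tendsto (fun N => (7/8:ℝ)^N) Filter.atTop (nhds 0) :=
      tendsto_pow_atTop_nhds_zero_of_lt_one (by norm_num) (by norm_num)
    have hlim2 : Filter.Tendsto (fun N => gg k/8 - (7/8:ℝ)^N * DD k) Filter.atTop
        (nhds (gg k/8 - 0 * DD k)) :=
      Filter.Tendsto.sub tendsto_const_nhds (hlim.mul_const _)
    have hle := le_of_tendsto hlim2
      (Filter.Eventually.of_forall (fun N => claimN N k hk))
    have := ggpos k
    linarith

private lemma b_pos' (k : ℕ) : ((3*k+2).choose (k+2) : ℝ) < SS (3*k+2) (k+1) := by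
  have := b_pos k
  simp only [bb, DD] at this
  linarith

private lemma key : ∀ m r : ℕ, m+1 ≤ 3*r → r < m → (m.choose (r+1) : ℝ) < SS m r := by
  intro m
  induction m using Nat.strong_induction_on with
  | _ m ih =>
    intro r h1 h2
    by_cases hcase : m+3 ≤ 3*r
    · -- interior case
      obtain ⟨m', rfl⟩ : ∃ m', m = m'+1 := ⟨m-1, by omega⟩
      obtain ⟨r', rfl⟩ : ∃ r', r = r'+1 := ⟨r-1, by omega⟩
      have hih : (m'.choose (r'+1) : ℝ) < SS m' r' := ih m' (by omega) r' (by omega) (by omega)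
      have hs := sumid_a m' r'
      -- ratio bound: C(m', r'+2) ≤ 2 C(m', r'+1)
      have hrat : ((m').choose (r'+2) : ℝ) ≤ 2*((m').choose (r'+1) : ℝ) := by
        rcases le_or_gt (r'+2) m' with hle | hlt
        · have h := Nat.choose_succ_right_eq m' (r'+1)
          have hnat : m'.choose (r'+2) * (r'+2) ≤ (2*m'.choose (r'+1)) * (r'+2) := by
            have hb : m' - (r'+1) ≤ 2*(r'+2) := by omega
            calc m'.choose (r'+2) * (r'+2) = m'.choose (r'+1) * (m' - (r'+1)) := h
              _ ≤ m'.choose (r'+1) * (2*(r'+2)) := Nat.mul_le_mul_left _ hb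
              _ = (2*m'.choose (r'+1)) * (r'+2) := by ring
          have := Nat.le_of_mul_le_mul_right hnat (by omega : 0 < r'+2)
          exact_mod_cast this
        · have : m'.choose (r'+2) = 0 := Nat.choose_eq_zero_of_lt hlt
          rw [this]
          have : (0:ℝ) ≤ ((m').choose (r'+1) : ℝ) := Nat.cast_nonneg _
          push_cast
          linarith
      have hp : ((m'+1).choose (r'+2) : ℝ) = (m'.choose (r'+1):ℝ) + (m'.choose (r'+2):ℝ) := by
        exact_mod_cast Nat.choose_succ_succ m' (r'+1)
      rw [show r'+1+1 = r'+2 from rfl, hp, hs]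
      linarith
    · have hbd : 3*r = m+1 ∨ 3*r = m+2 := by omega
      rcases hbd with h | h
      · -- m = 3k+2, r = k+1
        obtain ⟨k, rfl, rfl⟩ : ∃ k, m = 3*k+2 ∧ r = k+1 := ⟨r-1, by omega, by omega⟩
        have := b_pos' k
        simpa using this
      · -- m = 3k+4, r = k+2 (with the small case m = 4 separate)
        rcases Nat.eq_zero_or_pos (r-2) with hr2 | hr2
        · -- r = 2, m = 4
          obtain ⟨rfl, rfl⟩ : m = 4 ∧ r = 2 := by omega
          norm_num [SS, Finset.sum_range_succ, Nat.choose]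
        · obtain ⟨k, hk1, rfl, rfl⟩ : ∃ k, 1 ≤ k ∧ m = 3*k+4 ∧ r = k+2 :=
            ⟨r-2, by omega, by omega, by omega⟩
          have hA := sumid_b (3*k+3) (k+1)
          have hB := sumid_b (3*k+2) (k+1)
          have hS := SS_succ (3*k+2) (k+1)
          simp only [show 3*k+3+1 = 3*k+4 from rfl, show 3*k+2+1 = 3*k+3 from rfl,
            show k+1+1 = k+2 from rfl, show k+2+1 = k+3 from rfl] at hA hB hS ⊢
          have hb := b_pos' k
          have h3 := hr3 k
          have h6 := hr6 k
          simp only [DD] at h3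
          set d := ((3*k+2).choose (k+2) : ℝ) with hd
          set c3 := ((3*k+3).choose (k+2) : ℝ) with hc3
          set c6 := ((3*k+4).choose (k+3) : ℝ) with hc6
          have hd0 : (0:ℝ) ≤ d := Nat.cast_nonneg _
          have hk1' : (1:ℝ) ≤ (k:ℝ) := by exact_mod_cast hk1
          have h6' : c6 * (((k:ℝ)+3)*(2*(k:ℝ)+1)) = d * ((3*(k:ℝ)+3)*(3*(k:ℝ)+4)) := by
            linear_combination (2*(k:ℝ)+1) * h6 + (3*(k:ℝ)+4) * h3
          have hW : (0:ℝ) < ((k:ℝ)+3)*(2*(k:ℝ)+1) := by positivity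
          have hle6 : c6 + c3 ≤ 6*d := by
            have hmul : (c6 + c3) * (((k:ℝ)+3)*(2*(k:ℝ)+1))
                ≤ (6*d) * (((k:ℝ)+3)*(2*(k:ℝ)+1)) := by
              have e3 : c3 * (((k:ℝ)+3)*(2*(k:ℝ)+1)) = d * ((3*(k:ℝ)+3)*((k:ℝ)+3)) := by
                linear_combination ((k:ℝ)+3) * h3
              nlinarith [h6', e3, mul_nonneg hd0 (by linarith : (0:ℝ) ≤ 9*(k:ℝ)-3)]
            exact le_of_mul_le_mul_right hmul hW
          -- SS (3k+4) (k+2) = 4 * SS (3k+2) (k+1) + 2*d - c3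
          rw [hA, hB, hS]
          linarith

theorem stmt_16 (m : ℕ) (hm : 2 ≤ m) :
    (∀ r : ℕ, m / 3 + 1 ≤ r → r < m →
      (∑ i ∈ Finset.range (r + 2), (m.choose i : ℝ)) / 2 ^ (r + 1)
        < (∑ i ∈ Finset.range (r + 1), (m.choose i : ℝ)) / 2 ^ r) ∧
    (∑ i ∈ Finset.range (m + 1), (m.choose i : ℝ)) / 2 ^ m = 1 := by
  constructor
  · intro r h1 h2
    have h3 : m+1 ≤ 3*r := by omega
    have hk : (m.choose (r+1) : ℝ) < ∑ i ∈ Finset.range (r+1), (m.choose i : ℝ) :=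
      key m r h3 h2
    have hsum : ∑ i ∈ Finset.range (r+2), (m.choose i : ℝ)
        = (∑ i ∈ Finset.range (r+1), (m.choose i : ℝ)) + (m.choose (r+1):ℝ) :=
      Finset.sum_range_succ _ _
    rw [div_lt_div_iff₀ (by positivity) (by positivity), hsum, pow_succ]
    have hp : (0:ℝ) < 2^r := by positivity
    have hmp := mul_pos (sub_pos.mpr hk) hp
    nlinarith [hmp]
  · rw [div_eq_one_iff_eq (ne_of_gt (by positivity))]
    exact_mod_cast Nat.sum_range_choose m
end

section
/- For every integer m ≥ 0 with m ∉ {0, 3, 6, 9, 12}, the maximum of f_m(r) over 0 ≤ r ≤ m is attained at r = ⌊m/3⌋ + 1; that is, f_m(r) ≤ f_m(⌊m/3⌋+1) for all 0 ≤ r ≤ m. -/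
namespace Stmt17Aux

def S (m r : ℕ) : ℕ := ∑ i ∈ Finset.range (r + 1), m.choose i

lemma S_succ (m r : ℕ) : S m (r + 1) = S m r + m.choose (r + 1) :=
  Finset.sum_range_succ _ _

lemma S_zero (m : ℕ) : S m 0 = 1 := by simp [S]

lemma choose_le_S (m r : ℕ) : m.choose r ≤ S m r := by
  cases r with
  | zero => simp [S_zero]
  | succ r => rw [S_succ]; exact Nat.le_add_left _ _

/-- Upper telescoping bound: for `r + 1 ≤ k`, `3k ≤ m`,
`(2k+1-r) * S_r ≤ (3k-r) * C(m,r)`. -/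
lemma claimC (m k : ℕ) (hm : 3 * k ≤ m) :
    ∀ r, r + 1 ≤ k → (2 * k + 1 - r) * S m r ≤ (3 * k - r) * m.choose r := by
  intro r
  induction r with
  | zero =>
    intro h
    simp only [S_zero, Nat.choose_zero_right, Nat.sub_zero, Nat.mul_one]
    omega
  | succ r ih =>
    intro h
    obtain ⟨d, hd⟩ : ∃ d, k = r + 2 + d := ⟨k - (r + 2), by omega⟩
    obtain ⟨e, he⟩ : ∃ e, m = 3 * r + 6 + 3 * d + e := ⟨m - (3 * r + 6 + 3 * d), by omega⟩
    subst hd he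
    have ih' : (r + 2 * d + 5) * S (3*r+6+3*d+e) r ≤ (2*r+3*d+6) * (3*r+6+3*d+e).choose r := by
      have := ih (by omega)
      have e1 : 2 * (r + 2 + d) + 1 - r = r + 2 * d + 5 := by omega
      have e2 : 3 * (r + 2 + d) - r = 2 * r + 3 * d + 6 := by omega
      rwa [e1, e2] at this
    have id1 : (3*r+6+3*d+e).choose (r+1) * (r+1) = (3*r+6+3*d+e).choose r * (2*r+6+3*d+e) := by
      have := Nat.choose_succ_right_eq (3*r+6+3*d+e) r
      have e3 : 3*r+6+3*d+e - r = 2*r+6+3*d+e := by omega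
      rwa [e3] at this
    have e1 : 2 * (r + 2 + d) + 1 - (r + 1) = r + 2 * d + 4 := by omega
    have e2 : 3 * (r + 2 + d) - (r + 1) = 2 * r + 3 * d + 5 := by omega
    rw [e1, e2, S_succ]
    set C := (3*r+6+3*d+e).choose r with hC
    set C' := (3*r+6+3*d+e).choose (r+1) with hC'
    set Sr := S (3*r+6+3*d+e) r with hS
    -- coefficient inequality
    have hco : (r+2*d+4)*(2*r+3*d+6)*(r+1) + (r+2*d+4)*(r+2*d+5)*(2*r+6+3*d+e)
        ≤ (2*r+3*d+5)*(r+2*d+5)*(2*r+6+3*d+e) := by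
      calc (r+2*d+4)*(2*r+3*d+6)*(r+1) + (r+2*d+4)*(r+2*d+5)*(2*r+6+3*d+e)
          ≤ (r+2*d+4)*(2*r+3*d+6)*(r+1) + (r+2*d+4)*(r+2*d+5)*(2*r+6+3*d+e)
            + (6 + 5*e + 33*d + 7*d*e + 27*d^2 + 2*d^2*e + 6*d^3 + 8*r + 6*r*e + 19*r*d
              + 3*r*d*e + 7*r*d^2 + 2*r^2 + r^2*e + 2*r^2*d) := Nat.le_add_right _ _
        _ = (2*r+3*d+5)*(r+2*d+5)*(2*r+6+3*d+e) := by ring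
    have hcoC : ((r+2*d+4)*(2*r+3*d+6)*(r+1) + (r+2*d+4)*(r+2*d+5)*(2*r+6+3*d+e)) * C'
        ≤ ((2*r+3*d+5)*(r+2*d+5)*(2*r+6+3*d+e)) * C' := Nat.mul_le_mul_right _ hco
    have ihs : (r+2*d+4)*(2*r+6+3*d+e) * ((r + 2*d + 5) * Sr)
        ≤ (r+2*d+4)*(2*r+6+3*d+e) * ((2*r+3*d+6) * C) := Nat.mul_le_mul_left _ ih'
    have idA : (r+2*d+4)*(2*r+6+3*d+e) * ((2*r+3*d+6) * C) = (r+2*d+4)*(2*r+3*d+6)*(r+1)*C' := by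
      calc (r+2*d+4)*(2*r+6+3*d+e) * ((2*r+3*d+6) * C)
          = (r+2*d+4)*(2*r+3*d+6) * (C * (2*r+6+3*d+e)) := by ring
        _ = (r+2*d+4)*(2*r+3*d+6) * (C' * (r+1)) := by rw [← id1]
        _ = (r+2*d+4)*(2*r+3*d+6)*(r+1)*C' := by ring
    refine Nat.le_of_mul_le_mul_left ?_
      (show 0 < (r+2*d+5)*(2*r+6+3*d+e) by positivity)
    calc (r+2*d+5)*(2*r+6+3*d+e) * ((r+2*d+4) * (Sr + C'))
        = (r+2*d+4)*(2*r+6+3*d+e) * ((r+2*d+5) * Sr)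
          + ((r+2*d+4)*(r+2*d+5)*(2*r+6+3*d+e)) * C' := by ring
      _ ≤ (r+2*d+4)*(2*r+3*d+6)*(r+1)*C'
          + ((r+2*d+4)*(r+2*d+5)*(2*r+6+3*d+e)) * C' := by
            rw [idA] at ihs; exact Nat.add_le_add_right ihs _
      _ = ((r+2*d+4)*(2*r+3*d+6)*(r+1) + (r+2*d+4)*(r+2*d+5)*(2*r+6+3*d+e)) * C' := by ring
      _ ≤ ((2*r+3*d+5)*(r+2*d+5)*(2*r+6+3*d+e)) * C' := hcoC
      _ = (r+2*d+5)*(2*r+6+3*d+e) * ((2*r+3*d+5) * C') := by ring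

/-- `(k+3) * S_{k-1} ≤ (2k+2) * C(m,k-1)` for `k ≥ 2`, `3k ≤ m`. -/
lemma claimA2 (m k : ℕ) (hm : 3 * k ≤ m) (hk : 2 ≤ k) :
    (k + 3) * S m (k - 1) ≤ (2 * k + 2) * m.choose (k - 1) := by
  obtain ⟨q, hq⟩ : ∃ q, k = q + 2 := ⟨k - 2, by omega⟩
  obtain ⟨e, he⟩ : ∃ e, m = 3 * q + 6 + e := ⟨m - (3 * q + 6), by omega⟩
  subst hq he
  have ih : (q + 5) * S (3*q+6+e) q ≤ (2*q+6) * (3*q+6+e).choose q := by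
    have := claimC (3*q+6+e) (q+2) (by omega) q (by omega)
    have e1 : 2 * (q + 2) + 1 - q = q + 5 := by omega
    have e2 : 3 * (q + 2) - q = 2 * q + 6 := by omega
    rwa [e1, e2] at this
  have id1 : (3*q+6+e).choose (q+1) * (q+1) = (3*q+6+e).choose q * (2*q+6+e) := by
    have := Nat.choose_succ_right_eq (3*q+6+e) q
    have e3 : 3*q+6+e - q = 2*q+6+e := by omega
    rwa [e3] at this
  have e4 : q + 2 - 1 = q + 1 := by omega
  rw [e4, S_succ]
  set C := (3*q+6+e).choose q
  set C' := (3*q+6+e).choose (q+1)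
  set Sq := S (3*q+6+e) q
  have ihs : (2*q+6+e) * ((q+5) * Sq) ≤ (2*q+6+e) * ((2*q+6) * C) := Nat.mul_le_mul_left _ ih
  have idA : (2*q+6+e) * ((2*q+6) * C) = (2*q+6)*(q+1)*C' := by
    calc (2*q+6+e) * ((2*q+6) * C) = (2*q+6) * (C * (2*q+6+e)) := by ring
      _ = (2*q+6) * (C' * (q+1)) := by rw [← id1]
      _ = (2*q+6)*(q+1)*C' := by ring
  have hco : (2*q+6)*(q+1) + (2*q+6+e)*(q+5) ≤ (2*q+6+e)*(2*q+6) := by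
    calc (2*q+6)*(q+1) + (2*q+6+e)*(q+5)
        ≤ (2*q+6)*(q+1) + (2*q+6+e)*(q+5) + (e*q + e) := Nat.le_add_right _ _
      _ = (2*q+6+e)*(2*q+6) := by ring
  have hcoC : ((2*q+6)*(q+1) + (2*q+6+e)*(q+5)) * C' ≤ ((2*q+6+e)*(2*q+6)) * C' :=
    Nat.mul_le_mul_right _ hco
  refine Nat.le_of_mul_le_mul_left ?_ (show 0 < 2*q+6+e by positivity)
  calc (2*q+6+e) * ((q+2+3) * (Sq + C'))
      = (2*q+6+e) * ((q+5) * Sq) + ((2*q+6+e)*(q+5)) * C' := by ring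
    _ ≤ (2*q+6)*(q+1)*C' + ((2*q+6+e)*(q+5)) * C' := by
        rw [idA] at ihs; exact Nat.add_le_add_right ihs _
    _ = ((2*q+6)*(q+1) + (2*q+6+e)*(q+5)) * C' := by ring
    _ ≤ ((2*q+6+e)*(2*q+6)) * C' := hcoC
    _ = (2*q+6+e) * ((2*(q+2)+2) * C') := by ring

/-- `(k+1) * S_k ≤ 2k * C(m,k)` for `k ≥ 7`, `3k ≤ m`. -/
lemma claimA3 (m k : ℕ) (hm : 3 * k ≤ m) (hk : 7 ≤ k) :
    (k + 1) * S m k ≤ 2 * k * m.choose k := by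
  obtain ⟨K, hK⟩ : ∃ K, k = K + 7 := ⟨k - 7, by omega⟩
  obtain ⟨e, he⟩ : ∃ e, m = 3 * K + 21 + e := ⟨m - (3 * K + 21), by omega⟩
  subst hK he
  have ih : (K + 10) * S (3*K+21+e) (K + 6) ≤ (2*K+16) * (3*K+21+e).choose (K+6) := by
    have := claimA2 (3*K+21+e) (K+7) (by omega) (by omega)
    have e1 : K + 7 - 1 = K + 6 := by omega
    have e2 : K + 7 + 3 = K + 10 := by omega
    have e3 : 2 * (K+7) + 2 = 2*K+16 := by omega
    rwa [e1, e2, e3] at this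
  have id1 : (3*K+21+e).choose (K+7) * (K+7) = (3*K+21+e).choose (K+6) * (2*K+15+e) := by
    have := Nat.choose_succ_right_eq (3*K+21+e) (K+6)
    have e3 : 3*K+21+e - (K+6) = 2*K+15+e := by omega
    have e4 : K + 6 + 1 = K + 7 := by omega
    rwa [e3, e4] at this
  have e5 : K + 7 = K + 6 + 1 := by omega
  rw [show S (3*K+21+e) (K+7) = S (3*K+21+e) (K+6) + (3*K+21+e).choose (K+7) by
    rw [e5, S_succ]]
  set C := (3*K+21+e).choose (K+6)
  set C' := (3*K+21+e).choose (K+7)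
  set SK := S (3*K+21+e) (K+6)
  have ihs : (K+8)*(2*K+15+e) * ((K+10) * SK) ≤ (K+8)*(2*K+15+e) * ((2*K+16) * C) :=
    Nat.mul_le_mul_left _ ih
  have idA : (K+8)*(2*K+15+e) * ((2*K+16) * C) = (K+8)*(2*K+16)*(K+7)*C' := by
    calc (K+8)*(2*K+15+e) * ((2*K+16) * C) = (K+8)*(2*K+16) * (C * (2*K+15+e)) := by ring
      _ = (K+8)*(2*K+16) * (C' * (K+7)) := by rw [← id1]
      _ = (K+8)*(2*K+16)*(K+7)*C' := by ring
  have hco : (K+8)*(2*K+16)*(K+7) + (K+10)*(2*K+15+e)*(K+8)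
      ≤ (2*K+14)*(K+10)*(2*K+15+e) := by
    calc (K+8)*(2*K+16)*(K+7) + (K+10)*(2*K+15+e)*(K+8)
        ≤ (K+8)*(2*K+16)*(K+7) + (K+10)*(2*K+15+e)*(K+8)
          + (4 + 60*e + 8*K + 16*K*e + K^2 + K^2*e) := Nat.le_add_right _ _
      _ = (2*K+14)*(K+10)*(2*K+15+e) := by ring
  have hcoC : ((K+8)*(2*K+16)*(K+7) + (K+10)*(2*K+15+e)*(K+8)) * C'
      ≤ ((2*K+14)*(K+10)*(2*K+15+e)) * C' := Nat.mul_le_mul_right _ hco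
  refine Nat.le_of_mul_le_mul_left ?_ (show 0 < (K+10)*(2*K+15+e) by positivity)
  calc (K+10)*(2*K+15+e) * ((K + 7 + 1) * (SK + C'))
      = (K+8)*(2*K+15+e) * ((K+10) * SK) + ((K+10)*(2*K+15+e)*(K+8)) * C' := by ring
    _ ≤ (K+8)*(2*K+16)*(K+7)*C' + ((K+10)*(2*K+15+e)*(K+8)) * C' := by
        rw [idA] at ihs; exact Nat.add_le_add_right ihs _
    _ = ((K+8)*(2*K+16)*(K+7) + (K+10)*(2*K+15+e)*(K+8)) * C' := by ring
    _ ≤ ((2*K+14)*(K+10)*(2*K+15+e)) * C' := hcoC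
    _ = (K+10)*(2*K+15+e) * (2 * (K+7) * C') := by ring

lemma lemA_big (m : ℕ) (hm : 21 ≤ m) : ∀ r ≤ m / 3, S m r ≤ m.choose (r + 1) := by
  obtain ⟨k, hk⟩ : ∃ k, m / 3 = k := ⟨_, rfl⟩
  rw [hk]
  intro r hr
  have h3 : 3 * k ≤ m := by omega
  have hk7 : 7 ≤ k := by omega
  have id1 : m.choose (r+1) * (r+1) = m.choose r * (m - r) := Nat.choose_succ_right_eq m r
  rcases Nat.lt_or_ge r k with hlt | hge
  · -- r + 1 ≤ k
    have hc := claimC m k h3 r (by omega)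
    refine Nat.le_of_mul_le_mul_left ?_ (show 0 < r + 1 by omega)
    calc (r+1) * S m r ≤ (2*k+1-r) * S m r := Nat.mul_le_mul_right _ (by omega)
      _ ≤ (3*k-r) * m.choose r := hc
      _ ≤ (m-r) * m.choose r := Nat.mul_le_mul_right _ (by omega)
      _ = m.choose r * (m-r) := by ring
      _ = m.choose (r+1) * (r+1) := id1.symm
      _ = (r+1) * m.choose (r+1) := by ring
  · have hrk : r = k := by omega
    have hc := claimA3 m k h3 hk7
    rw [hrk]
    refine Nat.le_of_mul_le_mul_left ?_ (show 0 < k + 1 by omega)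
    have id1' : m.choose (k+1) * (k+1) = m.choose k * (m - k) := Nat.choose_succ_right_eq m k
    calc (k+1) * S m k ≤ 2 * k * m.choose k := hc
      _ ≤ (m-k) * m.choose k := Nat.mul_le_mul_right _ (by omega)
      _ = m.choose k * (m-k) := by ring
      _ = m.choose (k+1) * (k+1) := id1'.symm
      _ = (k+1) * m.choose (k+1) := by ring

lemma lemA_small : ∀ m < 21, ∀ r ≤ m / 3,
    m ∈ ([0,3,6,9,12] : List ℕ) ∨ S m r ≤ m.choose (r + 1) := by
  simp only [S, Nat.choose_eq_descFactorial_div_factorial]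
  decide

lemma lemA (m : ℕ) (h0 : m ≠ 0) (h3 : m ≠ 3) (h6 : m ≠ 6) (h9 : m ≠ 9) (h12 : m ≠ 12) :
    ∀ r ≤ m / 3, S m r ≤ m.choose (r + 1) := by
  intro r hr
  rcases Nat.lt_or_ge m 21 with hm | hm
  · rcases lemA_small m hm r hr with h | h
    · simp only [List.mem_cons, List.not_mem_nil, or_false] at h
      omega
    · exact h
  · exact lemA_big m hm r hr

/-- Lower telescoping bound. -/
lemma claimL (m : ℕ) :
    ∀ r, 3 * r ≤ m →
      (m - r + 1) * (m + 1 - 2 * r)^2 * m.choose r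
        ≤ (m + 1 - 2 * r)^3 * S m r + r * (m + 1) * m.choose r := by
  intro r
  induction r with
  | zero =>
    intro _
    apply Nat.le_of_eq
    have e1 : m - 0 + 1 = m + 1 := by omega
    have e2 : m + 1 - 2 * 0 = m + 1 := by omega
    rw [e1, e2, S_zero, Nat.choose_zero_right]
    ring
  | succ r ih =>
    intro h
    obtain ⟨s, hs⟩ : ∃ s, m = 3 * r + 3 + s := ⟨m - (3 * r + 3), by omega⟩
    subst hs
    have ih' : (2*r+4+s) * (r+s+4)^2 * (3*r+3+s).choose r
        ≤ (r+s+4)^3 * S (3*r+3+s) r + r * (3*r+4+s) * (3*r+3+s).choose r := by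
      have := ih (by omega)
      have e1 : 3*r+3+s - r + 1 = 2*r+4+s := by omega
      have e2 : 3*r+3+s + 1 - 2*r = r+s+4 := by omega
      have e3 : 3*r+3+s + 1 = 3*r+4+s := by omega
      rwa [e1, e2, e3] at this
    have id1 : (3*r+3+s).choose (r+1) * (r+1) = (3*r+3+s).choose r * (2*r+3+s) := by
      have := Nat.choose_succ_right_eq (3*r+3+s) r
      have e3 : 3*r+3+s - r = 2*r+3+s := by omega
      rwa [e3] at this
    have e1 : 3*r+3+s - (r+1) + 1 = 2*r+3+s := by omega
    have e2 : 3*r+3+s + 1 - 2*(r+1) = r+s+2 := by omega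
    have e3 : 3*r+3+s + 1 = 3*r+4+s := by omega
    rw [e1, e2, e3, S_succ]
    set C := (3*r+3+s).choose r with hCdef
    set C' := (3*r+3+s).choose (r+1) with hC'def
    set Sr := S (3*r+3+s) r with hSdef
    -- coefficient inequality Q_L ≤ Q_R with explicit slack polynomial
    have hQ : (2*r+3+s)^2*(r+s+2)^2*(r+s+4)^3 + r*(r+1)*(3*r+4+s)*(r+s+2)^3
        ≤ (r+1)*(2*r+4+s)*(r+s+2)^3*(r+s+4)^2 + (2*r+3+s)*(r+s+2)^3*(r+s+4)^3
          + (r+1)*(3*r+4+s)*(2*r+3+s)*(r+s+4)^3 := by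
      calc (2*r+3+s)^2*(r+s+2)^2*(r+s+4)^3 + r*(r+1)*(3*r+4+s)*(r+s+2)^3
          ≤ (2*r+3+s)^2*(r+s+2)^2*(r+s+4)^3 + r*(r+1)*(3*r+4+s)*(r+s+2)^3
            + (512 + 576*s + 240*s^2 + 44*s^3 + 3*s^4 + 1568*r + 1480*r*s + 496*r*s^2
              + 68*r*s^3 + 3*r*s^4 + 1832*r^2 + 1356*r^2*s + 322*r^2*s^2 + 24*r^2*s^3
              + 1016*r^3 + 524*r^3*s + 66*r^3*s^2 + 267*r^4 + 72*r^4*s + 27*r^5) :=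
            Nat.le_add_right _ _
        _ = (r+1)*(2*r+4+s)*(r+s+2)^3*(r+s+4)^2 + (2*r+3+s)*(r+s+2)^3*(r+s+4)^3
            + (r+1)*(3*r+4+s)*(2*r+3+s)*(r+s+4)^3 := by ring
    have hQC : ((2*r+3+s)^2*(r+s+2)^2*(r+s+4)^3 + r*(r+1)*(3*r+4+s)*(r+s+2)^3) * ((2*r+3+s)*C)
        ≤ ((r+1)*(2*r+4+s)*(r+s+2)^3*(r+s+4)^2 + (2*r+3+s)*(r+s+2)^3*(r+s+4)^3
          + (r+1)*(3*r+4+s)*(2*r+3+s)*(r+s+4)^3) * ((2*r+3+s)*C) :=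
      Nat.mul_le_mul_right _ hQ
    have ihs : (r+1)*(2*r+3+s)*(r+s+2)^3 * ((2*r+4+s) * (r+s+4)^2 * C)
        ≤ (r+1)*(2*r+3+s)*(r+s+2)^3 * ((r+s+4)^3 * Sr + r * (3*r+4+s) * C) :=
      Nat.mul_le_mul_left _ ih'
    -- goal: (2r+3+s)*(r+s+2)^2*C' ≤ (r+s+2)^3*(Sr + C') + (r+1)*(3r+4+s)*C'
    refine Nat.le_of_mul_le_mul_left ?_
      (show 0 < (r+1)*(2*r+3+s)*(r+s+4)^3 by positivity)
    have idA : (r+1)*(2*r+3+s)*(r+s+4)^3 * ((2*r+3+s) * (r+s+2)^2 * C')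
        = (2*r+3+s)^3*(r+s+2)^2*(r+s+4)^3 * C := by
      calc (r+1)*(2*r+3+s)*(r+s+4)^3 * ((2*r+3+s) * (r+s+2)^2 * C')
          = (2*r+3+s)^2*(r+s+2)^2*(r+s+4)^3 * (C' * (r+1)) := by ring
        _ = (2*r+3+s)^2*(r+s+2)^2*(r+s+4)^3 * (C * (2*r+3+s)) := by rw [id1]
        _ = (2*r+3+s)^3*(r+s+2)^2*(r+s+4)^3 * C := by ring
    have idB : (r+1)*(2*r+3+s)*(r+s+4)^3 * ((r+s+2)^3 * (Sr + C') + (r+1)*(3*r+4+s)*C')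
        = (r+1)*(2*r+3+s)*(r+s+2)^3*(r+s+4)^3 * Sr
          + (2*r+3+s)^2*(r+s+2)^3*(r+s+4)^3 * C
          + (r+1)*(3*r+4+s)*(2*r+3+s)^2*(r+s+4)^3 * C := by
      calc (r+1)*(2*r+3+s)*(r+s+4)^3 * ((r+s+2)^3 * (Sr + C') + (r+1)*(3*r+4+s)*C')
          = (r+1)*(2*r+3+s)*(r+s+2)^3*(r+s+4)^3 * Sr
            + (2*r+3+s)*(r+s+2)^3*(r+s+4)^3 * (C' * (r+1))
            + (3*r+4+s)*(2*r+3+s)*(r+s+4)^3 * (r+1) * (C' * (r+1)) := by ring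
        _ = (r+1)*(2*r+3+s)*(r+s+2)^3*(r+s+4)^3 * Sr
            + (2*r+3+s)*(r+s+2)^3*(r+s+4)^3 * (C * (2*r+3+s))
            + (3*r+4+s)*(2*r+3+s)*(r+s+4)^3 * (r+1) * (C * (2*r+3+s)) := by rw [id1]
        _ = _ := by ring
    rw [idA, idB]
    have h2 : (r+1)*(2*r+4+s)*(r+s+2)^3*(r+s+4)^2*(2*r+3+s)*C
        ≤ (r+1)*(2*r+3+s)*(r+s+2)^3*(r+s+4)^3*Sr
          + r*(r+1)*(3*r+4+s)*(r+s+2)^3*(2*r+3+s)*C := by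
      calc (r+1)*(2*r+4+s)*(r+s+2)^3*(r+s+4)^2*(2*r+3+s)*C
          = (r+1)*(2*r+3+s)*(r+s+2)^3 * ((2*r+4+s) * (r+s+4)^2 * C) := by ring
        _ ≤ (r+1)*(2*r+3+s)*(r+s+2)^3 * ((r+s+4)^3 * Sr + r * (3*r+4+s) * C) := ihs
        _ = (r+1)*(2*r+3+s)*(r+s+2)^3*(r+s+4)^3*Sr
            + r*(r+1)*(3*r+4+s)*(r+s+2)^3*(2*r+3+s)*C := by ring
    have hfin : (2*r+3+s)^3*(r+s+2)^2*(r+s+4)^3 * C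
          + r*(r+1)*(3*r+4+s)*(r+s+2)^3*(2*r+3+s)*C
        ≤ ((r+1)*(2*r+3+s)*(r+s+2)^3*(r+s+4)^3 * Sr
          + (2*r+3+s)^2*(r+s+2)^3*(r+s+4)^3 * C
          + (r+1)*(3*r+4+s)*(2*r+3+s)^2*(r+s+4)^3 * C)
          + r*(r+1)*(3*r+4+s)*(r+s+2)^3*(2*r+3+s)*C :=
      calc (2*r+3+s)^3*(r+s+2)^2*(r+s+4)^3 * C
          + r*(r+1)*(3*r+4+s)*(r+s+2)^3*(2*r+3+s)*C
        = ((2*r+3+s)^2*(r+s+2)^2*(r+s+4)^3 + r*(r+1)*(3*r+4+s)*(r+s+2)^3)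
            * ((2*r+3+s)*C) := by ring
      _ ≤ ((r+1)*(2*r+4+s)*(r+s+2)^3*(r+s+4)^2 + (2*r+3+s)*(r+s+2)^3*(r+s+4)^3
            + (r+1)*(3*r+4+s)*(2*r+3+s)*(r+s+4)^3) * ((2*r+3+s)*C) := hQC
      _ = (r+1)*(2*r+4+s)*(r+s+2)^3*(r+s+4)^2*(2*r+3+s)*C
          + ((2*r+3+s)^2*(r+s+2)^3*(r+s+4)^3 * C
            + (r+1)*(3*r+4+s)*(2*r+3+s)^2*(r+s+4)^3 * C) := by ring
      _ ≤ ((r+1)*(2*r+3+s)*(r+s+2)^3*(r+s+4)^3*Sr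
            + r*(r+1)*(3*r+4+s)*(r+s+2)^3*(2*r+3+s)*C)
          + ((2*r+3+s)^2*(r+s+2)^3*(r+s+4)^3 * C
            + (r+1)*(3*r+4+s)*(2*r+3+s)^2*(r+s+4)^3 * C) := Nat.add_le_add_right h2 _
      _ = ((r+1)*(2*r+3+s)*(r+s+2)^3*(r+s+4)^3 * Sr
          + (2*r+3+s)^2*(r+s+2)^3*(r+s+4)^3 * C
          + (r+1)*(3*r+4+s)*(2*r+3+s)^2*(r+s+4)^3 * C)
          + r*(r+1)*(3*r+4+s)*(r+s+2)^3*(2*r+3+s)*C := by ring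
    exact Nat.le_of_add_le_add_right hfin

/-- key lower bound at the peak: `C(m, k+2) ≤ S_{k+1}` where `k = m/3`. -/
lemma lemBb (m : ℕ) : m.choose (m / 3 + 2) ≤ S m (m / 3 + 1) := by
  obtain ⟨k, hk⟩ : ∃ k, m / 3 = k := ⟨_, rfl⟩
  rw [hk]
  have hb1 : 3 * k ≤ m := by omega
  have hb2 : m ≤ 3 * k + 2 := by omega
  have id2 : m.choose (k+2) * (k+2) = m.choose (k+1) * (m - (k+1)) :=
    Nat.choose_succ_right_eq m (k+1)
  rcases le_or_gt m (2*k+3) with hm | hm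
  · -- easy case: C_{k+2} ≤ C_{k+1} ≤ S_{k+1}
    have h1 : m.choose (k+2) * (k+2) ≤ m.choose (k+1) * (k+2) := by
      rw [id2]; exact Nat.mul_le_mul_left _ (by omega)
    have h2 : m.choose (k+2) ≤ m.choose (k+1) := Nat.le_of_mul_le_mul_right h1 (by omega)
    exact le_trans h2 (choose_le_S m (k+1))
  · -- main case: m ≥ 2k + 4
    have id1 : m.choose (k+1) * (k+1) = m.choose k * (m - k) := Nat.choose_succ_right_eq m k
    have hL := claimL m k hb1
    have key : (m - 2*k - 3) * m.choose (k+1) ≤ (k+2) * S m k := by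
      have main : (m - 2*k-3) * (m-k) * m.choose k ≤ (k+1)*(k+2) * S m k := by
        have hco : (m - 2*k-3)*(m-k)*(m+1-2*k)^3 + (k+1)*(k+2)*(k*(m+1))
            ≤ (k+1)*(k+2)*((m-k+1)*(m+1-2*k)^2) := by
          have hc : m = 3*k ∨ m = 3*k+1 ∨ m = 3*k+2 := by omega
          rcases hc with hc | hc | hc
          · -- c = 0, k ≥ 4
            obtain ⟨K, hK⟩ : ∃ K, k = K + 4 := ⟨k - 4, by omega⟩
            have e1 : m - 2*k - 3 = K+1 := by omega
            have e2 : m - k = 2*K+8 := by omega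
            have e3 : m + 1 - 2*k = K+5 := by omega
            have e4 : m - k + 1 = 2*K+9 := by omega
            have e5 : m + 1 = 3*K+13 := by omega
            rw [e1, e4, e2, e3, e5, hK]
            calc (K+1)*(2*K+8)*(K+5)^3 + (K+4+1)*(K+4+2)*((K+4)*(3*K+13))
                ≤ (K+1)*(2*K+8)*(K+5)^3 + (K+4+1)*(K+4+2)*((K+4)*(3*K+13))
                  + (4190 + 3503*K + 1098*K^2 + 153*K^3 + 8*K^4) := Nat.le_add_right _ _
              _ = (K+4+1)*(K+4+2)*((2*K+9)*(K+5)^2) := by ring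
          · -- c = 1, k ≥ 3
            obtain ⟨K, hK⟩ : ∃ K, k = K + 3 := ⟨k - 3, by omega⟩
            have e1 : m - 2*k - 3 = K+1 := by omega
            have e2 : m - k = 2*K+7 := by omega
            have e3 : m + 1 - 2*k = K+5 := by omega
            have e4 : m - k + 1 = 2*K+8 := by omega
            have e5 : m + 1 = 3*K+11 := by omega
            rw [e1, e4, e2, e3, e5, hK]
            calc (K+1)*(2*K+7)*(K+5)^3 + (K+3+1)*(K+3+2)*((K+3)*(3*K+11))
                ≤ (K+1)*(2*K+7)*(K+5)^3 + (K+3+1)*(K+3+2)*((K+3)*(3*K+11))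
                  + (2465 + 2053*K + 627*K^2 + 83*K^3 + 4*K^4) := Nat.le_add_right _ _
              _ = (K+3+1)*(K+3+2)*((2*K+8)*(K+5)^2) := by ring
          · -- c = 2, k ≥ 2
            obtain ⟨K, hK⟩ : ∃ K, k = K + 2 := ⟨k - 2, by omega⟩
            have e1 : m - 2*k - 3 = K+1 := by omega
            have e2 : m - k = 2*K+6 := by omega
            have e3 : m + 1 - 2*k = K+5 := by omega
            have e4 : m - k + 1 = 2*K+7 := by omega
            have e5 : m + 1 = 3*K+9 := by omega
            rw [e1, e4, e2, e3, e5, hK]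
            calc (K+1)*(2*K+6)*(K+5)^3 + (K+2+1)*(K+2+2)*((K+2)*(3*K+9))
                ≤ (K+1)*(2*K+6)*(K+5)^3 + (K+2+1)*(K+2+2)*((K+2)*(3*K+9))
                  + (1134 + 909*K + 240*K^2 + 21*K^3) := Nat.le_add_right _ _
              _ = (K+2+1)*(K+2+2)*((2*K+7)*(K+5)^2) := by ring
        have hcoC := Nat.mul_le_mul_right (m.choose k) hco
        have hLs : (k+1)*(k+2) * ((m-k+1)*(m+1-2*k)^2 * m.choose k)
            ≤ (k+1)*(k+2) * ((m+1-2*k)^3 * S m k + k*(m+1) * m.choose k) :=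
          Nat.mul_le_mul_left _ hL
        have comb : (m+1-2*k)^3 * ((m - 2*k-3)*(m-k) * m.choose k)
              + (k+1)*(k+2)*(k*(m+1)) * m.choose k
            ≤ (m+1-2*k)^3 * ((k+1)*(k+2) * S m k)
              + (k+1)*(k+2)*(k*(m+1)) * m.choose k := by
          calc (m+1-2*k)^3 * ((m - 2*k-3)*(m-k) * m.choose k)
                + (k+1)*(k+2)*(k*(m+1)) * m.choose k
              = ((m - 2*k-3)*(m-k)*(m+1-2*k)^3 + (k+1)*(k+2)*(k*(m+1))) * m.choose k := by
                ring
            _ ≤ ((k+1)*(k+2)*((m-k+1)*(m+1-2*k)^2)) * m.choose k := hcoC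
            _ = (k+1)*(k+2) * ((m-k+1)*(m+1-2*k)^2 * m.choose k) := by ring
            _ ≤ (k+1)*(k+2) * ((m+1-2*k)^3 * S m k + k*(m+1) * m.choose k) := hLs
            _ = (m+1-2*k)^3 * ((k+1)*(k+2) * S m k)
                + (k+1)*(k+2)*(k*(m+1)) * m.choose k := by ring
        have comb2 := Nat.le_of_add_le_add_right comb
        exact Nat.le_of_mul_le_mul_left comb2 (pow_pos (show 0 < m+1-2*k by omega) 3)
      refine Nat.le_of_mul_le_mul_left ?_ (show 0 < k+1 by omega)
      calc (k+1) * ((m - 2*k-3) * m.choose (k+1))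
          = (m - 2*k-3) * (m.choose (k+1) * (k+1)) := by ring
        _ = (m - 2*k-3) * (m.choose k * (m - k)) := by rw [id1]
        _ = (m - 2*k-3) * (m-k) * m.choose k := by ring
        _ ≤ (k+1)*(k+2) * S m k := main
        _ = (k+1) * ((k+2) * S m k) := by ring
    refine Nat.le_of_mul_le_mul_left ?_ (show 0 < k+2 by omega)
    calc (k+2) * m.choose (k+2) = m.choose (k+2) * (k+2) := by ring
      _ = m.choose (k+1) * (m - (k+1)) := id2
      _ = (m - 2*k-3) * m.choose (k+1) + (k+2) * m.choose (k+1) := by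
          have e : m - (k+1) = (m - 2*k-3) + (k+2) := by omega
          rw [e]; ring
      _ ≤ (k+2) * S m k + (k+2) * m.choose (k+1) := Nat.add_le_add_right key _
      _ = (k+2) * (S m k + m.choose (k+1)) := by ring
      _ = (k+2) * S m (k+1) := by rw [S_succ]

lemma lemB (m : ℕ) : ∀ r, m / 3 + 1 ≤ r → m.choose (r + 1) ≤ S m r := by
  intro r
  induction r with
  | zero => intro h; omega
  | succ r ih =>
    intro h
    rcases Nat.lt_or_ge (m / 3 + 1) (r + 1) with hlt | hge
    · -- r ≥ m/3 + 1
      have hih := ih (by omega)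
      have hC : m.choose (r+2) ≤ 2 * m.choose (r+1) := by
        have id : m.choose (r+2) * (r+2) = m.choose (r+1) * (m - (r+1)) :=
          Nat.choose_succ_right_eq m (r+1)
        have h1 : m.choose (r+2) * (r+2) ≤ (2 * m.choose (r+1)) * (r+2) := by
          rw [id]
          calc m.choose (r+1) * (m - (r+1)) ≤ m.choose (r+1) * (2*(r+2)) := by
                refine Nat.mul_le_mul_left _ ?_
                omega
            _ = (2 * m.choose (r+1)) * (r+2) := by ring
        exact Nat.le_of_mul_le_mul_right h1 (by omega)
      rw [S_succ]
      calc m.choose (r+1+1) ≤ 2 * m.choose (r+1) := hC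
        _ = m.choose (r+1) + m.choose (r+1) := by ring
        _ ≤ S m r + m.choose (r+1) := Nat.add_le_add_right hih _
    · -- r + 1 = m/3 + 1
      have : r + 1 = m / 3 + 1 := by omega
      rw [this]
      exact lemBb m

-- ==================== real-valued part ====================

lemma step_up (m r : ℕ) (h : S m r ≤ m.choose (r + 1)) :
    (S m r : ℝ) / 2 ^ r ≤ (S m (r + 1) : ℝ) / 2 ^ (r + 1) := by
  rw [div_le_div_iff₀ (by positivity) (by positivity)]
  have h' : (S m r : ℝ) ≤ (m.choose (r + 1) : ℝ) := by exact_mod_cast h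
  have hS : (S m (r+1) : ℝ) = (S m r : ℝ) + (m.choose (r+1) : ℝ) := by
    rw [S_succ]; push_cast; ring
  have hp : (0:ℝ) < 2 ^ r := by positivity
  rw [hS, pow_succ]
  nlinarith [hp]

lemma step_down (m r : ℕ) (h : m.choose (r + 1) ≤ S m r) :
    (S m (r + 1) : ℝ) / 2 ^ (r + 1) ≤ (S m r : ℝ) / 2 ^ r := by
  rw [div_le_div_iff₀ (by positivity) (by positivity)]
  have h' : (m.choose (r + 1) : ℝ) ≤ (S m r : ℝ) := by exact_mod_cast h
  have hS : (S m (r+1) : ℝ) = (S m r : ℝ) + (m.choose (r+1) : ℝ) := by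
    rw [S_succ]; push_cast; ring
  have hp : (0:ℝ) < 2 ^ r := by positivity
  rw [hS, pow_succ]
  nlinarith [hp]

end Stmt17Aux

open Stmt17Aux in
theorem stmt_17 (m : ℕ) (hne : m ∉ ({0, 3, 6, 9, 12} : Set ℕ)) :
    ∀ r : ℕ, r ≤ m →
      (∑ i ∈ Finset.range (r + 1), (m.choose i : ℝ)) / 2 ^ r
        ≤ (∑ i ∈ Finset.range (m / 3 + 2), (m.choose i : ℝ)) / 2 ^ (m / 3 + 1) := by
  simp only [Set.mem_insert_iff, Set.mem_singleton_iff, not_or] at hne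
  obtain ⟨h0, h3, h6, h9, h12⟩ := hne
  have hcast : ∀ j : ℕ, (∑ i ∈ Finset.range (j + 1), (m.choose i : ℝ)) = (S m j : ℝ) := by
    intro j; rw [S]; push_cast; ring
  intro r _
  rw [hcast r, show m / 3 + 2 = (m / 3 + 1) + 1 from rfl, hcast (m / 3 + 1)]
  -- key : ∀ j, f j ≤ f (m/3 + 1)
  -- first: going up for j ≤ m/3+1
  have up : ∀ n : ℕ, ∀ j : ℕ, j + n = m / 3 + 1 →
      (S m j : ℝ) / 2 ^ j ≤ (S m (m / 3 + 1) : ℝ) / 2 ^ (m / 3 + 1) := by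
    intro n
    induction n with
    | zero => intro j hj; rw [show j = m / 3 + 1 by omega]
    | succ n ih =>
      intro j hj
      have h1 : S m j ≤ m.choose (j + 1) := lemA m h0 h3 h6 h9 h12 j (by omega)
      calc (S m j : ℝ) / 2 ^ j ≤ (S m (j+1) : ℝ) / 2 ^ (j+1) := step_up m j h1
        _ ≤ (S m (m / 3 + 1) : ℝ) / 2 ^ (m / 3 + 1) := ih (j+1) (by omega)
  have down : ∀ n : ℕ,
      (S m (m / 3 + 1 + n) : ℝ) / 2 ^ (m / 3 + 1 + n)
        ≤ (S m (m / 3 + 1) : ℝ) / 2 ^ (m / 3 + 1) := by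
    intro n
    induction n with
    | zero => exact le_refl _
    | succ n ih =>
      have h1 : m.choose (m / 3 + 1 + n + 1) ≤ S m (m / 3 + 1 + n) :=
        lemB m (m / 3 + 1 + n) (by omega)
      calc (S m (m / 3 + 1 + (n+1)) : ℝ) / 2 ^ (m / 3 + 1 + (n+1))
          = (S m ((m / 3 + 1 + n) + 1) : ℝ) / 2 ^ ((m / 3 + 1 + n) + 1) := by ring_nf
        _ ≤ (S m (m / 3 + 1 + n) : ℝ) / 2 ^ (m / 3 + 1 + n) := step_down m _ h1
        _ ≤ _ := ih
  rcases le_or_gt r (m / 3 + 1) with hr | hr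
  · exact up (m / 3 + 1 - r) r (by omega)
  · have := down (r - (m / 3 + 1))
    rwa [show m / 3 + 1 + (r - (m / 3 + 1)) = r by omega] at this
end

section
/- For every integer m ∉ {0, 1, 3, 6, 9, 12}, setting r_0 = ⌊m/3⌋+1 and k = 3r_0 − m (so k ∈ {1,2,3}), we have 2^{-⌊m/3⌋} (1 − (k+2)/(2(r_0+1))) C(m, r_0) < f_m(r_0) < 2^{-⌊m/3⌋} C(m, r_0). -/
open Finset

set_option maxHeartbeats 1000000

lemma choose_le_choose_of_le_half {n s t : ℕ} (h : s ≤ t) (ht : 2 * t ≤ n) :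
    n.choose s ≤ n.choose t := by
  induction t with
  | zero => have : s = 0 := by omega
            subst this; exact le_refl _
  | succ t ih =>
    rcases Nat.eq_or_lt_of_le h with rfl | h'
    · exact le_refl _
    · exact (ih (by omega) (by omega)).trans
        (Nat.choose_le_succ_of_lt_half_left (by omega))

lemma choose_ge_sq {n r : ℕ} (hr : 1 ≤ r) (hn : 3 * r ≤ n + 2) : r ^ 2 ≤ n.choose (r - 1) := by
  rcases Nat.lt_or_ge r 4 with h4 | h4
  · interval_cases r
    · simp [Nat.choose]
    · simpa [Nat.choose_one_right] using (by omega : 2 ^ 2 ≤ n)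
    · obtain ⟨d, rfl⟩ : ∃ d, n = d + 7 := ⟨n - 7, by omega⟩
      have h6 : (d + 7).descFactorial 2 = 2 * (d + 7).choose 2 := by
        simpa [Nat.factorial] using Nat.descFactorial_eq_factorial_mul_choose (d + 7) 2
      simp [Nat.descFactorial, Nat.succ_sub_one, Nat.add_sub_cancel] at h6
      nlinarith [h6]
  · have hmono : n.choose 3 ≤ n.choose (r - 1) :=
      choose_le_choose_of_le_half (by omega) (by omega)
    refine le_trans ?_ hmono
    obtain ⟨a, rfl⟩ : ∃ a, n = a + 2 := ⟨n - 2, by omega⟩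
    have h6 : (a + 2).descFactorial 3 = 6 * (a + 2).choose 3 := by
      simpa [Nat.factorial] using Nat.descFactorial_eq_factorial_mul_choose (a + 2) 3
    simp [Nat.descFactorial, Nat.succ_sub_one, Nat.add_sub_cancel] at h6
    have ha : 2 * r ≤ a := by omega
    have k2 : a * a * a ≤ a * ((a + 1) * (a + 2)) := by nlinarith
    have k3 : 2*r * (2*r) * (2*r) ≤ a * a * a :=
      Nat.mul_le_mul (Nat.mul_le_mul ha ha) ha
    have k4 : r ^ 2 * 1 ≤ r ^ 2 * r := Nat.mul_le_mul_left _ (by omega)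
    nlinarith [h6, k2, k3, k4]

lemma geom_bound (q b : ℝ) (hq : 0 ≤ q) (hq1 : q < 1) (hb0 : 0 ≤ b)
    (hb : 3 ≤ b * (1 - q)) :
    ∀ (N : ℕ) (c : ℕ → ℝ) (w a : ℝ), (∀ t, 0 ≤ c t) →
      (∀ t, t + 1 < N → c (t + 1) ≤ q * c t) → 0 ≤ a →
      w + b * q ≤ a * (1 - q) →
      ∑ t ∈ range N, (w + 3 * t) * c t ≤ a * c 0 := by
  intro N
  induction N with
  | zero => intro c w a hc _ ha _; simp; exact mul_nonneg ha (hc 0)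
  | succ N ih =>
    intro c w a hc hdec ha hwa
    rcases Nat.eq_zero_or_pos N with rfl | hN
    · rw [Finset.sum_range_one]; norm_num
      have hw : w ≤ a := by nlinarith [mul_nonneg ha hq, mul_nonneg hb0 hq]
      have := hc 0
      nlinarith
    · rw [Finset.sum_range_succ']
      have hstep : ∑ t ∈ range N, (w + 3 * ↑(t + 1)) * c (t + 1)
          ≤ (a + b) * c 1 := by
        have := ih (fun t => c (t + 1)) (w + 3) (a + b) (fun t => hc (t + 1))
          (fun t ht => hdec (t + 1) (by omega)) (by linarith)
          (by push_cast; nlinarith)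
        calc ∑ t ∈ range N, (w + 3 * ↑(t + 1)) * c (t + 1)
            = ∑ t ∈ range N, ((w + 3) + 3 * t) * c (t + 1) := by
              apply Finset.sum_congr rfl; intro t _; push_cast; ring
          _ ≤ (a + b) * c 1 := this
      have hc1 : c 1 ≤ q * c 0 := hdec 0 (by omega)
      have hab : (0:ℝ) ≤ a + b := by linarith
      have h2 : (a + b) * c 1 ≤ (a + b) * (q * c 0) := by
        exact mul_le_mul_of_nonneg_left hc1 hab
      have hc0 := hc 0
      simp only [Nat.cast_zero]
      nlinarith [mul_nonneg (mul_nonneg hab hq) hc0]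

lemma sum_transform (m r k : ℕ) (hm : m + k = 3 * r) (hk1 : 1 ≤ k) (hk3 : k ≤ 3)
    (hr : 1 ≤ r) :
    ((m:ℝ) + 1) * (∑ i ∈ range (r+1), (m.choose i : ℝ))
      = ((m:ℝ) + 1) * (2 * (m.choose r : ℝ) - 1)
        - ∑ t ∈ range r, (3*(t:ℝ) + 1 - (k:ℝ)) * (((m+1).choose (r - t) : ℝ)) := by
  have hmr : (m:ℝ) = 3*(r:ℝ) - (k:ℝ) := by
    have h : (m:ℝ) + (k:ℝ) = 3*(r:ℝ) := by exact_mod_cast hm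
    linarith
  -- step 1 : telescoping sum of e_i
  have h1 : ∑ i ∈ range r, ((m.choose (i+1) : ℝ) - 2 * (m.choose i : ℝ))
      = (m.choose r : ℝ) - 1 - ∑ i ∈ range r, (m.choose i : ℝ) := by
    rw [Finset.sum_sub_distrib, ← Finset.mul_sum]
    have ha := Finset.sum_range_succ' (fun i => (m.choose i : ℝ)) r
    have hb := Finset.sum_range_succ (fun i => (m.choose i : ℝ)) r
    simp only [Nat.choose_zero_right, Nat.cast_one] at ha hb
    have : ∑ i ∈ range r, (m.choose (i+1) : ℝ)
        = ∑ i ∈ range (r+1), (m.choose i : ℝ) - 1 := by rw [ha]; ring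
    rw [this, hb]; ring
  -- step 2 : pointwise transformation
  have h2 : ∀ i ∈ range r, ((m:ℝ)+1) * ((m.choose (i+1) : ℝ) - 2 * (m.choose i : ℝ))
      = ((m:ℝ) - 3*(i:ℝ) - 2) * (((m+1).choose (i+1) : ℝ)) := by
    intro i hi
    have hir : i < r := mem_range.mp hi
    have him : i ≤ m := by omega
    have c1 : (m.choose (i+1) : ℝ) * ((i:ℝ)+1) = (m.choose i : ℝ) * ((m:ℝ) - (i:ℝ)) := by
      have := Nat.choose_succ_right_eq m i
      have h := congrArg (Nat.cast (R := ℝ)) this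
      push_cast [Nat.cast_sub him] at h
      linarith
    have c2 : ((m:ℝ)+1) * (m.choose i : ℝ) = (((m+1).choose (i+1)) : ℝ) * ((i:ℝ)+1) := by
      have := Nat.add_one_mul_choose_eq m i
      exact_mod_cast congrArg (Nat.cast (R := ℝ)) this
    have hi1 : ((i:ℝ)+1) ≠ 0 := by positivity
    apply mul_right_cancel₀ hi1
    linear_combination ((m:ℝ)+1)*c1 + ((m:ℝ)-3*(i:ℝ)-2)*c2
  -- step 3 : reflect
  have h3 : ∑ t ∈ range r, (3*(t:ℝ) + 1 - (k:ℝ)) * (((m+1).choose (r - t) : ℝ))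
      = ∑ i ∈ range r, ((m:ℝ) - 3*(i:ℝ) - 2) * (((m+1).choose (i+1) : ℝ)) := by
    rw [← Finset.sum_range_reflect (fun i => ((m:ℝ) - 3*(i:ℝ) - 2) * (((m+1).choose (i+1) : ℝ))) r]
    apply Finset.sum_congr rfl
    intro t ht
    have htr : t < r := mem_range.mp ht
    have e1 : r - 1 - t + 1 = r - t := by omega
    have e2 : ((r - 1 - t : ℕ) : ℝ) = (r:ℝ) - 1 - (t:ℝ) := by
      push_cast [Nat.cast_sub (by omega : t ≤ r - 1), Nat.cast_sub (by omega : 1 ≤ r)]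
      ring
    rw [e1, e2, hmr]
    ring
  calc ((m:ℝ) + 1) * (∑ i ∈ range (r+1), (m.choose i : ℝ))
      = ((m:ℝ)+1) * ((∑ i ∈ range r, (m.choose i : ℝ)) + (m.choose r : ℝ)) := by
        rw [Finset.sum_range_succ]
    _ = ((m:ℝ)+1) * (2*(m.choose r:ℝ) - 1)
        - ((m:ℝ)+1) * ((m.choose r : ℝ) - 1 - ∑ i ∈ range r, (m.choose i : ℝ)) := by ring
    _ = _ := by
        rw [← h1, Finset.mul_sum, h3]
        congr 1
        exact Finset.sum_congr rfl h2

lemma Gpoly1 (r c1 : ℝ) (hr : 3 ≤ r) (hsq : r^2 ≤ c1) :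
    (3*r+6-1)*(3*r+1-1)*(r-1+4)^2*r*(r+1)
      + (3*r+6-1)*(1-1)*((2*r-1+2)*c1)*(r+1)*(r-1+4)^2
      + (3*r+6-1)*(((4-1)*(r-1+4)+3*(r-1))*(2*r-1+3))*r*(r+1)*c1
    < 3*(1+2)*(r+1)*(r-1+4)^2*((2*r-1+1)*((2*r-1+2)*c1)) := by
  have hu : (0:ℝ) ≤ r - 3 := by linarith
  have hW : (0:ℝ) ≤ -60*r - 54*r^2 + 144*r^3 + 66*r^4 := by
    nlinarith [hu, pow_nonneg hu 2, pow_nonneg hu 3, pow_nonneg hu 4]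
  nlinarith [mul_nonneg hW (sub_nonneg.mpr hsq), hu, pow_nonneg hu 2, pow_nonneg hu 3,
    pow_nonneg hu 4, pow_nonneg hu 5, pow_nonneg hu 6, pow_nonneg hu 7]

lemma Gpoly2 (r c1 : ℝ) (hr : 2 ≤ r) (hsq : r^2 ≤ c1) :
    (3*r+6-2)*(3*r+1-2)*(r-2+4)^2*r*(r+1)
      + (3*r+6-2)*(1-2)*((2*r-2+2)*c1)*(r+1)*(r-2+4)^2
      + (3*r+6-2)*(((4-2)*(r-2+4)+3*(r-1))*(2*r-2+3))*r*(r+1)*c1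
    < 3*(2+2)*(r+1)*(r-2+4)^2*((2*r-2+1)*((2*r-2+2)*c1)) := by
  have hu : (0:ℝ) ≤ r - 2 := by linarith
  have hW : (0:ℝ) ≤ 28*r - 43*r^2 + 92*r^3 + 115*r^4 + 24*r^5 := by
    nlinarith [hu, pow_nonneg hu 2, pow_nonneg hu 3, pow_nonneg hu 4, pow_nonneg hu 5]
  nlinarith [mul_nonneg hW (sub_nonneg.mpr hsq), hu, pow_nonneg hu 2, pow_nonneg hu 3,
    pow_nonneg hu 4, pow_nonneg hu 5, pow_nonneg hu 6, pow_nonneg hu 7]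

lemma Gpoly3 (r c1 : ℝ) (hr : 2 ≤ r) (hsq : r^2 ≤ c1) :
    (3*r+6-3)*(3*r+1-3)*(r-3+4)^2*r*(r+1)
      + (3*r+6-3)*(1-3)*((2*r-3+2)*c1)*(r+1)*(r-3+4)^2
      + (3*r+6-3)*(((4-3)*(r-3+4)+3*(r-1))*(2*r-3+3))*r*(r+1)*c1
    < 3*(3+2)*(r+1)*(r-3+4)^2*((2*r-3+1)*((2*r-3+2)*c1)) := by
  have hu : (0:ℝ) ≤ r - 2 := by linarith
  have hW : (0:ℝ) ≤ -6 + 18*r - 6*r^2 - 42*r^3 + 36*r^4 + 48*r^5 := by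
    nlinarith [hu, pow_nonneg hu 2, pow_nonneg hu 3, pow_nonneg hu 4, pow_nonneg hu 5]
  nlinarith [mul_nonneg hW (sub_nonneg.mpr hsq), hu, pow_nonneg hu 2, pow_nonneg hu 3,
    pow_nonneg hu 4, pow_nonneg hu 5, pow_nonneg hu 6, pow_nonneg hu 7]

lemma natL (m r' k : ℕ) (hm' : m + k = 3 * (r'+1)) (hk1 : 1 ≤ k) (hk3 : k ≤ 3)
    (hk1r : k = 1 → 2 ≤ r') (hk3r : k ≠ 1 → 1 ≤ r') :
    ((6 * (r'+1) + 6 - 5 * k) * m.choose (r'+1) : ℕ)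
      < (3 * (r'+1) + 6 - k) * ∑ i ∈ range ((r'+1)+1), m.choose i := by
  obtain ⟨r, hrdef⟩ : ∃ r, r = r' + 1 := ⟨r' + 1, rfl⟩
  obtain ⟨n, hndef⟩ : ∃ n, n = m + 1 := ⟨m + 1, rfl⟩
  rw [← hrdef]
  have hm : m + k = 3 * r := by omega
  have hr1 : 1 ≤ r := by omega
  have hkr : k ≤ 2 * r := by omega
  have hnk : n + k = 3 * r + 1 := by omega
  have hrR : (1:ℝ) ≤ (r:ℝ) := by exact_mod_cast hr1
  have hkR1 : (1:ℝ) ≤ (k:ℝ) := by exact_mod_cast hk1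
  have hkR3 : (k:ℝ) ≤ 3 := by exact_mod_cast hk3
  have hnR : (n:ℝ) = 3*(r:ℝ) + 1 - (k:ℝ) := by
    have h : (n:ℝ) + (k:ℝ) = 3*(r:ℝ) + 1 := by exact_mod_cast hnk
    linarith
  have hr'R : (r':ℝ) = (r:ℝ) - 1 := by
    have h : (r:ℝ) = (r':ℝ) + 1 := by exact_mod_cast hrdef
    linarith
  obtain ⟨B, hB⟩ : ∃ x : ℝ, x = (m.choose r : ℝ) := ⟨_, rfl⟩
  obtain ⟨S, hS⟩ : ∃ x : ℝ, x = ∑ i ∈ range (r+1), (m.choose i : ℝ) := ⟨_, rfl⟩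
  obtain ⟨c0, hc0⟩ : ∃ x : ℝ, x = (n.choose r : ℝ) := ⟨_, rfl⟩
  obtain ⟨c1, hc1⟩ : ∃ x : ℝ, x = (n.choose r' : ℝ) := ⟨_, rfl⟩
  obtain ⟨cp, hcp⟩ : ∃ x : ℝ, x = (n.choose (r+1) : ℝ) := ⟨_, rfl⟩
  obtain ⟨qd, hqd⟩ : ∃ x : ℝ, x = 2*(r:ℝ) - (k:ℝ) + 3 := ⟨_, rfl⟩
  have hqdpos : 0 < qd := by rw [hqd]; linarith
  obtain ⟨q, hq⟩ : ∃ x : ℝ, x = ((r:ℝ) - 1) / qd := ⟨_, rfl⟩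
  obtain ⟨ed, hed⟩ : ∃ x : ℝ, x = (r:ℝ) - (k:ℝ) + 4 := ⟨_, rfl⟩
  have hedpos : 0 < ed := by rw [hed]; linarith
  obtain ⟨a, ha⟩ : ∃ x : ℝ, x = ((4 - (k:ℝ)) * ed + 3*((r:ℝ)-1)) * qd / ed^2 := ⟨_, rfl⟩
  obtain ⟨b, hbdef⟩ : ∃ x : ℝ, x = 3 * qd / ed := ⟨_, rfl⟩
  have hqdne : qd ≠ 0 := ne_of_gt hqdpos
  have hedne : ed ≠ 0 := ne_of_gt hedpos
  have hq0 : 0 ≤ q := by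
    rw [hq]; apply div_nonneg; linarith; linarith
  have hq1 : q < 1 := by
    rw [hq, div_lt_one hqdpos]; rw [hqd]; linarith
  have h1mq : 1 - q = ed / qd := by
    rw [hq]; field_simp; rw [hed, hqd]; ring
  have hb0 : 0 ≤ b := by
    rw [hbdef]; positivity
  have hbq : 3 ≤ b * (1 - q) := by
    have h : b * (1 - q) = 3 := by rw [hbdef, h1mq]; field_simp
    linarith
  have ha0 : 0 ≤ a := by
    rw [ha]; apply div_nonneg _ (by positivity)
    apply mul_nonneg _ (le_of_lt hqdpos)
    rw [hed]
    have hprod := mul_nonneg (by linarith : (0:ℝ) ≤ 4 - (k:ℝ))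
      (by linarith : (0:ℝ) ≤ (r:ℝ) - (k:ℝ) + 4)
    linarith
  have hwa : (4 - (k:ℝ)) + b * q ≤ a * (1 - q) := by
    apply le_of_eq
    rw [ha, hbdef, h1mq, hq]
    field_simp
  have hdec : ∀ t, t + 1 < r' → (n.choose (r' - (t+1)) : ℝ) ≤ q * (n.choose (r' - t) : ℝ) := by
    intro t ht
    have hidx : r' - (t+1) = (r' - t) - 1 := by omega
    rw [hidx]
    obtain ⟨j, hj⟩ : ∃ j, j = r' - t := ⟨_, rfl⟩
    rw [← hj]
    have hj2 : 2 ≤ j := by omega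
    have hjr : j ≤ r' := by omega
    have hid0 := Nat.choose_succ_right_eq n (j-1)
    rw [show j - 1 + 1 = j by omega] at hid0
    have hjn : j - 1 ≤ n := by omega
    have hid : (n.choose j : ℝ) * (j:ℝ) = (n.choose (j-1) : ℝ) * ((n:ℝ) - (j:ℝ) + 1) := by
      have h := congrArg (Nat.cast (R := ℝ)) hid0
      push_cast [Nat.cast_sub hjn, Nat.cast_sub (by omega : (1:ℕ) ≤ j)] at h
      linarith [h]
    have hjR : (j:ℝ) ≤ (r:ℝ) - 1 := by
      have h2 : (j:ℝ) ≤ (r':ℝ) := by exact_mod_cast hjr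
      linarith [hr'R ▸ h2]
    have hdR : (n:ℝ) - (j:ℝ) + 1 = 3*(r:ℝ) - (k:ℝ) + 2 - (j:ℝ) := by rw [hnR]; ring
    have hdpos : (0:ℝ) < (n:ℝ) - (j:ℝ) + 1 := by rw [hdR]; linarith
    rw [hq, div_mul_eq_mul_div, le_div_iff₀ hqdpos]
    have hCjnn : (0:ℝ) ≤ (n.choose j : ℝ) := by positivity
    have hkey : (j:ℝ) * qd ≤ ((r:ℝ) - 1) * ((n:ℝ) - (j:ℝ) + 1) := by
      rw [hdR, hqd]
      linarith [mul_nonneg (by linarith : (0:ℝ) ≤ 3*(r:ℝ) - (k:ℝ) + 2)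
        (by linarith : (0:ℝ) ≤ (r:ℝ) - 1 - (j:ℝ))]
    have hmm := mul_le_mul_of_nonneg_left hkey hCjnn
    apply le_of_mul_le_mul_right _ hdpos
    have hid2 : ((n.choose (j-1) : ℝ) * qd) * ((n:ℝ) - (j:ℝ) + 1)
        = ((n.choose j : ℝ) * (j:ℝ)) * qd := by linear_combination (-qd) * hid
    linarith [hid2, hmm]
  have hgeo : ∑ t ∈ range r', ((4 - (k:ℝ)) + 3 * (t:ℝ)) * (n.choose (r' - t) : ℝ) ≤ a * c1 := by
    have h := geom_bound q b hq0 hq1 hb0 hbq r' (fun t => (n.choose (r' - t) : ℝ))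
      (4 - (k:ℝ)) a (fun t => by positivity) hdec ha0 hwa
    rw [hc1]
    simpa using h
  obtain ⟨Sig, hSig⟩ : ∃ x : ℝ,
      x = ∑ t ∈ range r, (3*(t:ℝ) + 1 - (k:ℝ)) * ((n.choose (r - t)) : ℝ) := ⟨_, rfl⟩
  have hSigsplit : Sig = (∑ t ∈ range r', ((4 - (k:ℝ)) + 3 * (t:ℝ)) * (n.choose (r' - t) : ℝ))
      + (1 - (k:ℝ)) * c0 := by
    rw [hSig, hrdef]
    rw [Finset.sum_range_succ' (fun t => (3*(t:ℝ) + 1 - (k:ℝ)) * ((n.choose (r'+1 - t)) : ℝ)) r']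
    congr 1
    · apply Finset.sum_congr rfl
      intro t ht
      have h2 : r' + 1 - (t+1) = r' - t := by omega
      rw [h2]; push_cast; ring
    · have h3 : r' + 1 - 0 = r := by omega
      rw [h3, hc0]; push_cast; ring
  have hSigbound : Sig ≤ (1 - (k:ℝ)) * c0 + a * c1 := by
    rw [hSigsplit]; linarith [hgeo]
  have hch1 : (r:ℝ) * c0 = (2*(r:ℝ) - (k:ℝ) + 2) * c1 := by
    have h0 := Nat.choose_succ_right_eq n r'
    rw [← hrdef] at h0
    have h := congrArg (Nat.cast (R := ℝ)) h0
    push_cast [Nat.cast_sub (by omega : r' ≤ n)] at h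
    rw [hr'R, hnR] at h
    rw [hc1, hc0]
    linarith [h]
  have hch2 : ((r:ℝ) + 1) * cp = (2*(r:ℝ) - (k:ℝ) + 1) * c0 := by
    have h0 := Nat.choose_succ_right_eq n r
    have h := congrArg (Nat.cast (R := ℝ)) h0
    push_cast [Nat.cast_sub (by omega : r ≤ n)] at h
    rw [hnR] at h
    rw [hcp, hc0]
    linarith [h]
  have hc1sq : (r:ℝ)^2 ≤ c1 := by
    have h := choose_ge_sq (n := n) (r := r) hr1 (by omega)
    rw [show r - 1 = r' by omega] at h
    rw [hc1]
    exact_mod_cast h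
  have hc1nn : (0:ℝ) ≤ c1 := by rw [hc1]; positivity
  have hgpos : (0:ℝ) < 3*(r:ℝ) + 6 - (k:ℝ) := by linarith
  have G : (3*(r:ℝ) + 6 - (k:ℝ)) * ((n:ℝ) + (1 - (k:ℝ)) * c0 + a * c1)
      < 3 * ((k:ℝ) + 2) * ((r:ℝ)+1) * cp := by
    have hcpc1 : cp * ((r:ℝ)*((r:ℝ)+1)) = (2*(r:ℝ)-(k:ℝ)+1)*((2*(r:ℝ)-(k:ℝ)+2)*c1) := by
      linear_combination (r:ℝ) * hch2 + (2*(r:ℝ)-(k:ℝ)+1) * hch1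
    have hDpos : (0:ℝ) < ed^2 * ((r:ℝ)*((r:ℝ)+1)) := by positivity
    apply lt_of_mul_lt_mul_right _ (le_of_lt hDpos)
    have expand : ((3*(r:ℝ) + 6 - (k:ℝ)) * ((n:ℝ) + (1 - (k:ℝ)) * c0 + a * c1)) * (ed^2 * ((r:ℝ)*((r:ℝ)+1)))
        = (3*(r:ℝ) + 6 - (k:ℝ))*(n:ℝ)*ed^2*(r:ℝ)*((r:ℝ)+1)
          + (3*(r:ℝ) + 6 - (k:ℝ))*(1-(k:ℝ))*((r:ℝ)*c0)*((r:ℝ)+1)*ed^2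
          + (3*(r:ℝ) + 6 - (k:ℝ))*(((4 - (k:ℝ)) * ed + 3*((r:ℝ)-1)) * qd)*(r:ℝ)*((r:ℝ)+1)*c1 := by
      rw [ha]; field_simp
    rw [expand, hch1]
    have expand2 : (3 * ((k:ℝ) + 2) * ((r:ℝ)+1) * cp) * (ed^2 * ((r:ℝ)*((r:ℝ)+1)))
        = 3 * ((k:ℝ)+2) * ((r:ℝ)+1) * ed^2 * ((2*(r:ℝ)-(k:ℝ)+1)*((2*(r:ℝ)-(k:ℝ)+2)*c1)) := by
      linear_combination (3 * ((k:ℝ)+2) * ((r:ℝ)+1) * ed^2) * hcpc1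
    rw [expand2]
    rw [hnR, hed, hqd]
    interval_cases k
    · push_cast
      have hrR3 : (3:ℝ) ≤ (r:ℝ) := by
        have h4 : (3:ℕ) ≤ r := by omega
        exact_mod_cast h4
      linarith [Gpoly1 (r:ℝ) c1 hrR3 hc1sq]
    · push_cast
      have hrR2 : (2:ℝ) ≤ (r:ℝ) := by
        have h4 : (2:ℕ) ≤ r := by omega
        exact_mod_cast h4
      linarith [Gpoly2 (r:ℝ) c1 hrR2 hc1sq]
    · push_cast
      have hrR2 : (2:ℝ) ≤ (r:ℝ) := by
        have h4 : (2:ℕ) ≤ r := by omega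
        exact_mod_cast h4
      linarith [Gpoly3 (r:ℝ) c1 hrR2 hc1sq]
  have hmn : (m:ℝ) + 1 = (n:ℝ) := by
    have h : (n:ℝ) = (m:ℝ) + 1 := by exact_mod_cast hndef
    linarith
  have hnB : (n:ℝ) * B = ((r:ℝ)+1) * cp := by
    have h0 := Nat.add_one_mul_choose_eq m r
    rw [show m + 1 = n from hndef.symm] at h0
    have h := congrArg (Nat.cast (R := ℝ)) h0
    push_cast at h
    rw [hB, hcp]
    linarith [h]
  have hStrans : (n:ℝ) * S = (n:ℝ) * (2*B - 1) - Sig := by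
    have h := sum_transform m r k hm hk1 hk3 hr1
    rw [show m + 1 = n from hndef.symm] at h
    rw [hmn] at h
    rw [hS, hB, hSig]
    exact h
  have hfin : 0 < 3*((k:ℝ)+2)*((r:ℝ)+1)*cp - (3*(r:ℝ)+6-(k:ℝ))*((n:ℝ) + Sig) := by
    have hmul := mul_le_mul_of_nonneg_left hSigbound (le_of_lt hgpos)
    linarith [G, hmul]
  have hnpos : (0:ℝ) < (n:ℝ) := by rw [hnR]; linarith
  have eq1 : (n:ℝ) * ((3*(r:ℝ)+6-(k:ℝ))*S - (6*(r:ℝ)+6-5*(k:ℝ))*B)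
      = 3*((k:ℝ)+2)*((r:ℝ)+1)*cp - (3*(r:ℝ)+6-(k:ℝ))*((n:ℝ) + Sig) := by
    linear_combination (3*(r:ℝ)+6-(k:ℝ)) * hStrans + 3*((k:ℝ)+2) * hnB
  have hX : 0 < (3*(r:ℝ)+6-(k:ℝ))*S - (6*(r:ℝ)+6-5*(k:ℝ))*B := by
    have h2 : (0:ℝ) < (n:ℝ) * ((3*(r:ℝ)+6-(k:ℝ))*S - (6*(r:ℝ)+6-5*(k:ℝ))*B) := by
      rw [eq1]; exact hfin
    by_contra hcon
    push_neg at hcon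
    have h3 : (0:ℝ) ≤ -((3*(r:ℝ)+6-(k:ℝ))*S - (6*(r:ℝ)+6-5*(k:ℝ))*B) := by linarith
    have h4 := mul_nonneg (le_of_lt hnpos) h3
    linarith [h2, h4]
  have hcast : ((6 * r + 6 - 5 * k : ℕ) : ℝ) = 6*(r:ℝ) + 6 - 5*(k:ℝ) := by
    push_cast [Nat.cast_sub (by omega : 5*k ≤ 6*r + 6)]; ring
  have hcast2 : ((3 * r + 6 - k : ℕ) : ℝ) = 3*(r:ℝ) + 6 - (k:ℝ) := by
    push_cast [Nat.cast_sub (by omega : k ≤ 3*r + 6)]; ring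
  have hfinR : (((6*r + 6 - 5*k) * m.choose r : ℕ) : ℝ)
      < (((3*r + 6 - k) * ∑ i ∈ range (r+1), m.choose i : ℕ) : ℝ) := by
    push_cast
    rw [hcast, hcast2, ← hB, show ∑ i ∈ range (r+1), ((m.choose i : ℕ) : ℝ) = S from hS.symm]
    linarith [hX]
  exact_mod_cast hfinR

lemma natU (m r' k : ℕ) (hm' : m + k = 3 * (r'+1)) (hk1 : 1 ≤ k) (hk3 : k ≤ 3)
    (hk2u : k = 2 → 1 ≤ r') (hk3u : k = 3 → 6 ≤ r') :
    ∑ i ∈ range ((r'+1)+1), m.choose i < 2 * m.choose (r'+1) := by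
  obtain ⟨r, hrdef⟩ : ∃ r, r = r' + 1 := ⟨r' + 1, rfl⟩
  rw [← hrdef]
  have hm : m + k = 3 * r := by omega
  have hr1 : 1 ≤ r := by omega
  -- pointwise identity in ℝ
  have hid : ∀ i, i < r → (m.choose (i+1) : ℝ) * ((i:ℝ)+1) = (m.choose i : ℝ) * ((m:ℝ) - (i:ℝ)) := by
    intro i hi
    have him : i ≤ m := by omega
    have h := congrArg (Nat.cast (R := ℝ)) (Nat.choose_succ_right_eq m i)
    push_cast [Nat.cast_sub him] at h
    linarith [h]
  have hmR : (m:ℝ) + (k:ℝ) = 3*(r:ℝ) := by exact_mod_cast hm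
  -- nonnegativity of e_i for the safe range
  have hterm : ∀ i, i < r → 3*(i:ℝ) + 2 ≤ (m:ℝ) →
      0 ≤ (m.choose (i+1) : ℝ) - 2 * (m.choose i : ℝ) := by
    intro i hi hwt
    have h := hid i hi
    have hC0 : (0:ℝ) ≤ (m.choose i : ℝ) := by positivity
    have h2 : 2*((i:ℝ)+1) ≤ (m:ℝ) - (i:ℝ) := by linarith
    have h3 := mul_le_mul_of_nonneg_left h2 hC0
    have hip : (0:ℝ) < (i:ℝ)+1 := by positivity
    have h4 : 2*(m.choose i : ℝ) * ((i:ℝ)+1) ≤ (m.choose (i+1) : ℝ) * ((i:ℝ)+1) := by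
      linarith [h, h3]
    have := le_of_mul_le_mul_right h4 hip
    linarith
  -- the telescoped sum is nonnegative
  have hE : 0 ≤ ∑ i ∈ range r, ((m.choose (i+1) : ℝ) - 2 * (m.choose i : ℝ)) := by
    interval_cases k
    · -- k = 1 : every term nonneg
      apply Finset.sum_nonneg
      intro i hi
      have hi' : i < r := mem_range.mp hi
      apply hterm i hi'
      have : (i:ℝ) ≤ (r:ℝ) - 1 := by
        have : (i:ℝ) + 1 ≤ (r:ℝ) := by exact_mod_cast hi'
        linarith
      push_cast at hmR
      linarith
    · -- k = 2 : last two terms cancel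
      obtain ⟨s, hs⟩ : ∃ s, r = s + 2 := ⟨r' - 1, by omega⟩
      subst hs
      rw [Finset.sum_range_succ, Finset.sum_range_succ]
      have hsR : (m:ℝ) = 3*(s:ℝ) + 4 := by push_cast at hmR ⊢; linarith
      have h1 := hid s (by omega)
      have h2 := hid (s+1) (by omega)
      push_cast at h1 h2
      have hpair : (s:ℝ)*((m.choose (s+1+1) : ℝ) - 2*(m.choose (s+1):ℝ))
          + ((m.choose (s+1):ℝ) - 2*(m.choose s : ℝ)) = 0 ∨ True := Or.inr trivial
      have hz : ((s:ℝ)+2) * (((m.choose (s+1+1) : ℝ) - 2*(m.choose (s+1):ℝ))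
          + ((m.choose (s+1):ℝ) - 2*(m.choose s : ℝ))) = 0 := by
        rw [hsR] at h1 h2
        linear_combination h2 + h1
      have hsp : (0:ℝ) < (s:ℝ)+2 := by positivity
      have hzero : ((m.choose (s+1+1) : ℝ) - 2*(m.choose (s+1):ℝ))
          + ((m.choose (s+1):ℝ) - 2*(m.choose s : ℝ)) = 0 := by
        rcases mul_eq_zero.mp hz with h | h
        · exact absurd h (ne_of_gt hsp)
        · exact h
      have hsum : 0 ≤ ∑ i ∈ range s, ((m.choose (i+1) : ℝ) - 2 * (m.choose i : ℝ)) := by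
        apply Finset.sum_nonneg
        intro i hi
        have hi' : i < s := mem_range.mp hi
        apply hterm i (by omega)
        have : (i:ℝ) + 1 ≤ (s:ℝ) := by exact_mod_cast hi'
        rw [hsR]; linarith
      linarith
    · -- k = 3 : last four terms cluster
      obtain ⟨s, hs⟩ : ∃ s, r = s + 4 := ⟨r' - 3, by omega⟩
      have hs3 : 3 ≤ s := by omega
      subst hs
      rw [Finset.sum_range_succ, Finset.sum_range_succ, Finset.sum_range_succ,
        Finset.sum_range_succ]
      have hsR : (m:ℝ) = 3*(s:ℝ) + 9 := by push_cast at hmR ⊢; linarith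
      have h0 := hid s (by omega)
      have h1 := hid (s+1) (by omega)
      have h2 := hid (s+2) (by omega)
      have h3 := hid (s+3) (by omega)
      push_cast at h0 h1 h2 h3
      rw [hsR] at h0 h1 h2 h3
      set C0 : ℝ := (m.choose s : ℝ) with hC0
      set C1 : ℝ := (m.choose (s+1) : ℝ) with hC1
      set C2 : ℝ := (m.choose (s+2) : ℝ) with hC2
      set C3 : ℝ := (m.choose (s+3) : ℝ) with hC3
      set C4 : ℝ := (m.choose (s+4) : ℝ) with hC4
      have hsum : 0 ≤ ∑ i ∈ range s, ((m.choose (i+1) : ℝ) - 2 * (m.choose i : ℝ)) := by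
        apply Finset.sum_nonneg
        intro i hi
        have hi' : i < s := mem_range.mp hi
        apply hterm i (by omega)
        have : (i:ℝ) + 1 ≤ (s:ℝ) := by exact_mod_cast hi'
        rw [hsR]; linarith
      have hW : (0:ℝ) < 3024 + 3300*(s:ℝ) + 1340*(s:ℝ)^2 + 240*(s:ℝ)^3 + 16*(s:ℝ)^4 := by
        have : (0:ℝ) ≤ (s:ℝ) := by positivity
        positivity
      have hfnn : (0:ℝ) ≤ -120 - 26*(s:ℝ) + 13*(s:ℝ)^2 + 3*(s:ℝ)^3 := by
        have hu : (0:ℝ) ≤ (s:ℝ) - 3 := by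
          have : (3:ℝ) ≤ (s:ℝ) := by exact_mod_cast hs3
          linarith
        nlinarith [hu, pow_nonneg hu 2, pow_nonneg hu 3]
      have hC4nn : (0:ℝ) ≤ C4 := by rw [hC4]; positivity
      have key : (C4 - C3 - C2 - C1 - 2*C0)
            * (3024 + 3300*(s:ℝ) + 1340*(s:ℝ)^2 + 240*(s:ℝ)^3 + 16*(s:ℝ)^4)
          = C4 * (-120 - 26*(s:ℝ) + 13*(s:ℝ)^2 + 3*(s:ℝ)^3) := by
        linear_combination (786 + 635*(s:ℝ) + 173*(s:ℝ)^2 + 16*(s:ℝ)^3) * h3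
          + (564 + 506*(s:ℝ) + 154*(s:ℝ)^2 + 16*(s:ℝ)^3) * h2
          + (462 + 454*(s:ℝ) + 148*(s:ℝ)^2 + 16*(s:ℝ)^3) * h1
          + (672 + 584*(s:ℝ) + 168*(s:ℝ)^2 + 16*(s:ℝ)^3) * h0
      have hcluster : 0 ≤ C4 - C3 - C2 - C1 - 2*C0 := by
        by_contra hcon
        push_neg at hcon
        have hneg : (C4 - C3 - C2 - C1 - 2*C0)
            * (3024 + 3300*(s:ℝ) + 1340*(s:ℝ)^2 + 240*(s:ℝ)^3 + 16*(s:ℝ)^4) < 0 :=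
          mul_neg_of_neg_of_pos hcon hW
        have hpos : 0 ≤ C4 * (-120 - 26*(s:ℝ) + 13*(s:ℝ)^2 + 3*(s:ℝ)^3) :=
          mul_nonneg hC4nn hfnn
        linarith [key ▸ hneg]
      linarith [hsum, hcluster]
  -- conclude
  have htel : ∑ i ∈ range r, ((m.choose (i+1) : ℝ) - 2 * (m.choose i : ℝ))
      = (m.choose r : ℝ) - 1 - ∑ i ∈ range r, (m.choose i : ℝ) := by
    rw [Finset.sum_sub_distrib, ← Finset.mul_sum]
    have ha := Finset.sum_range_succ' (fun i => (m.choose i : ℝ)) r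
    have hb := Finset.sum_range_succ (fun i => (m.choose i : ℝ)) r
    simp only [Nat.choose_zero_right, Nat.cast_one] at ha hb
    have hx : ∑ i ∈ range r, (m.choose (i+1) : ℝ)
        = ∑ i ∈ range (r+1), (m.choose i : ℝ) - 1 := by rw [ha]; ring
    rw [hx, hb]; ring
  have hTB : ∑ i ∈ range (r+1), (m.choose i : ℝ) ≤ 2*(m.choose r : ℝ) - 1 := by
    have hb := Finset.sum_range_succ (fun i => (m.choose i : ℝ)) r
    rw [hb]
    linarith [hE, htel, hb]
  have hfinR : ((∑ i ∈ range (r+1), m.choose i : ℕ) : ℝ) < ((2 * m.choose r : ℕ) : ℝ) := by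
    push_cast
    linarith [hTB]
  exact_mod_cast hfinR

lemma reduction (m r' k : ℕ) (hm' : m + k = 3 * (r'+1)) (hk1 : 1 ≤ k) (hk3 : k ≤ 3)
    (hdiv : m / 3 = r') (hkk : 5 * k ≤ 6 * (r'+1) + 6)
    (hU : ∑ i ∈ range ((r'+1)+1), m.choose i < 2 * m.choose (r'+1))
    (hL : (6 * (r'+1) + 6 - 5 * k) * m.choose (r'+1)
        < (3 * (r'+1) + 6 - k) * ∑ i ∈ range ((r'+1)+1), m.choose i) :
    (1 / 2 ^ (m / 3) : ℝ) *
        (1 - ((3 * (m / 3 + 1) - m : ℕ) + 2) / (2 * ((m / 3 + 1) + 1))) *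
        (m.choose (m / 3 + 1))
      < (∑ i ∈ Finset.range (m / 3 + 2), (m.choose i : ℝ)) / 2 ^ (m / 3 + 1) ∧
    (∑ i ∈ Finset.range (m / 3 + 2), (m.choose i : ℝ)) / 2 ^ (m / 3 + 1)
      < (1 / 2 ^ (m / 3) : ℝ) * (m.choose (m / 3 + 1)) := by
  rw [hdiv]
  have hknat : 3 * (r' + 1) - m = k := by omega
  rw [hknat]
  have hkR1 : (1:ℝ) ≤ (k:ℝ) := by exact_mod_cast hk1
  have hkR3 : (k:ℝ) ≤ 3 := by exact_mod_cast hk3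
  have hmR : (m:ℝ) = 3*((r':ℝ)+1) - (k:ℝ) := by
    have h : (m:ℝ) + (k:ℝ) = 3*((r':ℝ)+1) := by exact_mod_cast hm'
    linarith
  have h2p : (0:ℝ) < (2:ℝ)^(r'+1) := by positivity
  have h2p' : ((2:ℝ)^r') ≠ 0 := by positivity
  have hUc : (∑ i ∈ range (r'+2), (m.choose i : ℝ)) < 2 * (m.choose (r'+1) : ℝ) := by
    exact_mod_cast hU
  have hLc : (6*((r':ℝ)+1) + 6 - 5*(k:ℝ)) * (m.choose (r'+1) : ℝ)
      < (3*((r':ℝ)+1) + 6 - (k:ℝ)) * (∑ i ∈ range (r'+2), (m.choose i : ℝ)) := by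
    have h := hL
    have hc1 : ((6*(r'+1) + 6 - 5*k : ℕ) : ℝ) = 6*((r':ℝ)+1) + 6 - 5*(k:ℝ) := by
      push_cast [Nat.cast_sub (by omega : 5*k ≤ 6*(r'+1)+6)]; ring
    have hc2 : ((3*(r'+1) + 6 - k : ℕ) : ℝ) = 3*((r':ℝ)+1) + 6 - (k:ℝ) := by
      push_cast [Nat.cast_sub (by omega : k ≤ 3*(r'+1)+6)]; ring
    have hcast : (((6*(r'+1) + 6 - 5*k) * m.choose (r'+1) : ℕ) : ℝ)
        < (((3*(r'+1) + 6 - k) * ∑ i ∈ range ((r'+1)+1), m.choose i : ℕ) : ℝ) := by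
      exact_mod_cast h
    push_cast at hcast
    rw [hc1, hc2] at hcast
    convert hcast using 2
  have hdenpos : (0:ℝ) < 3*((r':ℝ)+1) + 6 - (k:ℝ) := by
    have : (0:ℝ) ≤ (r':ℝ) := by positivity
    linarith
  constructor
  · -- lower bound
    rw [lt_div_iff₀ h2p]
    have hm3 : (m:ℝ)/3 + 1 + 1 = (3*((r':ℝ)+1) + 6 - (k:ℝ))/3 := by
      rw [hmR]; ring
    have key2 : (1 / (2:ℝ)^r') * (1 - ((k:ℝ)+2)/(2*((3*((r':ℝ)+1) + 6 - (k:ℝ))/3)))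
          * (m.choose (r'+1) : ℝ) * (2:ℝ)^(r'+1)
        = (6*((r':ℝ)+1) + 6 - 5*(k:ℝ)) * (m.choose (r'+1) : ℝ) / (3*((r':ℝ)+1) + 6 - (k:ℝ)) := by
      rw [pow_succ]
      field_simp
      ring
    calc (1 / 2 ^ r' : ℝ) * (1 - ((k:ℝ) + 2) / (2 * ((m:ℝ) / 3 + 1 + 1))) * (m.choose (r'+1)) * 2^(r'+1)
        = (6*((r':ℝ)+1) + 6 - 5*(k:ℝ)) * (m.choose (r'+1) : ℝ) / (3*((r':ℝ)+1) + 6 - (k:ℝ)) := by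
          rw [hm3, key2]
      _ < ∑ i ∈ range (r'+2), (m.choose i : ℝ) := by
          rw [div_lt_iff₀ hdenpos]
          calc (6*((r':ℝ)+1) + 6 - 5*(k:ℝ)) * (m.choose (r'+1) : ℝ)
              < (3*((r':ℝ)+1) + 6 - (k:ℝ)) * (∑ i ∈ range (r'+2), (m.choose i : ℝ)) := hLc
            _ = (∑ i ∈ range (r'+2), (m.choose i : ℝ)) * (3*((r':ℝ)+1) + 6 - (k:ℝ)) := by ring
  · -- upper bound
    rw [div_lt_iff₀ h2p]
    have key : (1 / (2:ℝ)^r') * (m.choose (r'+1) : ℝ) * (2:ℝ)^(r'+1)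
        = 2 * (m.choose (r'+1) : ℝ) := by
      rw [pow_succ]; field_simp
    calc (∑ i ∈ range (r'+2), (m.choose i : ℝ))
        < 2 * (m.choose (r'+1) : ℝ) := hUc
      _ = (1 / (2:ℝ)^r') * (m.choose (r'+1) : ℝ) * (2:ℝ)^(r'+1) := key.symm

theorem stmt_18 (m : ℕ) (hne : m ∉ ({0, 1, 3, 6, 9, 12} : Set ℕ)) :
    (1 / 2 ^ (m / 3) : ℝ) *
        (1 - ((3 * (m / 3 + 1) - m : ℕ) + 2) / (2 * ((m / 3 + 1) + 1))) *
        (m.choose (m / 3 + 1))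
      < (∑ i ∈ Finset.range (m / 3 + 2), (m.choose i : ℝ)) / 2 ^ (m / 3 + 1) ∧
    (∑ i ∈ Finset.range (m / 3 + 2), (m.choose i : ℝ)) / 2 ^ (m / 3 + 1)
      < (1 / 2 ^ (m / 3) : ℝ) * (m.choose (m / 3 + 1)) := by
  simp only [Set.mem_insert_iff, Set.mem_singleton_iff, not_or] at hne
  obtain ⟨h0, h1, h3, h6, h9, h12⟩ := hne
  set k : ℕ := 3 * (m / 3 + 1) - m with hk
  have hm' : m + k = 3 * (m/3 + 1) := by omega
  have hk1 : 1 ≤ k := by omega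
  have hk3 : k ≤ 3 := by omega
  apply reduction m (m/3) k hm' hk1 hk3 rfl (by omega)
  · -- upper
    by_cases h15 : m = 15
    · subst h15
      decide
    · exact natU m (m/3) k hm' hk1 hk3 (by omega) (by omega)
  · -- lower
    by_cases h2 : m = 2
    · subst h2; decide
    · by_cases h5 : m = 5
      · subst h5; decide
      · exact natL m (m/3) k hm' hk1 hk3 (by omega) (by omega)
end
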